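/- arXiv:2112.13961 — 6 statements merged into one kernel-verified Lean document; each statement's English description precedes it below -/
import Mathlib

section
/- Let r > 0 and let ν be a real-valued function, continuous on the punctured closed disk {z ∈ ℂ : 0 < |z| ≤ r}, which satisfies the sub-mean value inequality at every point of the punctured open disk: for every z with 0 < |z| < r there is δ > 0 such that ν(z) ≤ (1/2π)∫₀^{2π} ν(z + s e^{iθ}) dθ for all 0 < s < δ. Assume further that for every ε > 0, ν(z) + ε·log|z| → −∞ as z → 0. Then for every z with 0 < |z| < r one has ν(z) ≤ sup_{|ζ| = r} ν(ζ). -/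
open MeasureTheory Metric Complex intervalIntegral

lemma avg_holo {F : ℂ → ℂ} {w : ℂ} {s : ℝ} (hs : 0 < s)
    (hF : DifferentiableOn ℂ F (closedBall w s)) :
    ∫ θ in (0:ℝ)..(2*Real.pi), F (circleMap w s θ) = 2 * Real.pi * F w := by
  have h := hF.circleIntegral_sub_inv_smul (Metric.mem_ball_self hs)
  rw [circleIntegral] at h
  simp only [deriv_circleMap, circleMap_sub_center, smul_eq_mul] at h
  have heq : ∀ θ : ℝ, circleMap 0 s θ * I * ((circleMap 0 s θ)⁻¹ * F (circleMap w s θ))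
      = I * F (circleMap w s θ) := by
    intro θ
    have hne : circleMap 0 s θ ≠ 0 := circleMap_ne_center hs.ne'
    field_simp
  simp only [heq] at h
  rw [intervalIntegral.integral_const_mul] at h
  have h2 : I * ∫ θ in (0:ℝ)..(2*Real.pi), F (circleMap w s θ)
      = I * ((2 * Real.pi : ℝ) * F w) := by rw [h]; push_cast; ring
  have := mul_left_cancel₀ I_ne_zero h2
  rw [this]; push_cast; ring


lemma circ_abs_pos {w : ℂ} {s : ℝ} (hs : 0 ≤ s) (θ : ℝ) :
    ‖w‖ - s ≤ ‖circleMap w s θ‖ := by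
  have h1 : ‖circleMap w s θ - w‖ = s := by
    rw [circleMap_sub_center, norm_circleMap_zero, _root_.abs_of_nonneg hs]
  have h3 := norm_add_le (circleMap w s θ) (w - circleMap w s θ)
  rw [show circleMap w s θ + (w - circleMap w s θ) = w by ring] at h3
  rw [show w - circleMap w s θ = -(circleMap w s θ - w) by ring, norm_neg, h1] at h3
  linarith

lemma mean_log {w : ℂ} {s : ℝ} (hs : 0 < s) (hsw : s < ‖w‖) :
    ∫ θ in (0:ℝ)..(2*Real.pi), Real.log (‖circleMap w s θ‖)
      = 2 * Real.pi * Real.log (‖w‖) := by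
  have hwpos : 0 < ‖w‖ := lt_trans hs hsw
  have hw : w ≠ 0 := by
    intro h; rw [h] at hwpos; simp at hwpos
  set F : ℂ → ℂ := fun z => Complex.log (z / w) with hF
  have hre0 : ∀ z ∈ closedBall w s, 0 < (z / w).re := by
    intro z hz
    have hzw : ‖z / w - 1‖ < 1 := by
      rw [show z / w - 1 = (z - w) / w by field_simp, norm_div,
        div_lt_one hwpos]
      calc ‖z - w‖ ≤ s := by
            simpa [Metric.mem_closedBall, Complex.dist_eq] using hz
        _ < ‖w‖ := hsw
    have h1 : |(z / w).re - 1| < 1 := by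
      calc |(z / w).re - 1| = |(z / w - 1).re| := by simp
        _ ≤ ‖z / w - 1‖ := Complex.abs_re_le_norm _
        _ < 1 := hzw
    have := abs_lt.mp h1
    linarith [this.1]
  have hmemcb : ∀ θ : ℝ, circleMap w s θ ∈ closedBall w s := fun θ =>
    sphere_subset_closedBall (circleMap_mem_sphere w hs.le θ)
  have hdiff : DifferentiableOn ℂ F (closedBall w s) := by
    intro z hz
    have : DifferentiableAt ℂ F z := by
      apply DifferentiableAt.clog (differentiableAt_id.div_const w)
      exact Complex.mem_slitPlane_iff.mpr (Or.inl (hre0 z hz))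
    exact this.differentiableWithinAt
  have havg := avg_holo hs hdiff
  have hFw : F w = 0 := by simp [hF, div_self hw]
  rw [hFw, mul_zero] at havg
  have hpos : ∀ θ : ℝ, 0 < ‖circleMap w s θ‖ := fun θ =>
    lt_of_lt_of_le (by linarith) (circ_abs_pos hs.le θ)
  have hcont : Continuous fun θ : ℝ => F (circleMap w s θ) := by
    apply Continuous.clog ((continuous_circleMap w s).div_const w)
    intro θ
    exact Complex.mem_slitPlane_iff.mpr (Or.inl (hre0 _ (hmemcb θ)))
  have hint : IntervalIntegrable (fun θ : ℝ => F (circleMap w s θ)) volume 0 (2*Real.pi) :=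
    hcont.intervalIntegrable _ _
  have hre := Complex.reCLM.intervalIntegral_comp_comm hint
  rw [havg] at hre
  simp only [Complex.reCLM_apply, Complex.zero_re] at hre
  have hreF : ∀ θ : ℝ, (F (circleMap w s θ)).re
      = Real.log (‖circleMap w s θ‖) - Real.log (‖w‖) := by
    intro θ
    simp only [hF, Complex.log_re, norm_div]
    rw [Real.log_div (hpos θ).ne' hwpos.ne']
  simp only [hreF] at hre
  have hint2 : IntervalIntegrable (fun θ : ℝ => Real.log (‖circleMap w s θ‖))
      volume 0 (2*Real.pi) := by
    apply Continuous.intervalIntegrable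
    rw [continuous_iff_continuousAt]
    intro θ
    show ContinuousAt (Real.log ∘ fun θ : ℝ => ‖circleMap w s θ‖) θ
    exact ContinuousAt.comp (Real.continuousAt_log (hpos θ).ne')
      ((continuous_norm.comp (continuous_circleMap w s)).continuousAt)
  rw [intervalIntegral.integral_sub hint2 (intervalIntegrable_const)] at hre
  rw [intervalIntegral.integral_const, smul_eq_mul] at hre
  have : (2 * Real.pi - 0) * Real.log (‖w‖)
      = 2 * Real.pi * Real.log (‖w‖) := by ring
  linarith [hre, this]

lemma mean_sq (w : ℂ) (s : ℝ) :
    ∫ θ in (0:ℝ)..(2*Real.pi), (‖circleMap w s θ‖)^2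
      = 2 * Real.pi * ((‖w‖)^2 + s^2) := by
  have hpt : ∀ θ : ℝ, (‖circleMap w s θ‖)^2
      = ((‖w‖)^2 + s^2) + ((2*s*w.re) * Real.cos θ + (2*s*w.im) * Real.sin θ) := by
    intro θ
    simp only [circleMap, Complex.sq_norm, Complex.normSq_apply, Complex.add_re, Complex.add_im,
      Complex.mul_re, Complex.mul_im, Complex.ofReal_re, Complex.ofReal_im,
      Complex.exp_ofReal_mul_I_re, Complex.exp_ofReal_mul_I_im]
    nlinarith [Real.sin_sq_add_cos_sq θ]
  simp only [hpt]
  rw [intervalIntegral.integral_add (intervalIntegrable_const)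
      (((continuous_const.fun_mul Real.continuous_cos).fun_add
        (continuous_const.fun_mul Real.continuous_sin)).intervalIntegrable _ _),
    intervalIntegral.integral_add
      ((continuous_const.fun_mul Real.continuous_cos).intervalIntegrable _ _)
      ((continuous_const.fun_mul Real.continuous_sin).intervalIntegrable _ _),
    intervalIntegral.integral_const_mul, intervalIntegral.integral_const_mul,
    integral_cos, integral_sin,
    intervalIntegral.integral_const]
  simp [Real.sin_two_pi, Real.cos_two_pi]
  try ring

lemma circ_abs_le {w : ℂ} {s : ℝ} (hs : 0 ≤ s) (θ : ℝ) :
    ‖circleMap w s θ‖ ≤ ‖w‖ + s := by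
  have h1 : ‖circleMap w s θ - w‖ = s := by
    rw [circleMap_sub_center, norm_circleMap_zero, _root_.abs_of_nonneg hs]
  have h3 := norm_add_le w (circleMap w s θ - w)
  rw [show w + (circleMap w s θ - w) = circleMap w s θ by ring, h1] at h3
  exact h3

set_option maxHeartbeats 1000000 in
/-- **Maximum principle on the punctured disk for functions of sub-logarithmic blow-up.**
If `ν` is continuous on the punctured closed disk of radius `r`, satisfies the sub-mean
value inequality on the punctured open disk, and `ν z + ε log |z| → -∞` as `z → 0`
for every `ε > 0`, then `ν` is bounded on the punctured open disk by its supremum on the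
boundary circle. -/
theorem punctured_disk_maximum_principle (r : ℝ) (hr : 0 < r) (ν : ℂ → ℝ)
    (hcont : ContinuousOn ν {z : ℂ | 0 < ‖z‖ ∧ ‖z‖ ≤ r})
    (hsub : ∀ z : ℂ, 0 < ‖z‖ → ‖z‖ < r →
      ∃ δ > (0 : ℝ), ∀ s : ℝ, 0 < s → s < δ →
        ν z ≤ (1 / (2 * Real.pi)) *
          ∫ θ in (0 : ℝ)..(2 * Real.pi), ν (z + (s : ℂ) * Complex.exp ((θ : ℂ) * Complex.I)))
    (hblow : ∀ ε > (0 : ℝ),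
      Filter.Tendsto (fun z : ℂ => ν z + ε * Real.log (‖z‖))
        (nhdsWithin (0 : ℂ) {(0 : ℂ)}ᶜ) Filter.atBot) :
    ∀ z : ℂ, 0 < ‖z‖ → ‖z‖ < r →
      ν z ≤ sSup (ν '' Metric.sphere (0 : ℂ) r) := by
  intro z₀ hz₀pos hz₀r
  set D := {z : ℂ | 0 < ‖z‖ ∧ ‖z‖ ≤ r} with hD
  set M := sSup (ν '' Metric.sphere (0 : ℂ) r) with hMdef
  have habs_sphere : ∀ z ∈ Metric.sphere (0:ℂ) r, ‖z‖ = r := by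
    intro z hz
    simpa [Complex.dist_eq] using hz
  have hsph_sub : Metric.sphere (0:ℂ) r ⊆ D := by
    intro z hz
    have := habs_sphere z hz
    exact ⟨this ▸ hr, this.le⟩
  have hbdd : BddAbove (ν '' Metric.sphere (0:ℂ) r) :=
    ((isCompact_sphere (0:ℂ) r).image_of_continuousOn (hcont.mono hsph_sub)).bddAbove
  have hM : ∀ w ∈ Metric.sphere (0:ℂ) r, ν w ≤ M := fun w hw =>
    le_csSup hbdd ⟨w, hw, rfl⟩
  set C : ℝ := (Real.log r - Real.log (‖z₀‖)) + (r^2 - (‖z₀‖)^2) with hC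
  have hC0 : 0 ≤ C := by
    have h1 : Real.log (‖z₀‖) ≤ Real.log r := Real.log_le_log hz₀pos hz₀r.le
    have h2 : (‖z₀‖)^2 ≤ r^2 := by nlinarith
    simp only [hC]; linarith
  have key : ∀ ε : ℝ, 0 < ε → ν z₀ ≤ M + ε * C := by
    intro ε hε
    set v : ℂ → ℝ := fun z =>
      ν z + ε * (Real.log (‖z‖) + (‖z‖)^2) with hv
    -- choose ρ
    set B : ℝ := ν z₀ + ε * Real.log (‖z₀‖) - 1 with hB
    have hev : ∀ᶠ z in nhdsWithin (0:ℂ) {(0:ℂ)}ᶜ,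
        ν z + ε * Real.log (‖z‖) ≤ B :=
      (hblow ε hε).eventually (Filter.eventually_le_atBot B)
    rw [eventually_nhdsWithin_iff, Metric.eventually_nhds_iff] at hev
    obtain ⟨δ₀, hδ₀, hδ₀prop⟩ := hev
    set ρ : ℝ := min (δ₀/2) (‖z₀‖ / 2) with hρ
    have hρpos : 0 < ρ := lt_min (by linarith) (by linarith)
    have hρz₀ : ρ < ‖z₀‖ := (min_le_right _ _).trans_lt (by linarith)
    have hρδ : ρ < δ₀ := (min_le_left _ _).trans_lt (by linarith)
    have hρsmall : ∀ z : ℂ, 0 < ‖z‖ → ‖z‖ ≤ ρ →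
        ν z + ε * Real.log (‖z‖) ≤ B := by
      intro z hz1 hz2
      apply hδ₀prop
      · rw [Complex.dist_eq, sub_zero]; linarith
      · simp only [Set.mem_compl_iff, Set.mem_singleton_iff]
        intro h; rw [h] at hz1; simp at hz1
    -- the compact annulus
    set K : Set ℂ := {z : ℂ | ρ ≤ ‖z‖ ∧ ‖z‖ ≤ r} with hK
    have hKD : K ⊆ D := fun z hz => ⟨lt_of_lt_of_le hρpos hz.1, hz.2⟩
    have hKclosed : IsClosed K := by
      have : K = (fun z : ℂ => ‖z‖) ⁻¹' (Set.Icc ρ r) := rfl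
      rw [this]
      exact isClosed_Icc.preimage continuous_norm
    have hKcompact : IsCompact K := by
      apply (isCompact_closedBall (0:ℂ) r).of_isClosed_subset hKclosed
      intro z hz
      simpa [Complex.dist_eq] using hz.2
    have hz₀K : z₀ ∈ K := ⟨hρz₀.le, hz₀r.le⟩
    have hvcont : ContinuousOn v K := by
      apply ContinuousOn.add (hcont.mono hKD)
      apply ContinuousOn.mul continuousOn_const
      apply ContinuousOn.add
      · intro z hz
        apply ContinuousAt.continuousWithinAt
        exact ContinuousAt.comp (Real.continuousAt_log (by linarith [hz.1] : ‖z‖ ≠ 0))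
          continuous_norm.continuousAt
      · exact ((continuous_norm.pow 2).continuousOn)
    obtain ⟨w, hwK, hwmax⟩ := hKcompact.exists_isMaxOn ⟨z₀, hz₀K⟩ hvcont
    have hwρ : ρ ≤ ‖w‖ := hwK.1
    have hwr : ‖w‖ ≤ r := hwK.2
    have hwpos : 0 < ‖w‖ := lt_of_lt_of_le hρpos hwρ
    by_cases hbound : ‖w‖ = r
    · -- max on outer boundary
      have hwsph : w ∈ Metric.sphere (0:ℂ) r := by
        simp [Complex.dist_eq, hbound]
      have h1 : v z₀ ≤ v w := hwmax hz₀K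
      have h2 : ν w ≤ M := hM w hwsph
      simp only [hv, hbound] at h1
      simp only [hC]
      nlinarith [h1, h2]
    · have hwr' : ‖w‖ < r := lt_of_le_of_ne hwr hbound
      by_cases hinner : ‖w‖ = ρ
      · -- max on inner boundary : contradiction
        exfalso
        have h1 : v z₀ ≤ v w := hwmax hz₀K
        have h2 : ν w + ε * Real.log (‖w‖) ≤ B :=
          hρsmall w hwpos (le_of_eq hinner)
        have h3 : (‖w‖)^2 ≤ (‖z₀‖)^2 := by nlinarith
        simp only [hv, hB] at h1 h2
        nlinarith
      · -- interior maximum : contradiction via sub-mean value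
        exfalso
        have hρw : ρ < ‖w‖ := lt_of_le_of_ne hwρ (Ne.symm hinner)
        obtain ⟨δ, hδpos, hmean⟩ := hsub w hwpos hwr'
        set s : ℝ := min (min (δ/2) ((‖w‖ - ρ)/2)) ((r - ‖w‖)/2) with hs
        have hspos : 0 < s :=
          lt_min (lt_min (by linarith) (by linarith)) (by linarith)
        have hsδ : s < δ := ((min_le_left _ _).trans (min_le_left _ _)).trans_lt (by linarith)
        have hsρ : ρ ≤ ‖w‖ - s := by
          have h := (min_le_left (min (δ/2) ((‖w‖ - ρ)/2))
            ((r - ‖w‖)/2)).trans (min_le_right (δ/2) ((‖w‖ - ρ)/2))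
          rw [← hs] at h
          linarith
        have hsw : s < ‖w‖ := by linarith
        have hsr : ‖w‖ + s ≤ r := by
          have h := min_le_right (min (δ/2) ((‖w‖ - ρ)/2)) ((r - ‖w‖)/2)
          rw [← hs] at h
          linarith
        have hcircK : ∀ θ : ℝ, circleMap w s θ ∈ K := by
          intro θ
          constructor
          · linarith [circ_abs_pos (w := w) hspos.le θ]
          · linarith [circ_abs_le (w := w) hspos.le θ]
        have hcircpos : ∀ θ : ℝ, 0 < ‖circleMap w s θ‖ :=
          fun θ => lt_of_lt_of_le hρpos (hcircK θ).1
        -- continuity of the three integrands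
        have hνcont : Continuous fun θ : ℝ => ν (circleMap w s θ) := by
          apply ContinuousOn.comp_continuous (hcont.mono hKD) (continuous_circleMap w s)
          exact hcircK
        have hlogcont : Continuous fun θ : ℝ => Real.log (‖circleMap w s θ‖) := by
          rw [continuous_iff_continuousAt]
          intro θ
          show ContinuousAt (Real.log ∘ fun θ : ℝ => ‖circleMap w s θ‖) θ
          exact ContinuousAt.comp (Real.continuousAt_log (hcircpos θ).ne')
            ((continuous_norm.comp (continuous_circleMap w s)).continuousAt)
        have hsqcont : Continuous fun θ : ℝ => (‖circleMap w s θ‖)^2 :=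
          (continuous_norm.comp (continuous_circleMap w s)).pow 2
        have hνint : IntervalIntegrable (fun θ : ℝ => ν (circleMap w s θ))
            volume 0 (2*Real.pi) := hνcont.intervalIntegrable _ _
        have hlogint := hlogcont.intervalIntegrable (μ := volume) 0 (2*Real.pi)
        have hsqint := hsqcont.intervalIntegrable (μ := volume) 0 (2*Real.pi)
        -- the sub-mean value inequality
        have hA : ν w ≤ (1/(2*Real.pi)) * ∫ θ in (0:ℝ)..(2*Real.pi), ν (circleMap w s θ) := by
          simpa only [circleMap] using hmean s hspos hsδ
        set A : ℝ := ∫ θ in (0:ℝ)..(2*Real.pi), ν (circleMap w s θ) with hAdef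
        have hpi : 0 < Real.pi := Real.pi_pos
        have hA' : 2 * Real.pi * ν w ≤ A := by
          have h2π : 0 < 2 * Real.pi := by linarith
          calc 2 * Real.pi * ν w ≤ 2 * Real.pi * ((1/(2*Real.pi)) * A) := by
                apply mul_le_mul_of_nonneg_left hA h2π.le
            _ = A := by field_simp
        -- integral of v over the circle
        have hvsplit : ∫ θ in (0:ℝ)..(2*Real.pi), v (circleMap w s θ)
            = A + ε * (2 * Real.pi * Real.log (‖w‖))
              + ε * (2 * Real.pi * ((‖w‖)^2 + s^2)) := by
          have : (fun θ : ℝ => v (circleMap w s θ))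
              = fun θ : ℝ => ν (circleMap w s θ)
                + (ε * Real.log (‖circleMap w s θ‖)
                  + ε * (‖circleMap w s θ‖)^2) := by
            funext θ; simp only [hv]; ring
          rw [this, intervalIntegral.integral_add hνint
              (((continuous_const.fun_mul hlogcont).fun_add (continuous_const.fun_mul hsqcont)).intervalIntegrable _ _),
            intervalIntegral.integral_add ((continuous_const.fun_mul hlogcont).intervalIntegrable _ _)
              ((continuous_const.fun_mul hsqcont).intervalIntegrable _ _),
            intervalIntegral.integral_const_mul, intervalIntegral.integral_const_mul,
            mean_log hspos hsw, mean_sq w s]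
          ring
        -- v(circle) ≤ v(w) pointwise, hence integral bound
        have hvmono : ∫ θ in (0:ℝ)..(2*Real.pi), v (circleMap w s θ) ≤ 2 * Real.pi * v w := by
          have hint : IntervalIntegrable (fun θ : ℝ => v (circleMap w s θ))
              volume 0 (2*Real.pi) := by
            have : (fun θ : ℝ => v (circleMap w s θ))
                = fun θ : ℝ => ν (circleMap w s θ)
                  + (ε * Real.log (‖circleMap w s θ‖)
                    + ε * (‖circleMap w s θ‖)^2) := by
              funext θ; simp only [hv]; ring
            rw [this]
            exact hνint.add (((continuous_const.mul hlogcont).add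
              (continuous_const.mul hsqcont)).intervalIntegrable _ _)
          calc ∫ θ in (0:ℝ)..(2*Real.pi), v (circleMap w s θ)
              ≤ ∫ _ in (0:ℝ)..(2*Real.pi), v w := by
                apply intervalIntegral.integral_mono_on (by linarith) hint
                  intervalIntegrable_const
                intro θ _
                exact hwmax (hcircK θ)
            _ = 2 * Real.pi * v w := by
                rw [intervalIntegral.integral_const, smul_eq_mul]; ring
        -- combine
        have hvw : v w = ν w + ε * Real.log (‖w‖)
            + ε * (‖w‖)^2 := by simp only [hv]; ring
        rw [hvsplit, hvw] at hvmono
        nlinarith [sq_nonneg s, mul_pos hε (mul_pos (by linarith : (0:ℝ) < 2*Real.pi)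
          (mul_pos hspos hspos))]
  -- conclude by letting ε → 0
  have : ∀ ε' : ℝ, 0 < ε' → ν z₀ ≤ M + ε' := by
    intro ε' hε'
    have hC1 : (0:ℝ) < C + 1 := by linarith
    have h1 := key (ε' / (C + 1)) (div_pos hε' hC1)
    have h2 : (ε' / (C + 1)) * C ≤ ε' := by
      rw [div_mul_eq_mul_div, div_le_iff₀ hC1]
      nlinarith
    linarith
  exact le_of_forall_pos_le_add this
end

section
/- Let G be an invertible n×n real matrix, let b₁,…,bₙ ∈ ℂ be the roots of its characteristic polynomial counted with multiplicity, and let μ₁,…,μₙ > 0 be the eigenvalues of the positive definite symmetric matrix Gᵀ G counted with multiplicity. Then ∑_{i=1}^n (log |bᵢ|²)² ≤ ∑_{i=1}^n (log μᵢ)². -/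
open Matrix Polynomial Finset

lemma maj_sq (n : ℕ) (l m : ℕ → ℝ)
    (hl : ∀ i j, i ≤ j → j < n → l j ≤ l i)
    (hpart : ∀ k, k ≤ n → ∑ i ∈ Finset.range k, l i ≤ ∑ i ∈ Finset.range k, m i)
    (heq : ∑ i ∈ Finset.range n, l i = ∑ i ∈ Finset.range n, m i) :
    ∑ i ∈ Finset.range n, (l i)^2 ≤ ∑ i ∈ Finset.range n, (m i)^2 := by
  rcases Nat.eq_zero_or_pos n with hn | hn
  · simp [hn]
  have step1 : ∑ i ∈ Finset.range n, l i * (l i - m i) ≤ 0 := by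
    have habel := Finset.sum_range_by_parts (f := l) (g := fun i => l i - m i) n
    simp only [smul_eq_mul] at habel
    rw [habel]
    have hGn : ∑ i ∈ Finset.range n, (l i - m i) = 0 := by
      rw [Finset.sum_sub_distrib, heq, sub_self]
    rw [hGn, mul_zero, zero_sub, neg_nonpos]
    apply Finset.sum_nonneg
    intro i hi
    rw [Finset.mem_range] at hi
    have hi1 : i + 1 < n := by omega
    have h1 : l (i + 1) - l i ≤ 0 := by
      have := hl i (i + 1) (by omega) hi1
      linarith
    have h2 : ∑ j ∈ Finset.range (i + 1), (l j - m j) ≤ 0 := by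
      rw [Finset.sum_sub_distrib]
      have := hpart (i + 1) (by omega)
      linarith
    nlinarith [mul_nonneg (neg_nonneg.2 h1) (neg_nonneg.2 h2)]
  have step2 : ∑ i ∈ Finset.range n, (l i)^2 ≤ ∑ i ∈ Finset.range n, l i * m i := by
    have : ∑ i ∈ Finset.range n, (l i * l i - l i * m i) ≤ 0 := by
      convert step1 using 2 with i
      ring
    rw [Finset.sum_sub_distrib] at this
    simp only [← sq] at this
    linarith
  have hcs := Finset.sum_mul_sq_le_sq_mul_sq (Finset.range n) l m
  have hS : (0:ℝ) ≤ ∑ i ∈ Finset.range n, (l i)^2 :=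
    Finset.sum_nonneg fun i _ => sq_nonneg _
  have hT : (0:ℝ) ≤ ∑ i ∈ Finset.range n, (m i)^2 :=
    Finset.sum_nonneg fun i _ => sq_nonneg _
  nlinarith [step2, hcs, hS, hT]

lemma prod_subset_le {n k : ℕ} (ν : Fin n → ℝ) (hpos : ∀ i, 0 ≤ ν i)
    (hmono : ∀ i j : Fin n, i ≤ j → ν j ≤ ν i)
    (s : Finset (Fin n)) (hs : s.card = k) (hkn : k ≤ n) :
    ∏ i ∈ s, ν i ≤ ∏ j : Fin k, ν (Fin.castLE hkn j) := by
  have he : ∏ i ∈ s, ν i = ∏ j : Fin k, ν (s.orderEmbOfFin hs j) := by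
    rw [← Finset.prod_coe_sort s ν]
    exact Fintype.prod_equiv (s.orderIsoOfFin hs).toEquiv.symm _ _
      (fun i => by rw [← Finset.coe_orderIsoOfFin_apply]; simp)
  rw [he]
  apply Finset.prod_le_prod (fun j _ => hpos _)
  intro j _
  apply hmono
  show (j : ℕ) ≤ (s.orderEmbOfFin hs j : ℕ)
  have key : ∀ (jv : ℕ) (hj : jv < k), jv ≤ (s.orderEmbOfFin hs ⟨jv, hj⟩ : ℕ) := by
    intro jv
    induction jv with
    | zero => intro _; exact Nat.zero_le _
    | succ p ih =>
      intro hj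
      have hp : p < k := by omega
      have hlt : (s.orderEmbOfFin hs ⟨p, hp⟩ : Fin n) < s.orderEmbOfFin hs ⟨p+1, hj⟩ :=
        (s.orderEmbOfFin hs).strictMono (by simp [Fin.lt_def])
      have := ih hp
      have : (p : ℕ) < (s.orderEmbOfFin hs ⟨p+1, hj⟩ : ℕ) :=
        lt_of_le_of_lt this hlt
      omega
  exact key j j.isLt

lemma prod_orderEmbOfFin_eq {M : Type*} [CommMonoid M] {n k : ℕ} (s : Finset (Fin n))
    (h : s.card = k) (f : Fin n → M) :
    ∏ j : Fin k, f (s.orderEmbOfFin h j) = ∏ i ∈ s, f i := by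
  rw [← Finset.prod_coe_sort s f]
  exact Fintype.prod_equiv (s.orderIsoOfFin h).toEquiv _ _
    (fun j => by rw [← Finset.coe_orderIsoOfFin_apply]; rfl)

lemma det_conj_diag {n k : ℕ} (Z : Matrix (Fin n) (Fin k) ℂ) (c : Fin n → ℂ) :
    (Zᴴ * Matrix.diagonal c * Z).det =
      ∑ s : {s : Finset (Fin n) // s.card = k},
        (∏ i ∈ s.1, c i) *
          ((starRingEnd ℂ) ((Z.submatrix (s.1.orderEmbOfFin s.2) id).det) *
            (Z.submatrix (s.1.orderEmbOfFin s.2) id).det) := by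
  classical
  set F : (Fin k → Fin n) → ℂ :=
    fun r => (∏ a : Fin k, (starRingEnd ℂ) (Z (r a) a) * c (r a)) * (Z.submatrix r id).det
    with hF
  have expand : (Zᴴ * Matrix.diagonal c * Z).det = ∑ r : Fin k → Fin n, F r := by
    have hrow : Zᴴ * Matrix.diagonal c * Z =
        Matrix.of (fun a => ∑ i : Fin n,
          ((starRingEnd ℂ) (Z i a) * c i) • (fun b => Z i b)) := by
      rw [Matrix.mul_assoc]
      ext a b
      rw [Matrix.mul_apply]
      simp only [Matrix.conjTranspose_apply, Matrix.diagonal_mul, Matrix.of_apply,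
        Finset.sum_apply, Pi.smul_apply, smul_eq_mul, RCLike.star_def]
      exact Finset.sum_congr rfl fun i _ => by ring
    rw [hrow]
    have h1 : (Matrix.of (fun a => ∑ i : Fin n,
          ((starRingEnd ℂ) (Z i a) * c i) • (fun b => Z i b))).det
        = Matrix.detRowAlternating (fun a => ∑ i : Fin n,
          ((starRingEnd ℂ) (Z i a) * c i) • (fun b => Z i b)) := rfl
    rw [h1, ← AlternatingMap.coe_multilinearMap,
      MultilinearMap.map_sum (Matrix.detRowAlternating).toMultilinearMap
        (g := fun a i => ((starRingEnd ℂ) (Z i a) * c i) • (fun b => Z i b))]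
    refine Finset.sum_congr rfl fun r _ => ?_
    rw [AlternatingMap.coe_multilinearMap]
    have h2 : (Matrix.detRowAlternating
          (fun a => ((starRingEnd ℂ) (Z (r a) a) * c (r a)) • (fun b => Z (r a) b)))
        = (∏ a : Fin k, (starRingEnd ℂ) (Z (r a) a) * c (r a)) •
            Matrix.detRowAlternating (fun a => (fun b => Z (r a) b)) :=
      MultilinearMap.map_smul_univ _ _ _
    rw [h2, smul_eq_mul, hF]
    rfl
  have hzero : ∀ r : Fin k → Fin n, ¬ Function.Injective r → F r = 0 := by
    intro r hr
    rw [Function.not_injective_iff] at hr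
    obtain ⟨a, b, hab, hne⟩ := hr
    have : (Z.submatrix r id).det = 0 :=
      Matrix.det_zero_of_row_eq hne (by funext j; simp [Matrix.submatrix_apply, hab])
    simp [hF, this]
  set E : {s : Finset (Fin n) // s.card = k} → (Fin k ↪o Fin n) :=
    fun s => s.1.orderEmbOfFin s.2 with hE
  let J : {s : Finset (Fin n) // s.card = k} × Equiv.Perm (Fin k) →
      {r : Fin k → Fin n // Function.Injective r} :=
    fun p => ⟨(E p.1) ∘ p.2, (E p.1).injective.comp p.2.injective⟩
  have hJ : Function.Bijective J := by
    constructor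
    · rintro ⟨s, σ⟩ ⟨s', σ'⟩ h
      simp only [J, Subtype.mk_eq_mk] at h
      have hss : s = s' := by
        apply Subtype.ext
        apply Finset.coe_injective
        rw [← Finset.range_orderEmbOfFin s.1 s.2, ← Finset.range_orderEmbOfFin s'.1 s'.2]
        show Set.range (E s) = Set.range (E s')
        rw [← σ.surjective.range_comp (E s), ← σ'.surjective.range_comp (E s'), h]
      subst hss
      rw [Equiv.ext fun a => (E s).injective (congrFun h a)]
    · rintro ⟨r, hr⟩
      have hcard : (Finset.image r Finset.univ).card = k := by
        rw [Finset.card_image_of_injective _ hr, Finset.card_univ, Fintype.card_fin]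
      set s : {s : Finset (Fin n) // s.card = k} := ⟨Finset.image r Finset.univ, hcard⟩
      have hmem : ∀ a, r a ∈ s.1 := fun a => Finset.mem_image_of_mem r (Finset.mem_univ a)
      set f : Fin k → Fin k := fun a => (s.1.orderIsoOfFin s.2).symm ⟨r a, hmem a⟩ with hf
      have hfinj : Function.Injective f := by
        intro a b h
        have h2 := congrArg (s.1.orderIsoOfFin s.2) h
        simp only [hf, OrderIso.apply_symm_apply, Subtype.mk_eq_mk] at h2
        exact hr h2
      refine ⟨⟨s, Equiv.ofBijective f (Finite.injective_iff_bijective.mp hfinj)⟩, ?_⟩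
      apply Subtype.ext
      funext a
      show E s (f a) = r a
      rw [hE, ← Finset.coe_orderIsoOfFin_apply]
      simp [hf]
  have hsum : ∑ r : Fin k → Fin n, F r =
      ∑ p : {s : Finset (Fin n) // s.card = k} × Equiv.Perm (Fin k), F (J p).1 := by
    rw [← Finset.sum_filter_add_sum_filter_not Finset.univ (fun r => Function.Injective r) F]
    have h0 : ∑ r ∈ Finset.univ.filter (fun r => ¬ Function.Injective r), F r = 0 :=
      Finset.sum_eq_zero fun r hrm => hzero r (Finset.mem_filter.mp hrm).2
    rw [h0, add_zero]
    have hst : ∑ x ∈ Finset.univ.filter (fun r : Fin k → Fin n => Function.Injective r), F x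
        = ∑ r : {r : Fin k → Fin n // Function.Injective r}, F r.1 :=
      Finset.sum_subtype _ (fun x => by simp) F
    rw [hst]
    exact (Fintype.sum_bijective J hJ _ _ (fun p => rfl)).symm
  rw [expand, hsum, Fintype.sum_prod_type]
  refine Finset.sum_congr rfl fun s _ => ?_
  -- inner sum over permutations
  have hterm : ∀ σ : Equiv.Perm (Fin k),
      F (E s ∘ σ) = (∏ i ∈ s.1, c i) * ((Z.submatrix (E s) id).det *
        (Equiv.Perm.sign σ * ∏ a : Fin k, (starRingEnd ℂ) (Z (E s (σ a)) a))) := by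
    intro σ
    simp only [hF]
    have hdet : (Z.submatrix (⇑(E s) ∘ ⇑σ) id).det
        = Equiv.Perm.sign σ * (Z.submatrix (⇑(E s)) id).det := by
      have h3 : Z.submatrix (⇑(E s) ∘ ⇑σ) id = (Z.submatrix (⇑(E s)) id).submatrix σ id := by
        rw [Matrix.submatrix_submatrix]; rfl
      rw [h3, Matrix.det_permute]
    have hprod : (∏ a : Fin k, (starRingEnd ℂ) (Z ((⇑(E s) ∘ ⇑σ) a) a) * c ((⇑(E s) ∘ ⇑σ) a))
        = (∏ a : Fin k, (starRingEnd ℂ) (Z (E s (σ a)) a)) * ∏ i ∈ s.1, c i := by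
      rw [Finset.prod_mul_distrib]
      congr 1
      rw [show (∏ a : Fin k, c ((E s ∘ σ) a)) = ∏ a : Fin k, (fun j => c (E s j)) (σ a) from rfl,
        Equiv.prod_comp σ (fun j => c (E s j))]
      exact prod_orderEmbOfFin_eq s.1 s.2 c
    rw [hdet, hprod]
    ring
  calc ∑ σ : Equiv.Perm (Fin k), F (J (s, σ)).1
      = ∑ σ : Equiv.Perm (Fin k), (∏ i ∈ s.1, c i) * ((Z.submatrix (E s) id).det *
          (Equiv.Perm.sign σ * ∏ a : Fin k, (starRingEnd ℂ) (Z (E s (σ a)) a))) :=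
        Finset.sum_congr rfl fun σ _ => hterm σ
    _ = (∏ i ∈ s.1, c i) * ((Z.submatrix (E s) id).det *
          ∑ σ : Equiv.Perm (Fin k),
            (Equiv.Perm.sign σ : ℂ) * ∏ a : Fin k, (starRingEnd ℂ) (Z (E s (σ a)) a)) := by
        simp only [Finset.mul_sum]
    _ = (∏ i ∈ s.1, c i) *
          ((starRingEnd ℂ) ((Z.submatrix (E s) id).det) * (Z.submatrix (E s) id).det) := by
        congr 1
        rw [mul_comm]
        congr 1
        have hconj : (starRingEnd ℂ) ((Z.submatrix (E s) id).det)
            = ((Z.submatrix (E s) id).map (starRingEnd ℂ)).det :=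
          RingHom.map_det (starRingEnd ℂ) _
        rw [hconj, Matrix.det_apply]
        refine Finset.sum_congr rfl fun σ _ => ?_
        simp only [Matrix.map_apply, Matrix.submatrix_apply, id_eq, Units.smul_def,
          zsmul_eq_mul]

lemma charpoly_conj_unitary {m : Type*} [Fintype m] [DecidableEq m] (U M : Matrix m m ℂ)
    (hU : U * Uᴴ = 1) : (U * M * Uᴴ).charpoly = M.charpoly := by
  show (charmatrix (U * M * Uᴴ)).det = (charmatrix M).det
  have h1 : charmatrix (U * M * Uᴴ) =
      (U.map Polynomial.C) * charmatrix M * (Uᴴ.map Polynomial.C) := by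
    show Matrix.scalar m (X : ℂ[X]) - (Polynomial.C : ℂ →+* ℂ[X]).mapMatrix (U * M * Uᴴ)
      = _
    have hsc : (U.map Polynomial.C) * Matrix.scalar m (X : ℂ[X]) * (Uᴴ.map Polynomial.C)
        = Matrix.scalar m (X : ℂ[X]) := by
      have : Matrix.scalar m (X : ℂ[X]) = (X : ℂ[X]) • (1 : Matrix m m ℂ[X]) := by
        rw [Matrix.smul_one_eq_diagonal]; rfl
      rw [this, Matrix.mul_smul, Matrix.mul_one, Matrix.smul_mul, ← Matrix.map_mul, hU]
      congr 1
      simp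
    have hmap : (Polynomial.C : ℂ →+* ℂ[X]).mapMatrix (U * M * Uᴴ)
        = (U.map Polynomial.C) * ((Polynomial.C : ℂ →+* ℂ[X]).mapMatrix M) *
            (Uᴴ.map Polynomial.C) := by
      simp only [RingHom.mapMatrix_apply, Matrix.map_mul]
    rw [hmap, ← hsc]
    show _ = U.map ⇑C * (Matrix.scalar m X - (C : ℂ →+* ℂ[X]).mapMatrix M) * Uᴴ.map ⇑C
    rw [Matrix.mul_sub, Matrix.sub_mul]
  rw [h1, Matrix.det_mul, Matrix.det_mul]
  have hdet1 : (U.map Polynomial.C).det * (Uᴴ.map Polynomial.C).det = 1 := by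
    rw [← Matrix.det_mul, ← Matrix.map_mul, hU]
    simp
  calc (U.map ⇑C).det * (charmatrix M).det * (Uᴴ.map ⇑C).det
      = (charmatrix M).det * ((U.map ⇑C).det * (Uᴴ.map ⇑C).det) := by ring
    _ = (charmatrix M).det := by rw [hdet1, mul_one]

theorem schur_aux : ∀ (n : ℕ) (A : Matrix (Fin n) (Fin n) ℂ) (L : List ℂ),
    A.charpoly.roots = ↑L →
    ∃ U T : Matrix (Fin n) (Fin n) ℂ,
      Uᴴ * U = 1 ∧ A * U = U * T ∧ (∀ i j : Fin n, j < i → T i j = 0) ∧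
      (∀ i : Fin n, T i i = L.getD i 0) := by
  intro n
  induction n with
  | zero =>
    intro A L hL
    refine ⟨1, A, ?_, by rw [Matrix.mul_one, Matrix.one_mul], fun i => i.elim0,
      fun i => i.elim0⟩
    ext i j
    exact i.elim0
  | succ n IH =>
    intro A L hL
    classical
    have hlen : L.length = n + 1 := by
      have h1 : (A.charpoly.roots).card = A.charpoly.natDegree :=
        Polynomial.splits_iff_card_roots.mp (IsAlgClosed.splits _)
      have h2 : A.charpoly.natDegree = n + 1 := by
        rw [Matrix.charpoly_natDegree_eq_dim, Fintype.card_fin]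
      rw [hL] at h1
      simpa using h1.trans h2
    obtain ⟨b, L', rfl⟩ : ∃ b L', L = b :: L' := by
      cases L with
      | nil => simp at hlen
      | cons b L' => exact ⟨b, L', rfl⟩
    have hbroot : A.charpoly.IsRoot b := by
      apply Polynomial.isRoot_of_mem_roots
      rw [hL]
      exact Multiset.mem_coe.mpr List.mem_cons_self
    -- eigenvector
    have hdet0 : (b • (1 : Matrix (Fin (n+1)) (Fin (n+1)) ℂ) - A).det = 0 := by
      have hev := RingHom.map_det (Polynomial.evalRingHom b) (charmatrix A)
      have hmat : (charmatrix A).map (Polynomial.evalRingHom b)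
          = b • (1 : Matrix (Fin (n+1)) (Fin (n+1)) ℂ) - A := by
        ext i j
        by_cases h : i = j
        · subst h
          simp [Matrix.charmatrix_apply_eq, Matrix.one_apply]
        · simp [Matrix.charmatrix_apply_ne _ _ _ h, Matrix.one_apply_ne h]
      simp only [RingHom.mapMatrix_apply] at hev
      rw [hmat] at hev
      have : (Polynomial.evalRingHom b) (charmatrix A).det = 0 := hbroot
      rw [this] at hev
      exact hev.symm
    obtain ⟨v₀, hv₀ne, hv₀⟩ := (Matrix.exists_mulVec_eq_zero_iff).mpr hdet0
    have hAv : A.mulVec v₀ = b • v₀ := by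
      have h1 : (b • (1 : Matrix (Fin (n+1)) (Fin (n+1)) ℂ) - A).mulVec v₀
          = b • v₀ - A.mulVec v₀ := by
        rw [Matrix.sub_mulVec, Matrix.smul_mulVec, Matrix.one_mulVec]
      rw [hv₀] at h1
      exact (sub_eq_zero.mp h1.symm).symm
    -- normalize
    set v₁ : EuclideanSpace ℂ (Fin (n+1)) := (WithLp.equiv 2 _).symm v₀ with hv₁
    have hv₁ne : v₁ ≠ 0 := by
      simpa [hv₁] using hv₀ne
    set c : ℂ := ((‖v₁‖ : ℝ) : ℂ)⁻¹ with hc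
    set u₀ : Fin (n+1) → ℂ := c • v₀ with hu₀
    set u : EuclideanSpace ℂ (Fin (n+1)) := (WithLp.equiv 2 _).symm u₀ with hu
    have hueq : u = c • v₁ := by
      rw [hu, hu₀, hv₁]
      rfl
    have hunorm : ‖u‖ = 1 := by
      rw [hueq, norm_smul, hc]
      have h1 : ‖((‖v₁‖ : ℝ) : ℂ)⁻¹‖ = ‖v₁‖⁻¹ := by
        rw [norm_inv, Complex.norm_real, Real.norm_eq_abs, abs_of_nonneg (norm_nonneg _)]
      rw [h1, inv_mul_cancel₀ (norm_ne_zero_iff.mpr hv₁ne)]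
    have hAu : A.mulVec u₀ = b • u₀ := by
      rw [hu₀, Matrix.mulVec_smul, hAv, smul_comm]
    -- orthonormal basis
    have hortho : Orthonormal ℂ (({0} : Set (Fin (n+1))).restrict (fun _ => u)) := by
      rw [orthonormal_iff_ite]
      rintro ⟨i, hi⟩ ⟨j, hj⟩
      simp only [Set.mem_singleton_iff] at hi hj
      subst hi; subst hj
      rw [if_pos rfl]
      change inner ℂ u u = 1
      rw [@inner_self_eq_norm_sq_to_K ℂ, hunorm]
      norm_num
    obtain ⟨B, hB⟩ := hortho.exists_orthonormalBasis_extension_of_card_eq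
      (by simp) 
    have hBu : B 0 = u := hB 0 rfl
    have hBon : ∀ i j : Fin (n+1), (inner ℂ (B i) (B j) : ℂ) = if i = j then 1 else 0 :=
      fun i j => orthonormal_iff_ite.mp B.orthonormal i j
    set U₀ : Matrix (Fin (n+1)) (Fin (n+1)) ℂ := Matrix.of fun i j => B j i with hU₀def
    have hinner : ∀ i j : Fin (n+1), (inner ℂ (B i) (B j) : ℂ)
        = ∑ k, (starRingEnd ℂ) (B i k) * B j k := by
      intro i j
      rw [PiLp.inner_apply]
      simp only [RCLike.inner_apply']
    have hU₀ : U₀ᴴ * U₀ = 1 := by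
      ext i j
      rw [Matrix.mul_apply, Matrix.one_apply]
      have := hBon i j
      rw [hinner i j] at this
      simpa [hU₀def, Matrix.conjTranspose_apply] using this
    have hU₀' : U₀ * U₀ᴴ = 1 := mul_eq_one_comm.mp hU₀
    set M : Matrix (Fin (n+1)) (Fin (n+1)) ℂ := U₀ᴴ * A * U₀ with hMdef
    have hM0 : ∀ i, M i 0 = if i = 0 then b else 0 := by
      intro i
      have hcol : ∀ k, (A * U₀) k 0 = b * u₀ k := by
        intro k
        rw [Matrix.mul_apply]
        have : ∑ j, A k j * U₀ j 0 = A.mulVec u₀ k := by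
          rw [Matrix.mulVec, dotProduct]
          refine Finset.sum_congr rfl fun j _ => ?_
          congr 1
          simp only [hU₀def, Matrix.of_apply]
          rw [hBu]
          rfl
        rw [this, hAu]
        simp
      have : M i 0 = ∑ k, (starRingEnd ℂ) (U₀ k i) * (b * u₀ k) := by
        rw [hMdef, Matrix.mul_assoc, Matrix.mul_apply]
        exact Finset.sum_congr rfl fun k _ => by
          rw [Matrix.conjTranspose_apply, hcol k, RCLike.star_def]
      rw [this]
      have h2 : ∑ k, (starRingEnd ℂ) (U₀ k i) * (b * u₀ k)
          = b * ∑ k, (starRingEnd ℂ) (B i k) * B 0 k := by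
        rw [Finset.mul_sum]
        exact Finset.sum_congr rfl fun k _ => by
          rw [hU₀def]
          have : (B 0) k = u₀ k := by rw [hBu, hu]; rfl
          rw [Matrix.of_apply, this]
          ring
      rw [h2, ← hinner, hBon]
      by_cases h : i = 0 <;> simp [h]
    set A' : Matrix (Fin n) (Fin n) ℂ := Matrix.of fun p q => M p.succ q.succ with hA'def
    -- charpoly factorization
    have hcharM : A.charpoly = M.charpoly := by
      have hA : A = U₀ * M * U₀ᴴ := by
        rw [hMdef]
        calc A = (U₀ * U₀ᴴ) * A * (U₀ * U₀ᴴ) := by rw [hU₀', Matrix.one_mul, Matrix.mul_one]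
          _ = U₀ * (U₀ᴴ * A * U₀) * U₀ᴴ := by
              simp only [Matrix.mul_assoc]
      conv_lhs => rw [hA]
      exact charpoly_conj_unitary U₀ M hU₀'
    have hcharfac : M.charpoly = (X - C b) * A'.charpoly := by
      show (charmatrix M).det = (X - C b) * (charmatrix A').det
      rw [Matrix.det_succ_column_zero]
      have hz : ∀ i : Fin (n+1), i ≠ 0 → (-1 : ℂ[X]) ^ (i : ℕ) * charmatrix M i 0 *
          ((charmatrix M).submatrix i.succAbove Fin.succ).det = 0 := by
        intro i hi
        rw [Matrix.charmatrix_apply_ne _ _ _ hi, hM0 i, if_neg hi]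
        simp
      rw [Finset.sum_eq_single 0 (fun i _ hi => hz i hi) (by simp)]
      have h00 : charmatrix M 0 0 = X - C b := by
        rw [Matrix.charmatrix_apply_eq, hM0 0, if_pos rfl]
      have hsub : (charmatrix M).submatrix (Fin.succAbove 0) Fin.succ = charmatrix A' := by
        rw [Fin.succAbove_zero]
        ext p q
        by_cases h : p = q
        · subst h
          rw [Matrix.submatrix_apply, Matrix.charmatrix_apply_eq, Matrix.charmatrix_apply_eq,
            hA'def]
          rfl
        · rw [Matrix.submatrix_apply, Matrix.charmatrix_apply_ne _ _ _ (by
            simpa [Fin.succ_inj] using h), Matrix.charmatrix_apply_ne _ _ _ h, hA'def]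
          rfl
      rw [h00, hsub]
      simp
    have hrootsA' : A'.charpoly.roots = ↑L' := by
      have h1 : A.charpoly = (X - C b) * A'.charpoly := hcharM.trans hcharfac
      have h2 : A.charpoly.roots = {b} + A'.charpoly.roots := by
        rw [h1, Polynomial.roots_mul (by rw [← h1]; exact A.charpoly_monic.ne_zero),
          Polynomial.roots_X_sub_C]
      rw [hL] at h2
      have h3 : (↑(b :: L') : Multiset ℂ) = b ::ₘ ↑L' := rfl
      rw [h3, ← Multiset.singleton_add] at h2
      exact (add_right_injective {b} h2).symm
    obtain ⟨U₁, T₁, h1, h2, h3, h4⟩ := IH A' L' hrootsA'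
    have h1e : ∀ p q, ∑ r, (starRingEnd ℂ) (U₁ r p) * U₁ r q
        = if p = q then 1 else 0 := by
      intro p q
      have : (U₁ᴴ * U₁) p q = (1 : Matrix (Fin n) (Fin n) ℂ) p q := by rw [h1]
      rw [Matrix.mul_apply, Matrix.one_apply] at this
      simpa [Matrix.conjTranspose_apply, RCLike.star_def] using this
    have h2e : ∀ p q, ∑ r, A' p r * U₁ r q = ∑ r, U₁ p r * T₁ r q := by
      intro p q
      have : (A' * U₁) p q = (U₁ * T₁) p q := by rw [h2]
      rwa [Matrix.mul_apply, Matrix.mul_apply] at this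
    set Trow : Fin n → ℂ := fun q => ∑ p, M 0 p.succ * U₁ p q with hTrow
    set Q : Matrix (Fin (n+1)) (Fin (n+1)) ℂ := Matrix.of fun i j =>
      Fin.cases (Fin.cases (1:ℂ) (fun _ => 0) j) (fun p => Fin.cases 0 (fun q => U₁ p q) j) i
      with hQdef
    set T : Matrix (Fin (n+1)) (Fin (n+1)) ℂ := Matrix.of fun i j =>
      Fin.cases (Fin.cases b (fun q => Trow q) j) (fun p => Fin.cases 0 (fun q => T₁ p q) j) i
      with hTdef
    have hQ : Qᴴ * Q = 1 := by
      ext i j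
      rw [Matrix.mul_apply, Matrix.one_apply]
      simp only [Matrix.conjTranspose_apply, RCLike.star_def]
      induction i using Fin.cases with
      | zero =>
        induction j using Fin.cases with
        | zero => rw [Fin.sum_univ_succ]; simp [hQdef]
        | succ q => rw [Fin.sum_univ_succ]; simp [hQdef, (Fin.succ_ne_zero q).symm]
      | succ p =>
        induction j using Fin.cases with
        | zero => rw [Fin.sum_univ_succ]; simp [hQdef, Fin.succ_ne_zero p]
        | succ q =>
          rw [Fin.sum_univ_succ]
          simp only [hQdef, Matrix.of_apply, Fin.cases_zero, Fin.cases_succ, map_zero,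
            zero_mul, zero_add]
          rw [h1e p q]
          simp [Fin.succ_inj]
    have hMQ : M * Q = Q * T := by
      ext i j
      rw [Matrix.mul_apply, Matrix.mul_apply]
      induction i using Fin.cases with
      | zero =>
        induction j using Fin.cases with
        | zero =>
          rw [Fin.sum_univ_succ, Fin.sum_univ_succ]
          simp [hQdef, hTdef, hM0 0]
        | succ q =>
          rw [Fin.sum_univ_succ, Fin.sum_univ_succ]
          simp [hQdef, hTdef, hTrow]
      | succ p =>
        induction j using Fin.cases with
        | zero =>
          rw [Fin.sum_univ_succ, Fin.sum_univ_succ]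
          simp [hQdef, hTdef, hM0 p.succ, Fin.succ_ne_zero p]
        | succ q =>
          rw [Fin.sum_univ_succ, Fin.sum_univ_succ]
          simp only [hQdef, hTdef, Matrix.of_apply, Fin.cases_zero, Fin.cases_succ,
            mul_zero, zero_mul, zero_add]
          have := h2e p q
          simp only [hA'def, Matrix.of_apply] at this
          rw [this]
    refine ⟨U₀ * Q, T, ?_, ?_, ?_, ?_⟩
    · calc (U₀ * Q)ᴴ * (U₀ * Q) = Qᴴ * (U₀ᴴ * (U₀ * Q)) := by
            simp only [Matrix.conjTranspose_mul, Matrix.mul_assoc]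
        _ = Qᴴ * Q := by rw [← Matrix.mul_assoc U₀ᴴ U₀ Q, hU₀, Matrix.one_mul]
        _ = 1 := hQ
    · have hAU₀ : A * U₀ = U₀ * M := by
        rw [hMdef, ← Matrix.mul_assoc, ← Matrix.mul_assoc, hU₀', Matrix.one_mul]
      calc A * (U₀ * Q) = (A * U₀) * Q := by rw [Matrix.mul_assoc]
        _ = U₀ * M * Q := by rw [hAU₀]
        _ = U₀ * (M * Q) := by rw [Matrix.mul_assoc]
        _ = U₀ * (Q * T) := by rw [hMQ]
        _ = (U₀ * Q) * T := by rw [Matrix.mul_assoc]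
    · intro i j hij
      induction i using Fin.cases with
      | zero => exact absurd hij (by simp)
      | succ p =>
        induction j using Fin.cases with
        | zero => simp [hTdef]
        | succ q =>
          have hq : q < p := by
            rwa [Fin.succ_lt_succ_iff] at hij
          simp only [hTdef, Matrix.of_apply, Fin.cases_succ]
          exact h3 p q hq
    · intro i
      induction i using Fin.cases with
      | zero => simp [hTdef]
      | succ p =>
        simp only [hTdef, Matrix.of_apply, Fin.cases_succ]
        rw [h4 p]
        have : ((p.succ : Fin (n+1)) : ℕ) = (p : ℕ) + 1 := rfl
        rw [this, List.getD_cons_succ]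

/-- For an invertible real `n × n` matrix `G` with complex eigenvalues `b₁, …, bₙ`
(the roots of its characteristic polynomial, counted with multiplicity) and with
`μ₁, …, μₙ` the eigenvalues of the positive definite symmetric matrix `Gᵀ * G`
(counted with multiplicity), one has `∑ᵢ (log |bᵢ|²)² ≤ ∑ᵢ (log μᵢ)²`. -/
theorem sum_sq_log_eigenvalues_le {n : ℕ} (G : Matrix (Fin n) (Fin n) ℝ)
    (hG : IsUnit G.det) (hH : (Gᵀ * G).IsHermitian) :
    (((G.map (Complex.ofReal : ℝ → ℂ)).charpoly.roots.map
        fun b => Real.log (‖b‖ ^ 2) ^ 2).sum)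
      ≤ ∑ i : Fin n, Real.log (hH.eigenvalues i) ^ 2 := by
  classical
  set A : Matrix (Fin n) (Fin n) ℂ := G.map (Complex.ofReal : ℝ → ℂ) with hAdef
  have hGdet : G.det ≠ 0 := hG.ne_zero
  have hdetA : A.det = (G.det : ℂ) := (RingHom.map_det Complex.ofRealHom G).symm
  have hdetAne : A.det ≠ 0 := by rw [hdetA]; exact_mod_cast hGdet
  -- roots list
  set R : Multiset ℂ := A.charpoly.roots with hRdef
  have hcard : Multiset.card R = n := by
    have h1 : Multiset.card R = A.charpoly.natDegree :=
      Polynomial.splits_iff_card_roots.mp (IsAlgClosed.splits _)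
    rcases Nat.eq_zero_or_pos n with hn | hn
    · subst hn
      have : A.charpoly = 1 := by
        have := A.charpoly_monic
        have hdeg : A.charpoly.natDegree = 0 := by
          have : (Finset.univ : Finset (Fin 0)) = ∅ := rfl
          rw [Matrix.charpoly]
          simp [Matrix.det_isEmpty]
        exact Polynomial.Monic.natDegree_eq_zero A.charpoly_monic |>.mp hdeg
      rw [hRdef, this]
      simp
    · haveI : Nontrivial ℝ := inferInstance
      rw [h1, Matrix.charpoly_natDegree_eq_dim, Fintype.card_fin]
  have hlenR : R.toList.length = n := by rw [Multiset.length_toList, hcard]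
  set f : Fin n → ℂ := fun i => R.toList.get (Fin.cast hlenR.symm i) with hfdef
  set e : Equiv.Perm (Fin n) :=
    (Fin.revPerm).trans (Tuple.sort (fun i => ‖f i‖)) with hedef
  set lb : Fin n → ℂ := fun i => f (e i) with hlbdef
  have hanti : ∀ i j : Fin n, i ≤ j → ‖lb j‖ ≤ ‖lb i‖ := by
    intro i j hij
    have hmono := Tuple.monotone_sort (fun i => ‖f i‖)
    have hrev : j.rev ≤ i.rev := by rwa [Fin.rev_le_rev]
    exact hmono hrev
  have hofFnf : List.ofFn f = R.toList := by
    apply List.ext_get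
    · simp [hlenR]
    · intro i h1 h2
      rw [List.get_ofFn]
      simp [hfdef]
  have hR : A.charpoly.roots = ↑(List.ofFn lb) := by
    have h1 : (↑(List.ofFn lb) : Multiset ℂ) = (↑(List.ofFn f) : Multiset ℂ) := by
      rw [List.ofFn_eq_map, List.ofFn_eq_map]
      have h2 : (↑(List.map (f ∘ e) (List.finRange n)) : Multiset ℂ)
          = Multiset.map (f ∘ e) ↑(List.finRange n) := rfl
      have h3 : (↑(List.map f (List.finRange n)) : Multiset ℂ)
          = Multiset.map f ↑(List.finRange n) := rfl
      rw [show (List.map lb (List.finRange n)) = List.map (f ∘ e) (List.finRange n) from rfl,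
        h2, h3, ← Multiset.map_map]
      congr 1
      have h4 : (↑(List.finRange n) : Multiset (Fin n)) = (Finset.univ : Finset (Fin n)).val :=
        rfl
      rw [h4]
      have h5 : Multiset.map (⇑e) Finset.univ.val
          = (Finset.univ.map e.toEmbedding).val := rfl
      rw [h5, Finset.map_univ_equiv]
    rw [h1, hofFnf, Multiset.coe_toList]
  have hlbne : ∀ i, lb i ≠ 0 := by
    intro i hzero
    have hmem : (0 : ℂ) ∈ R := by
      rw [hRdef, hR]
      rw [← hzero]
      exact Multiset.mem_coe.mpr (List.mem_ofFn.mpr ⟨i, rfl⟩)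
    have : R.prod = 0 := Multiset.prod_eq_zero hmem
    rw [hRdef, ← Matrix.det_eq_prod_roots_charpoly] at this
    exact hdetAne this
  have hlbpos : ∀ i, 0 < ‖lb i‖ := fun i => by
    simpa [norm_pos_iff] using hlbne i
  -- eigenvalues
  set μ : Fin n → ℝ := hH.eigenvalues with hμdef
  have hμpos : ∀ i, 0 < μ i := by
    have hpd : (Gᵀ * G).PosDef := by
      refine .of_dotProduct_mulVec_pos hH fun x hx => ?_
      have h1 : (star x) ⬝ᵥ ((Gᵀ * G) *ᵥ x) = (G *ᵥ x) ⬝ᵥ (G *ᵥ x) := by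
        rw [← Matrix.mulVec_mulVec, Matrix.dotProduct_mulVec, star_trivial,
          Matrix.vecMul_transpose]
      have h2 : G *ᵥ x ≠ 0 := by
        intro hGx
        have : ∃ v ≠ 0, G *ᵥ v = 0 := ⟨x, hx, hGx⟩
        rw [Matrix.exists_mulVec_eq_zero_iff] at this
        exact hGdet this
      rw [h1]
      have h3 : 0 < (G *ᵥ x) ⬝ᵥ (G *ᵥ x) := by
        have : ∃ i, (G *ᵥ x) i ≠ 0 := by
          by_contra hc
          push_neg at hc
          exact h2 (funext hc)
        obtain ⟨i, hi⟩ := this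
        have : 0 < ∑ j, (G *ᵥ x) j * (G *ᵥ x) j := by
          apply Finset.sum_pos' (fun j _ => mul_self_nonneg _)
          exact ⟨i, Finset.mem_univ i, mul_self_pos.mpr hi⟩
        exact this
      exact h3
    exact fun i => hpd.eigenvalues_pos i
  set π : Equiv.Perm (Fin n) := (Fin.revPerm).trans (Tuple.sort μ) with hπdef
  set ν : Fin n → ℝ := fun i => μ (π i) with hνdef
  have hνpos : ∀ i, 0 < ν i := fun i => hμpos _
  have hνanti : ∀ i j : Fin n, i ≤ j → ν j ≤ ν i := by
    intro i j hij
    have hmono := Tuple.monotone_sort μ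
    have hrev : j.rev ≤ i.rev := by rwa [Fin.rev_le_rev]
    exact hmono hrev
  -- Schur
  obtain ⟨U, T, hU, hAU, hTtri, hTdiag⟩ := schur_aux n A (List.ofFn lb) hR
  have hTdiag' : ∀ i : Fin n, T i i = lb i := by
    intro i
    rw [hTdiag i, List.getD_eq_getElem _ _ (by simp [List.length_ofFn, i.isLt]), List.getElem_ofFn]
  -- complexified spectral data
  set Q₀ : Matrix (Fin n) (Fin n) ℝ := (hH.eigenvectorUnitary : Matrix (Fin n) (Fin n) ℝ)
    with hQ₀def
  have hQ₀mem := hH.eigenvectorUnitary.2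
  have hQ₀1 : Q₀ᴴ * Q₀ = 1 := by
    have := (Unitary.mem_iff.mp hQ₀mem).1
    rwa [Matrix.star_eq_conjTranspose] at this
  have hQ₀2 : Q₀ * Q₀ᴴ = 1 := by
    have := (Unitary.mem_iff.mp hQ₀mem).2
    rwa [Matrix.star_eq_conjTranspose] at this
  have hspecR : Gᵀ * G = Q₀ * Matrix.diagonal μ * Q₀ᴴ := by
    have := hH.spectral_theorem
    rwa [Unitary.conjStarAlgAut_apply, Matrix.star_eq_conjTranspose, show (RCLike.ofReal ∘ hH.eigenvalues : Fin n → ℝ) = μ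
      from funext fun i => rfl] at this
  set φ : ℝ →+* ℂ := Complex.ofRealHom with hφdef
  have hmapCT : ∀ (X : Matrix (Fin n) (Fin n) ℝ), (X.map φ)ᴴ = Xᴴ.map φ := by
    intro X
    ext i j
    simp [hφdef, Matrix.conjTranspose_apply, Complex.conj_ofReal,
      Complex.ofRealHom_eq_coe]
  set Qc : Matrix (Fin n) (Fin n) ℂ := Q₀.map φ with hQcdef
  have hQc1 : Qcᴴ * Qc = 1 := by
    rw [hQcdef, hmapCT, ← Matrix.map_mul, hQ₀1]
    simp
  have hQc2 : Qc * Qcᴴ = 1 := by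
    rw [hQcdef, hmapCT, ← Matrix.map_mul, hQ₀2]
    simp
  have hAHA : Aᴴ * A = Qc * Matrix.diagonal (fun i => (μ i : ℂ)) * Qcᴴ := by
    have h1 : Aᴴ * A = (Gᵀ * G).map φ := by
      have hGT : Gᴴ = Gᵀ := by
        ext i j
        simp [Matrix.conjTranspose_apply]
      rw [hAdef, show (G.map (Complex.ofReal : ℝ → ℂ)) = G.map ⇑φ from rfl, hmapCT,
        ← Matrix.map_mul, hGT]
    have hdiag : (Matrix.diagonal μ).map ⇑φ = Matrix.diagonal (fun i => (μ i : ℂ)) := by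
      ext i j
      by_cases h : i = j
      · subst h; simp [hφdef, Complex.ofRealHom_eq_coe]
      · simp [Matrix.diagonal_apply_ne _ h]
    rw [h1, hspecR, Matrix.map_mul, Matrix.map_mul, hmapCT, hdiag]
  -- the key product inequality
  have key : ∀ (k : ℕ) (hk : k ≤ n),
      ∏ a : Fin k, ‖lb (Fin.castLE hk a)‖ ^ 2
        ≤ ∏ a : Fin k, ν (Fin.castLE hk a) := by
    intro k hk
    set Y : Matrix (Fin n) (Fin k) ℂ := U.submatrix id (Fin.castLE hk) with hYdef
    set Tk : Matrix (Fin k) (Fin k) ℂ := T.submatrix (Fin.castLE hk) (Fin.castLE hk)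
      with hTkdef
    have hUe : ∀ i j, (Uᴴ * U) i j = (1 : Matrix (Fin n) (Fin n) ℂ) i j := fun i j => by
      rw [hU]
    have hYY : Yᴴ * Y = 1 := by
      ext a b
      have h := hUe (Fin.castLE hk a) (Fin.castLE hk b)
      rw [Matrix.mul_apply] at h
      simp only [Matrix.conjTranspose_apply] at h
      rw [Matrix.mul_apply, Matrix.one_apply]
      simp only [hYdef, Matrix.conjTranspose_apply, Matrix.submatrix_apply, id_eq]
      rw [h, Matrix.one_apply]
      by_cases hab : a = b
      · simp [hab]
      · rw [if_neg hab, if_neg (fun hc => hab (Fin.castLE_injective hk hc))]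
    have hAUe : ∀ i j, (A * U) i j = (U * T) i j := fun i j => by rw [hAU]
    have hAY : A * Y = Y * Tk := by
      ext i a
      have h1 : (A * Y) i a = (U * T) i (Fin.castLE hk a) := by
        rw [Matrix.mul_apply, ← hAUe, Matrix.mul_apply]
        simp [hYdef]
      rw [h1, Matrix.mul_apply, Matrix.mul_apply]
      have h2 : ∑ j : Fin n, U i j * T j (Fin.castLE hk a)
          = ∑ j ∈ Finset.univ.map (Fin.castLEEmb hk),
              U i j * T j (Fin.castLE hk a) := by
        symm
        apply Finset.sum_subset (Finset.subset_univ _)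
        intro j _ hj
        have hjk : ¬ (j : ℕ) < k := by
          intro hjk
          apply hj
          simp only [Finset.mem_map, Finset.mem_univ, true_and]
          exact ⟨⟨(j : ℕ), hjk⟩, by ext; simp⟩
        have : Fin.castLE hk a < j := by
          rw [Fin.lt_def]
          have : (a : ℕ) < k := a.isLt
          simp only [Fin.coe_castLE]
          omega
        rw [hTtri j (Fin.castLE hk a) this, mul_zero]
      rw [h2, Finset.sum_map]
      exact Finset.sum_congr rfl fun b _ => rfl
    have hTkdet : Tk.det = ∏ a : Fin k, lb (Fin.castLE hk a) := by
      have htri : Tk.BlockTriangular id := by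
        intro a b hab
        refine hTtri _ _ ?_
        show ((Fin.castLE hk b) : ℕ) < ((Fin.castLE hk a) : ℕ)
        simpa using hab
      rw [Matrix.det_of_upperTriangular htri]
      exact Finset.prod_congr rfl fun a _ => by
        rw [hTkdef, Matrix.submatrix_apply, hTdiag']
    -- Z matrix
    set Z : Matrix (Fin n) (Fin k) ℂ := Qcᴴ * Y with hZdef
    have hZZ : Zᴴ * Z = 1 := by
      rw [hZdef, Matrix.conjTranspose_mul, Matrix.conjTranspose_conjTranspose]
      calc Yᴴ * Qc * (Qcᴴ * Y) = Yᴴ * (Qc * Qcᴴ) * Y := by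
            simp only [Matrix.mul_assoc]
        _ = 1 := by rw [hQc2, Matrix.mul_one, hYY]
    have hTkTk : Tkᴴ * Tk = Zᴴ * Matrix.diagonal (fun i => (μ i : ℂ)) * Z := by
      have h1 : Tkᴴ * Tk = (Y * Tk)ᴴ * (Y * Tk) := by
        rw [Matrix.conjTranspose_mul]
        calc Tkᴴ * Tk = Tkᴴ * 1 * Tk := by rw [Matrix.mul_one]
          _ = Tkᴴ * (Yᴴ * Y) * Tk := by rw [hYY]
          _ = Tkᴴ * Yᴴ * (Y * Tk) := by simp only [Matrix.mul_assoc]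
      rw [h1, ← hAY, Matrix.conjTranspose_mul]
      calc Yᴴ * Aᴴ * (A * Y) = Yᴴ * (Aᴴ * A) * Y := by simp only [Matrix.mul_assoc]
        _ = Yᴴ * (Qc * Matrix.diagonal (fun i => (μ i : ℂ)) * Qcᴴ) * Y := by rw [hAHA]
        _ = Zᴴ * Matrix.diagonal (fun i => (μ i : ℂ)) * Z := by
            rw [hZdef, Matrix.conjTranspose_mul, Matrix.conjTranspose_conjTranspose]
            simp only [Matrix.mul_assoc]
    -- dets via Cauchy-Binet
    set dets : {s : Finset (Fin n) // s.card = k} → ℂ :=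
      fun s => (Z.submatrix (s.1.orderEmbOfFin s.2) id).det with hdets
    have hCB := det_conj_diag Z (fun i => (μ i : ℂ))
    have hCB1 := det_conj_diag Z (fun _ => (1 : ℂ))
    have hZdet1 : (Zᴴ * Matrix.diagonal (fun _ : Fin n => (1:ℂ)) * Z).det = 1 := by
      rw [Matrix.diagonal_one, Matrix.mul_one, hZZ, Matrix.det_one]
    have hsum1 : ∑ s : {s : Finset (Fin n) // s.card = k}, Complex.normSq (dets s) = 1 := by
      have h0 : ((∑ s : {s : Finset (Fin n) // s.card = k},
          Complex.normSq (dets s) : ℝ) : ℂ) = 1 := by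
        calc ((∑ s : {s : Finset (Fin n) // s.card = k},
            Complex.normSq (dets s) : ℝ) : ℂ)
            = ∑ s : {s : Finset (Fin n) // s.card = k},
                ((Complex.normSq (dets s) : ℝ) : ℂ) := by push_cast; ring
          _ = (Zᴴ * Matrix.diagonal (fun _ : Fin n => (1:ℂ)) * Z).det := by
              rw [hCB1]
              refine Finset.sum_congr rfl fun s _ => ?_
              rw [Finset.prod_const_one, one_mul,
                show (Z.submatrix (s.1.orderEmbOfFin s.2) id).det = dets s from rfl,
                Complex.normSq_eq_conj_mul_self]
          _ = 1 := hZdet1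
      exact_mod_cast h0
    have hmain : ∏ a : Fin k, ‖lb (Fin.castLE hk a)‖ ^ 2
        = ∑ s : {s : Finset (Fin n) // s.card = k},
            (∏ i ∈ s.1, μ i) * Complex.normSq (dets s) := by
      have h1 : ((∏ a : Fin k, ‖lb (Fin.castLE hk a)‖ ^ 2 : ℝ) : ℂ)
          = (Tkᴴ * Tk).det := by
        rw [Matrix.det_mul, Matrix.det_conjTranspose, hTkdet, RCLike.star_def,
          ← Complex.normSq_eq_conj_mul_self,
          show Complex.normSq (∏ a : Fin k, lb (Fin.castLE hk a))
            = ∏ a : Fin k, Complex.normSq (lb (Fin.castLE hk a)) from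
            map_prod Complex.normSq _ _,
          show (∏ a : Fin k, ‖lb (Fin.castLE hk a)‖ ^ 2)
            = ∏ a : Fin k, Complex.normSq (lb (Fin.castLE hk a)) from
            Finset.prod_congr rfl fun a _ => Complex.sq_norm _]
      have h2 : (Tkᴴ * Tk).det = ((∑ s : {s : Finset (Fin n) // s.card = k},
          (∏ i ∈ s.1, μ i) * Complex.normSq (dets s) : ℝ) : ℂ) := by
        rw [hTkTk, hCB]
        rw [show ((∑ s : {s : Finset (Fin n) // s.card = k},
            (∏ i ∈ s.1, μ i) * Complex.normSq (dets s) : ℝ) : ℂ)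
            = ∑ s : {s : Finset (Fin n) // s.card = k},
              ((∏ i ∈ s.1, μ i : ℝ) : ℂ) * ((Complex.normSq (dets s) : ℝ) : ℂ) from by
          push_cast; ring]
        refine Finset.sum_congr rfl fun s _ => ?_
        rw [show (Z.submatrix (s.1.orderEmbOfFin s.2) id).det = dets s from rfl,
          Complex.normSq_eq_conj_mul_self]
        push_cast
        ring
      have := h1.trans h2
      exact_mod_cast this
    rw [hmain]
    have hbound : ∀ s : {s : Finset (Fin n) // s.card = k},
        (∏ i ∈ s.1, μ i) ≤ ∏ a : Fin k, ν (Fin.castLE hk a) := by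
      intro s
      have h1 : ∏ i ∈ s.1, μ i = ∏ j ∈ s.1.image π.symm, ν j := by
        rw [Finset.prod_image (fun a _ b _ h => π.symm.injective h)]
        refine Finset.prod_congr rfl fun i _ => ?_
        rw [hνdef]
        simp
      rw [h1]
      exact prod_subset_le ν (fun i => (hνpos i).le) hνanti _
        (by rw [Finset.card_image_of_injective _ π.symm.injective, s.2]) hk
    calc ∑ s : {s : Finset (Fin n) // s.card = k}, (∏ i ∈ s.1, μ i) * Complex.normSq (dets s)
        ≤ ∑ s : {s : Finset (Fin n) // s.card = k},
            (∏ a : Fin k, ν (Fin.castLE hk a)) * Complex.normSq (dets s) := by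
          refine Finset.sum_le_sum fun s _ => ?_
          exact mul_le_mul_of_nonneg_right (hbound s) (Complex.normSq_nonneg _)
      _ = ∏ a : Fin k, ν (Fin.castLE hk a) := by
          rw [← Finset.mul_sum, hsum1, mul_one]
  -- logs
  set l : ℕ → ℝ := fun i => if h : i < n then Real.log (‖lb ⟨i, h⟩‖ ^ 2) else 0
    with hldef
  set m : ℕ → ℝ := fun i => if h : i < n then Real.log (ν ⟨i, h⟩) else 0 with hmdef
  have hlsum : ∀ (k : ℕ) (hk : k ≤ n), ∑ i ∈ Finset.range k, l i
      = Real.log (∏ a : Fin k, ‖lb (Fin.castLE hk a)‖ ^ 2) := by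
    intro k hk
    rw [Real.log_prod (fun a _ => (pow_pos (hlbpos _) 2).ne')]
    rw [← Fin.sum_univ_eq_sum_range]
    refine Finset.sum_congr rfl fun a _ => ?_
    simp only [hldef]
    have h : (a : ℕ) < n := lt_of_lt_of_le a.isLt hk
    rw [dif_pos h]
    rfl
  have hmsum : ∀ (k : ℕ) (hk : k ≤ n), ∑ i ∈ Finset.range k, m i
      = Real.log (∏ a : Fin k, ν (Fin.castLE hk a)) := by
    intro k hk
    rw [Real.log_prod (fun a _ => (hνpos _).ne')]
    rw [← Fin.sum_univ_eq_sum_range]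
    refine Finset.sum_congr rfl fun a _ => ?_
    simp only [hmdef]
    have h : (a : ℕ) < n := lt_of_lt_of_le a.isLt hk
    rw [dif_pos h]
    rfl
  have hprodeq : ∏ a : Fin n, ‖lb (Fin.castLE (le_refl n) a)‖ ^ 2
      = ∏ a : Fin n, ν (Fin.castLE (le_refl n) a) := by
    have hcast : ∀ a : Fin n, Fin.castLE (le_refl n) a = a := fun a => rfl
    simp only [hcast]
    have h1 : ∏ a : Fin n, ‖lb a‖ ^ 2 = (G.det) ^ 2 := by
      have h2 : (∏ a : Fin n, lb a) = A.det := by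
        rw [Matrix.det_eq_prod_roots_charpoly, hR]
        have : (↑(List.ofFn lb) : Multiset ℂ).prod = (List.ofFn lb).prod := rfl
        rw [this, List.prod_ofFn]
      have h3 : Complex.normSq (∏ a : Fin n, lb a) = G.det ^ 2 := by
        rw [h2, hdetA, Complex.normSq_ofReal, sq]
      rw [← h3, map_prod Complex.normSq]
      exact Finset.prod_congr rfl fun a _ => (Complex.sq_norm _)
    have h4 : ∏ a : Fin n, ν a = (G.det) ^ 2 := by
      rw [hνdef]
      have h5 : ∏ a : Fin n, μ (π a) = ∏ a : Fin n, μ a := Equiv.prod_comp π μ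
      rw [h5]
      have h6 : (Gᵀ * G).det = ∏ i, μ i := by
        have := hH.det_eq_prod_eigenvalues
        simpa using this
      rw [← h6, Matrix.det_mul, Matrix.det_transpose, sq]
    rw [h1, h4]
  have hmaj := maj_sq n l m
    (by
      intro i j hij hjn
      simp only [hldef]
      have hin : i < n := lt_of_le_of_lt hij hjn
      rw [dif_pos hjn, dif_pos hin]
      have h1 : ‖lb ⟨j, hjn⟩‖ ≤ ‖lb ⟨i, hin⟩‖ :=
        hanti _ _ (by simp [Fin.le_def, hij])
      apply Real.log_le_log (pow_pos (hlbpos _) 2)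
      exact pow_le_pow_left₀ (norm_nonneg _) h1 2)
    (by
      intro k hk
      rw [hlsum k hk, hmsum k hk]
      exact Real.log_le_log (Finset.prod_pos fun a _ => pow_pos (hlbpos _) 2) (key k hk))
    (by rw [hlsum n (le_refl n), hmsum n (le_refl n), hprodeq])
  -- final conversions
  have hLHS : ((A.charpoly.roots.map fun b => Real.log (‖b‖ ^ 2) ^ 2).sum)
      = ∑ i ∈ Finset.range n, (l i)^2 := by
    rw [hR]
    have h1 : ((↑(List.ofFn lb) : Multiset ℂ).map
        fun b => Real.log (‖b‖ ^ 2) ^ 2).sum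
        = ((List.ofFn lb).map fun b => Real.log (‖b‖ ^ 2) ^ 2).sum := rfl
    rw [h1, List.map_ofFn, List.sum_ofFn, ← Fin.sum_univ_eq_sum_range]
    refine Finset.sum_congr rfl fun a _ => ?_
    simp only [hldef]
    rw [dif_pos a.isLt]
    rfl
  have hRHS : ∑ i : Fin n, Real.log (hH.eigenvalues i) ^ 2
      = ∑ i ∈ Finset.range n, (m i)^2 := by
    rw [← Fin.sum_univ_eq_sum_range]
    have h1 : ∑ i : Fin n, Real.log (μ i) ^ 2 = ∑ i : Fin n, Real.log (ν i) ^ 2 := by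
      rw [hνdef]
      exact (Equiv.sum_comp π (fun i => Real.log (μ i) ^ 2)).symm
    rw [show (hH.eigenvalues : Fin n → ℝ) = μ from rfl, h1]
    refine Finset.sum_congr rfl fun a _ => ?_
    simp only [hmdef]
    rw [dif_pos a.isLt]
  rw [hLHS, hRHS]
  exact hmaj
end

section
/- For every g ∈ SL(2,ℝ) acting on the hyperbolic upper half-plane ℍ, there exist a path c : [0,∞) → ℍ which is either constant or satisfies dist(c(s), c(t)) = |s − t| for all s, t ≥ 0 (a unit-speed geodesic ray for the hyperbolic metric), and constants a, b > 0, such that for all t ≥ 0, dist(g • c(t), c(t)) ≤ Δ_g + b e^{−a t}. That is, every isometry of ℍ coming from SL(2,ℝ) has exponential decay to its translation length. -/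
open UpperHalfPlane

open Real Matrix

noncomputable section

/-- numerator minus z * denominator -/
def sl2Q (g : Matrix.SpecialLinearGroup (Fin 2) ℝ) (z : ℂ) : ℂ :=
  (g 0 0 : ℂ) * z + g 0 1 - z * ((g 1 0 : ℂ) * z + g 1 1)

lemma sl2_det (g : Matrix.SpecialLinearGroup (Fin 2) ℝ) :
    g 0 0 * g 1 1 - g 0 1 * g 1 0 = 1 := by
  have := g.2
  rwa [Matrix.det_fin_two] at this

lemma sl2_denom_ne_zero (g : Matrix.SpecialLinearGroup (Fin 2) ℝ) (z : ℍ) :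
    ((g 1 0 : ℂ) * z + g 1 1) ≠ 0 := by
  intro h
  have h1 := congrArg Complex.im h
  simp [Complex.add_im, Complex.mul_im] at h1
  have hz := z.im_ne_zero
  rcases h1 with h1 | h1
  · rw [h1] at h
    simp at h
    have := sl2_det g
    rw [h1, h] at this
    simp at this
  · exact hz h1

lemma sl2_coe_smul (g : Matrix.SpecialLinearGroup (Fin 2) ℝ) (z : ℍ) :
    ((g • z : ℍ) : ℂ) = ((g 0 0 : ℂ) * z + g 0 1) / ((g 1 0 : ℂ) * z + g 1 1) := by
  rw [specialLinearGroup_apply]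
  simp

lemma sl2_im_smul (g : Matrix.SpecialLinearGroup (Fin 2) ℝ) (z : ℍ) :
    (g • z).im = z.im / Complex.normSq ((g 1 0 : ℂ) * z + g 1 1) := by
  have h := congrArg Complex.im (sl2_coe_smul g z)
  rw [UpperHalfPlane.coe_im] at h
  rw [h, Complex.div_im]
  have hn : Complex.normSq ((g 1 0 : ℂ) * z + g 1 1) ≠ 0 :=
    (Complex.normSq_pos.2 (sl2_denom_ne_zero g z)).ne'
  have hdet := sl2_det g
  rw [div_sub_div_same, div_eq_div_iff hn hn]
  simp only [Complex.add_im, Complex.add_re, Complex.mul_im, Complex.mul_re,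
    Complex.ofReal_re, Complex.ofReal_im, UpperHalfPlane.coe_re, UpperHalfPlane.coe_im]
  linear_combination (z.im * Complex.normSq ((g 1 0 : ℂ) * z + g 1 1)) * hdet

lemma sl2_dist_smul (g : Matrix.SpecialLinearGroup (Fin 2) ℝ) (z : ℍ) :
    dist (g • z) z = 2 * Real.arsinh (‖sl2Q g z‖ / (2 * z.im)) := by
  have hD := sl2_denom_ne_zero g z
  have haD : ‖(g 1 0 : ℂ) * z + g 1 1‖ ≠ 0 := by
    simpa using hD
  rw [UpperHalfPlane.dist_eq]
  congr 1
  rw [Complex.dist_eq, sl2_coe_smul, sl2_im_smul]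
  have hsq : √(z.im / Complex.normSq ((g 1 0 : ℂ) * z + g 1 1) * z.im)
      = z.im / ‖(g 1 0 : ℂ) * z + g 1 1‖ := by
    rw [Complex.normSq_eq_norm_sq,
      show z.im / (‖(g 1 0 : ℂ) * z + g 1 1‖)^2 * z.im
        = (z.im / ‖(g 1 0 : ℂ) * z + g 1 1‖)^2 by ring]
    exact Real.sqrt_sq (by positivity)
  rw [hsq]
  have hquot : ((g 0 0 : ℂ) * z + g 0 1) / ((g 1 0 : ℂ) * z + g 1 1) - z
      = sl2Q g z / ((g 1 0 : ℂ) * z + g 1 1) := by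
    rw [sl2Q, eq_div_iff hD, sub_mul, div_mul_cancel₀ _ hD]
  rw [hquot, norm_div]
  congr 1
  rw [div_eq_div_iff (by positivity) (by positivity)]
  field_simp

/-- The conclusion of the main theorem, as a Prop. -/
def MainConcl (g : Matrix.SpecialLinearGroup (Fin 2) ℝ) : Prop :=
  ∃ c : ℝ → ℍ,
    ((∀ s t : ℝ, 0 ≤ s → 0 ≤ t → c s = c t) ∨
      (∀ s t : ℝ, 0 ≤ s → 0 ≤ t → dist (c s) (c t) = |s - t|)) ∧
    ∃ a > (0 : ℝ), ∃ b > (0 : ℝ), ∀ t : ℝ, 0 ≤ t →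
      dist (g • c t) (c t) ≤ (⨅ z : ℍ, dist (g • z) z) + b * Real.exp (-a * t)

lemma iInf_dist_nonneg (g : Matrix.SpecialLinearGroup (Fin 2) ℝ) :
    0 ≤ ⨅ z : ℍ, dist (g • z) z :=
  Real.iInf_nonneg fun _ => dist_nonneg

lemma helper_min (g : Matrix.SpecialLinearGroup (Fin 2) ℝ) (z₀ : ℍ)
    (h : ∀ z : ℍ, dist (g • z₀) z₀ ≤ dist (g • z) z) : MainConcl g := by
  refine ⟨fun _ => z₀, Or.inl fun _ _ _ _ => rfl, 1, one_pos, 1, one_pos, fun t ht => ?_⟩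
  have h1 : dist (g • z₀) z₀ ≤ ⨅ z : ℍ, dist (g • z) z := le_ciInf h
  have h2 : 0 < 1 * Real.exp (-1 * t) := by positivity
  linarith

lemma min_of_Q (g : Matrix.SpecialLinearGroup (Fin 2) ℝ) (z₀ : ℍ)
    (h : ∀ z : ℍ, ‖sl2Q g z₀‖ / (2 * z₀.im) ≤ ‖sl2Q g z‖ / (2 * z.im)) :
    MainConcl g := by
  refine helper_min g z₀ fun z => ?_
  rw [sl2_dist_smul, sl2_dist_smul]
  have := Real.arsinh_le_arsinh.2 (h z)
  linarith

lemma arsinh_le_self {x : ℝ} (hx : 0 ≤ x) : Real.arsinh x ≤ x := by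
  calc Real.arsinh x ≤ Real.arsinh (Real.sinh x) :=
        Real.arsinh_le_arsinh.2 (Real.self_le_sinh_iff.2 hx)
    _ = x := Real.arsinh_sinh x

lemma helper_ray (g : Matrix.SpecialLinearGroup (Fin 2) ℝ) (c : ℝ → ℍ)
    (hgeo : ∀ s t : ℝ, 0 ≤ s → 0 ≤ t → dist (c s) (c t) = |s - t|)
    (B : ℝ) (hB : 0 < B)
    (h : ∀ t : ℝ, 0 ≤ t → dist (g • c t) (c t) ≤ B * Real.exp (-t)) : MainConcl g := by
  refine ⟨c, Or.inr hgeo, 1, one_pos, B, hB, fun t ht => ?_⟩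
  have h1 := h t ht
  have h2 := iInf_dist_nonneg g
  rw [neg_one_mul]
  linarith

lemma vert_geodesic (r ε : ℝ) (hε : ε = 1 ∨ ε = -1) (s t : ℝ) :
    dist (mk ⟨r, Real.exp (ε * s)⟩ (Real.exp_pos _) : ℍ)
      (mk ⟨r, Real.exp (ε * t)⟩ (Real.exp_pos _)) = |s - t| := by
  rw [UpperHalfPlane.dist_of_re_eq (by rfl)]
  show |Real.log (Real.exp (ε * s)) - Real.log (Real.exp (ε * t))| = _
  simp only [Real.log_exp]
  rw [← mul_sub, abs_mul]
  rcases hε with h | h <;> simp [h]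

lemma sl2_dist_smul_le (g : Matrix.SpecialLinearGroup (Fin 2) ℝ) (z : ℍ) (k : ℝ)
    (h : ‖sl2Q g z‖ ≤ k * z.im) : dist (g • z) z ≤ k := by
  have him := z.im_pos
  have h0 : 0 ≤ k := by nlinarith [norm_nonneg (sl2Q g z)]
  have h1 : ‖sl2Q g z‖ / (2 * z.im) ≤ k / 2 := by
    rw [div_le_div_iff₀ (by positivity) two_pos]
    nlinarith
  rw [sl2_dist_smul]
  calc 2 * Real.arsinh (‖sl2Q g z‖ / (2 * z.im))
      ≤ 2 * Real.arsinh (k / 2) := by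
        have := Real.arsinh_le_arsinh.2 h1; linarith
    _ ≤ 2 * (k / 2) := by
        have := arsinh_le_self (by linarith : (0:ℝ) ≤ k / 2); linarith
    _ = k := by ring

/-- Case c = 0, a = d : vertical translation-like or identity. -/
lemma case_c0_ad (g : Matrix.SpecialLinearGroup (Fin 2) ℝ)
    (hc : g 1 0 = 0) (had : g 0 0 = g 1 1) : MainConcl g := by
  by_cases hb : g 0 1 = 0
  · -- g = ±1, acts trivially
    refine min_of_Q g (mk Complex.I (by simp)) fun z => ?_
    have h0 : sl2Q g (mk Complex.I (by simp)) = 0 := by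
      rw [sl2Q, hc, had, hb]; push_cast; ring
    rw [h0]
    simp only [norm_zero, zero_div]
    positivity
  · -- parabolic fixing ∞
    refine helper_ray g (fun u => mk ⟨0, Real.exp (1 * u)⟩ (Real.exp_pos _))
      (fun s t _ _ => vert_geodesic 0 1 (Or.inl rfl) s t) |g 0 1| (abs_pos.2 hb)
      fun t ht => ?_
    apply sl2_dist_smul_le
    have hQ : sl2Q g (mk ⟨0, Real.exp (1 * t)⟩ (Real.exp_pos _) : ℍ) = ((g 0 1 : ℝ) : ℂ) := by
      rw [sl2Q, hc, had]; push_cast; ring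
    rw [hQ, Complex.norm_real, Real.norm_eq_abs]
    have him : (mk ⟨0, Real.exp (1 * t)⟩ (Real.exp_pos _) : ℍ).im = Real.exp (1 * t) := rfl
    rw [him, mul_assoc, ← Real.exp_add]
    simp

/-- Case c = 0, a ≠ d : hyperbolic fixing ∞. -/
lemma case_c0_hyp (g : Matrix.SpecialLinearGroup (Fin 2) ℝ)
    (hc : g 1 0 = 0) (had : g 0 0 ≠ g 1 1) : MainConcl g := by
  set a := g 0 0 with ha'
  set b := g 0 1 with hb'
  set d := g 1 1 with hd'
  have hda : d - a ≠ 0 := sub_ne_zero.2 (Ne.symm had)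
  set z₀ : ℍ := mk ⟨b / (d - a), 1⟩ one_pos with hz₀'
  refine min_of_Q g z₀ fun z => ?_
  have hz₀ : (z₀ : ℂ) = ((b / (d - a) : ℝ) : ℂ) + (1 : ℝ) * Complex.I :=
    Complex.mk_eq_add_mul_I _ _
  have hQ0 : sl2Q g z₀ = ((a - d : ℝ) : ℂ) * Complex.I := by
    rw [sl2Q, hz₀, hc]
    have hx : (a : ℂ) * (b / (d - a) : ℝ) + b - (b / (d - a) : ℝ) * d = 0 := by
      have : (a : ℝ) * (b / (d - a)) + b - (b / (d - a)) * d = 0 := by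
        field_simp
        ring
      push_cast at this ⊢
      exact_mod_cast this
    push_cast at hx ⊢
    linear_combination hx
  have habs0 : ‖sl2Q g z₀‖ = |a - d| := by
    rw [hQ0, norm_mul, Complex.norm_real, Real.norm_eq_abs, Complex.norm_I, mul_one]
  have him0 : z₀.im = 1 := rfl
  -- lower bound for general z
  have hQim : (sl2Q g z).im = (a - d) * z.im := by
    rw [sl2Q, hc]
    simp [Complex.add_im, Complex.sub_im, Complex.mul_im]
    ring
  have hlow : |a - d| * z.im ≤ ‖sl2Q g z‖ := by
    calc |a - d| * z.im = |(a - d) * z.im| := by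
          rw [abs_mul, abs_of_pos z.im_pos]
      _ = |(sl2Q g z).im| := by rw [hQim]
      _ ≤ ‖sl2Q g z‖ := Complex.abs_im_le_norm _
  rw [habs0, him0]
  rw [div_le_div_iff₀ (by norm_num) (by positivity)]
  nlinarith [z.im_pos]

/-- Case c ≠ 0, trace² < 4 : elliptic, has a fixed point. -/
lemma case_elliptic (g : Matrix.SpecialLinearGroup (Fin 2) ℝ)
    (hc : g 1 0 ≠ 0) (hΔ : (g 0 0 + g 1 1) ^ 2 - 4 < 0) : MainConcl g := by
  set a := g 0 0
  set b := g 0 1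
  set c := g 1 0
  set d := g 1 1
  set x₀ : ℝ := (a - d) / (2 * c) with hx₀'
  set y₀ : ℝ := Real.sqrt (4 - (a + d) ^ 2) / (2 * |c|) with hy₀'
  have hcabs : 0 < |c| := abs_pos.2 hc
  have hy₀pos : 0 < y₀ := div_pos (Real.sqrt_pos.2 (by linarith)) (by linarith)
  set z₀ : ℍ := mk ⟨x₀, y₀⟩ hy₀pos with hz₀'
  refine min_of_Q g z₀ fun z => ?_
  have hz₀ : (z₀ : ℂ) = (x₀ : ℝ) + (y₀ : ℝ) * Complex.I := Complex.mk_eq_add_mul_I _ _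
  have h1r : 2 * c * x₀ = a - d := by rw [hx₀']; field_simp
  have h2r : 4 * c ^ 2 * y₀ ^ 2 = 4 - (a + d) ^ 2 := by
    rw [hy₀', div_pow, mul_pow, sq_abs, Real.sq_sqrt (by linarith)]
    field_simp
    ring
  have hdet := sl2_det g
  have h1c : 2 * (c : ℂ) * (x₀ : ℂ) = (a : ℂ) - d := by exact_mod_cast congrArg Complex.ofReal h1r
  have h2c : 4 * (c : ℂ) ^ 2 * (y₀ : ℂ) ^ 2 = 4 - ((a : ℂ) + d) ^ 2 := by
    exact_mod_cast congrArg Complex.ofReal h2r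
  have h3c : (a : ℂ) * d - b * c = 1 := by exact_mod_cast congrArg Complex.ofReal hdet
  have hQ4 : (4 * (c : ℂ)) * sl2Q g z₀ = 0 := by
    rw [sl2Q, hz₀]
    linear_combination (((a : ℂ) - d) - 2 * c * x₀ - 4 * c * Complex.I * y₀) * h1c
      + (-Complex.I ^ 2) * h2c + (-4 : ℂ) * h3c
      + (-(4 - ((a : ℂ) + d) ^ 2)) * Complex.I_sq
  have hQ0 : sl2Q g z₀ = 0 := by
    have h4c : (4 * (c : ℂ)) ≠ 0 := by
      simp only [ne_eq, mul_eq_zero]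
      push_neg
      exact ⟨by norm_num, by exact_mod_cast hc⟩
    exact (mul_eq_zero.1 hQ4).resolve_left h4c
  rw [hQ0]
  simp only [norm_zero, zero_div]
  positivity

/-- Case c ≠ 0, trace² = 4 : parabolic. -/
lemma case_parabolic (g : Matrix.SpecialLinearGroup (Fin 2) ℝ)
    (hc : g 1 0 ≠ 0) (hΔ : (g 0 0 + g 1 1) ^ 2 - 4 = 0) : MainConcl g := by
  set a := g 0 0
  set b := g 0 1
  set c := g 1 0
  set d := g 1 1
  set x₀ : ℝ := (a - d) / (2 * c) with hx₀'
  have hcabs : 0 < |c| := abs_pos.2 hc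
  refine helper_ray g (fun u => mk ⟨x₀, Real.exp (-1 * u)⟩ (Real.exp_pos _))
    (fun s t _ _ => vert_geodesic x₀ (-1) (Or.inr rfl) s t) |c| hcabs fun t ht => ?_
  apply sl2_dist_smul_le
  set Y : ℝ := Real.exp (-1 * t) with hY'
  have hz : ((mk ⟨x₀, Y⟩ (Real.exp_pos _) : ℍ) : ℂ) = (x₀ : ℝ) + (Y : ℝ) * Complex.I :=
    Complex.mk_eq_add_mul_I _ _
  have h1r : 2 * c * x₀ = a - d := by rw [hx₀']; field_simp
  have hdet := sl2_det g
  have h1c : 2 * (c : ℂ) * (x₀ : ℂ) = (a : ℂ) - d := by exact_mod_cast congrArg Complex.ofReal h1r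
  have h2c : ((a : ℂ) + d) ^ 2 = 4 := by
    have : (a + d) ^ 2 = 4 := by linarith
    exact_mod_cast congrArg Complex.ofReal this
  have h3c : (a : ℂ) * d - b * c = 1 := by exact_mod_cast congrArg Complex.ofReal hdet
  have hQ4 : (4 * (c : ℂ)) * sl2Q g (mk ⟨x₀, Y⟩ (Real.exp_pos _) : ℍ)
      = 4 * (c : ℂ) ^ 2 * (Y : ℂ) ^ 2 := by
    rw [sl2Q, hz]
    linear_combination (((a : ℂ) - d) - 2 * c * x₀ - 4 * c * Complex.I * Y) * h1c
      + (-4 * (c : ℂ) ^ 2 * (Y : ℂ) ^ 2) * Complex.I_sq + h2c + (-4 : ℂ) * h3c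
  have hQ : sl2Q g (mk ⟨x₀, Y⟩ (Real.exp_pos _) : ℍ) = ((c * Y ^ 2 : ℝ) : ℂ) := by
    have h4c : (4 * (c : ℂ)) ≠ 0 := by
      simp only [ne_eq, mul_eq_zero]
      push_neg
      exact ⟨by norm_num, by exact_mod_cast hc⟩
    apply mul_left_cancel₀ h4c
    rw [hQ4]; push_cast; ring
  rw [hQ, Complex.norm_real, Real.norm_eq_abs]
  have him : (mk ⟨x₀, Y⟩ (Real.exp_pos _) : ℍ).im = Y := rfl
  rw [him, abs_mul, abs_of_nonneg (sq_nonneg Y)]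
  have : |c| * Y ^ 2 = |c| * Real.exp (-t) * Y := by
    rw [hY']
    rw [show (-1 : ℝ) * t = -t by ring]
    ring
  rw [this]

/-- Case c ≠ 0, trace² > 4 : hyperbolic, min attained on the axis. -/
lemma case_hyperbolic (g : Matrix.SpecialLinearGroup (Fin 2) ℝ)
    (hc : g 1 0 ≠ 0) (hΔ : 0 < (g 0 0 + g 1 1) ^ 2 - 4) : MainConcl g := by
  set a := g 0 0
  set b := g 0 1
  set c := g 1 0
  set d := g 1 1
  set x₀ : ℝ := (a - d) / (2 * c) with hx₀'
  set R : ℝ := Real.sqrt ((a + d) ^ 2 - 4) / (2 * |c|) with hR'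
  have hcabs : 0 < |c| := abs_pos.2 hc
  have hRpos : 0 < R := div_pos (Real.sqrt_pos.2 (by linarith)) (by linarith)
  set z₀ : ℍ := mk ⟨x₀, R⟩ hRpos with hz₀'
  have hdet := sl2_det g
  have h1r : 2 * c * x₀ = a - d := by rw [hx₀']; field_simp
  have hR2 : 4 * c ^ 2 * R ^ 2 = (a + d) ^ 2 - 4 := by
    rw [hR', div_pow, mul_pow, sq_abs, Real.sq_sqrt (by linarith)]
    field_simp
    ring
  have h1c : 2 * (c : ℂ) * (x₀ : ℂ) = (a : ℂ) - d := by exact_mod_cast congrArg Complex.ofReal h1r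
  have h2c : 4 * (c : ℂ) ^ 2 * (R : ℂ) ^ 2 = ((a : ℂ) + d) ^ 2 - 4 := by
    exact_mod_cast congrArg Complex.ofReal hR2
  have h3c : (a : ℂ) * d - b * c = 1 := by exact_mod_cast congrArg Complex.ofReal hdet
  have h4c : (4 * (c : ℂ)) ≠ 0 := by
    simp only [ne_eq, mul_eq_zero]
    push_neg
    exact ⟨by norm_num, by exact_mod_cast hc⟩
  -- factorization of Q
  have hfac : ∀ w : ℂ, sl2Q g w
      = -(c : ℂ) * (w - ((x₀ - R : ℝ) : ℂ)) * (w - ((x₀ + R : ℝ) : ℂ)) := by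
    intro w
    apply mul_left_cancel₀ h4c
    rw [sl2Q]
    push_cast
    linear_combination (-4 * (c : ℂ) * w + 2 * c * x₀ + ((a : ℂ) - d)) * h1c
      + (-1 : ℂ) * h2c + (-4 : ℂ) * h3c
  -- value at z₀
  have hz₀c : (z₀ : ℂ) = (x₀ : ℝ) + (R : ℝ) * Complex.I := Complex.mk_eq_add_mul_I _ _
  have hQz₀ : sl2Q g z₀ = ((2 * c * R ^ 2 : ℝ) : ℂ) := by
    rw [hfac, hz₀c]
    push_cast
    linear_combination (-(c : ℂ) * (R : ℂ) ^ 2) * Complex.I_sq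
  have habs₀ : ‖sl2Q g z₀‖ = 2 * |c| * R ^ 2 := by
    rw [hQz₀, Complex.norm_real, Real.norm_eq_abs, abs_mul, abs_mul, abs_of_nonneg (sq_nonneg R)]
    norm_num
  have him₀ : z₀.im = R := rfl
  refine min_of_Q g z₀ fun z => ?_
  -- lower bound for general z
  have hlow : 2 * |c| * R * z.im ≤ ‖sl2Q g z‖ := by
    rw [hfac]
    set w₁ : ℂ := (z : ℂ) - ((x₀ - R : ℝ) : ℂ)
    set w₂ : ℂ := (z : ℂ) - ((x₀ + R : ℝ) : ℂ)
    have hkey : 2 * R * z.im ≤ ‖w₁‖ * ‖w₂‖ := by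
      have him : (w₁ * (starRingEnd ℂ) w₂).im = -(2 * R * z.im) := by
        simp only [w₁, w₂, Complex.mul_im, Complex.conj_re, Complex.conj_im, Complex.sub_re,
          Complex.sub_im, Complex.ofReal_re, Complex.ofReal_im, UpperHalfPlane.coe_re,
          UpperHalfPlane.coe_im]
        ring
      calc 2 * R * z.im = |(w₁ * (starRingEnd ℂ) w₂).im| := by
            rw [him, abs_neg, abs_of_nonneg (by positivity)]
        _ ≤ ‖w₁ * (starRingEnd ℂ) w₂‖ := Complex.abs_im_le_norm _
        _ = ‖w₁‖ * ‖w₂‖ := by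
            rw [norm_mul, Complex.norm_conj]
    calc 2 * |c| * R * z.im = |c| * (2 * R * z.im) := by ring
      _ ≤ |c| * (‖w₁‖ * ‖w₂‖) := by
          exact mul_le_mul_of_nonneg_left hkey (le_of_lt hcabs)
      _ = ‖-(c : ℂ) * w₁ * w₂‖ := by
          rw [norm_mul, norm_mul, norm_neg, Complex.norm_real, Real.norm_eq_abs, mul_assoc]
  rw [habs₀, him₀, div_le_div_iff₀ (by positivity) (by positivity)]
  nlinarith [z.im_pos]

end

/-- **Exponential decay to the translation length on the hyperbolic plane.** For every
`g ∈ SL(2,ℝ)` acting on the upper half-plane `ℍ` by Möbius transformations, there exist a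
path `c : [0,∞) → ℍ`, either constant or a unit-speed geodesic ray for the hyperbolic
metric, and constants `a, b > 0`, such that
`dist (g • c(t)) (c(t)) ≤ Δ_g + b e^{-a t}` for all `t ≥ 0`, where
`Δ_g = ⨅ z, dist (g • z) z` is the translation length of `g`. -/
theorem sl2_exponential_decay_to_translation_length
    (g : Matrix.SpecialLinearGroup (Fin 2) ℝ) :
    ∃ c : ℝ → ℍ,
      ((∀ s t : ℝ, 0 ≤ s → 0 ≤ t → c s = c t) ∨
        (∀ s t : ℝ, 0 ≤ s → 0 ≤ t → dist (c s) (c t) = |s - t|)) ∧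
      ∃ a > (0 : ℝ), ∃ b > (0 : ℝ), ∀ t : ℝ, 0 ≤ t →
        dist (g • c t) (c t) ≤ (⨅ z : ℍ, dist (g • z) z) + b * Real.exp (-a * t) := by
  have h : MainConcl g := by
    by_cases hc : (g 1 0 : ℝ) = 0
    · by_cases had : (g 0 0 : ℝ) = g 1 1
      · exact case_c0_ad g hc had
      · exact case_c0_hyp g hc had
    · rcases lt_trichotomy ((g 0 0 + g 1 1 : ℝ) ^ 2 - 4) 0 with h | h | h
      · exact case_elliptic g hc h
      · exact case_parabolic g hc h
      · exact case_hyperbolic g hc h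
  exact h
end

section
/- Let g₁, g₂ ∈ SL(2,ℝ) be commuting elements, i.e. g₁g₂ = g₂g₁, acting on the hyperbolic upper half-plane ℍ. Then there exist a single path c : [0,∞) → ℍ which is either constant or satisfies dist(c(s), c(t)) = |s − t| for all s, t ≥ 0 (a unit-speed geodesic ray for the hyperbolic metric), and constants a, b > 0, such that for m = 1, 2 and all t ≥ 0, dist(g_m • c(t), c(t)) ≤ Δ_{g_m} + b e^{−a t}. That is, every pair of commuting elements of SL(2,ℝ) has exponential decay to their translation lengths along a common ray. -/
open UpperHalfPlane Real

namespace Sl2DecayAux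

/-- Normalized displacement quantity: `|C z² + B z + A| / (2 Im z)`. -/
noncomputable def qa (C B A : ℝ) (z : ℍ) : ℝ :=
  ‖(C:ℂ) * (z:ℂ)^2 + (B:ℂ) * (z:ℂ) + (A:ℂ)‖ / (2 * z.im)

lemma qa_nonneg (C B A : ℝ) (z : ℍ) : 0 ≤ qa C B A z := by
  have := z.im_pos
  unfold qa
  positivity

lemma qa_smul (α C B A : ℝ) (z : ℍ) :
    qa (α*C) (α*B) (α*A) z = |α| * qa C B A z := by
  unfold qa
  rw [show ((α*C:ℝ):ℂ) * (z:ℂ)^2 + ((α*B:ℝ):ℂ) * (z:ℂ) + ((α*A:ℝ):ℂ)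
      = (α:ℂ) * ((C:ℂ) * (z:ℂ)^2 + (B:ℂ) * (z:ℂ) + (A:ℂ)) by push_cast; ring,
    norm_mul, Complex.norm_real, Real.norm_eq_abs]
  ring

/-- The key algebraic identity for `|C z² + B z + A|²`. -/
lemma qa_sq_identity (C B A : ℝ) (z : ℍ) :
    (‖(C:ℂ) * (z:ℂ)^2 + (B:ℂ) * (z:ℂ) + (A:ℂ)‖)^2
      = (B^2 - 4*A*C) * z.im^2 + (C*(z.re^2 + z.im^2) + B*z.re + A)^2 := by
  rw [Complex.sq_norm, Complex.normSq_apply]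
  simp only [pow_two, Complex.add_re, Complex.add_im, Complex.mul_re, Complex.mul_im,
    Complex.ofReal_re, Complex.ofReal_im, coe_re, coe_im]
  ring

/-- Displacement formula for the SL(2,ℝ)-action on ℍ. -/
lemma disp_eq (g : Matrix.SpecialLinearGroup (Fin 2) ℝ) (z : ℍ) :
    dist (g • z) z = 2 * Real.arsinh (qa (g 1 0) (g 1 1 - g 0 0) (-(g 0 1)) z) := by
  set a : ℝ := g 0 0 with ha
  set b : ℝ := g 0 1 with hb
  set c : ℝ := g 1 0 with hc
  set d : ℝ := g 1 1 with hd
  have hdet : a * d - b * c = 1 := by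
    have := g.2; rw [Matrix.det_fin_two] at this; exact this
  have hy : (0:ℝ) < z.im := z.im_pos
  have hden : (c:ℂ) * z + d ≠ 0 := by
    intro h
    have him : ((c:ℂ) * z + d).im = 0 := by rw [h]; rfl
    have hre : ((c:ℂ) * z + d).re = 0 := by rw [h]; rfl
    simp only [Complex.add_im, Complex.mul_im, Complex.ofReal_re, Complex.ofReal_im,
      Complex.add_re, Complex.mul_re, coe_im, coe_re] at him hre
    have hc0 : c = 0 := by
      rcases mul_eq_zero.1 (by linarith : c * z.im = 0) with h' | h'
      · exact h'
      · exact absurd h' (ne_of_gt hy)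
    have hd0 : d = 0 := by rw [hc0] at hre; linarith [hre]
    rw [hc0, hd0] at hdet; simp at hdet
  have hcoe : ((g • z : ℍ) : ℂ) = ((a:ℂ) * z + b) / ((c:ℂ) * z + d) := by
    rw [specialLinearGroup_apply, coe_mk]
    norm_num
    rfl
  have him : ((g • z : ℍ) : ℂ).im = z.im / Complex.normSq ((c:ℂ)*z + d) := by
    rw [hcoe, Complex.div_im]
    simp only [Complex.add_re, Complex.add_im, Complex.mul_re, Complex.mul_im,
      Complex.ofReal_re, Complex.ofReal_im, coe_re, coe_im]
    field_simp
    ring_nf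
    linear_combination (z.im * (Complex.normSq ((c:ℂ) * ↑z + ↑d))⁻¹) * hdet
  have him' : (g • z).im = z.im / Complex.normSq ((c:ℂ)*z + d) := by
    rw [← coe_im]; exact him
  rw [UpperHalfPlane.dist_eq]
  congr 1
  have hsub : ((g • z : ℍ):ℂ) - z = -((c:ℂ) * (z:ℂ)^2 + ((d:ℂ) - a) * z - b) / ((c:ℂ)*z + d) := by
    rw [hcoe, eq_div_iff hden, sub_mul, div_mul_cancel₀ _ hden]; ring
  have habs : dist ((g • z : ℍ):ℂ) (z:ℂ)
      = ‖(c:ℂ)*(z:ℂ)^2 + ((d:ℂ)-a)*(z:ℂ) - b‖ / ‖(c:ℂ)*z+d‖ := by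
    rw [Complex.dist_eq, hsub, norm_div, norm_neg]
  have hsqrt : √((g • z).im * z.im) = z.im / ‖(c:ℂ)*z+d‖ := by
    rw [him', ← Complex.sq_norm]
    have hA : 0 < ‖(c:ℂ)*z+d‖ := norm_pos_iff.mpr hden
    rw [show z.im / ‖(c:ℂ)*z+d‖ ^ 2 * z.im = (z.im / ‖(c:ℂ)*z+d‖)^2 by
      field_simp]
    exact Real.sqrt_sq (by positivity)
  rw [habs, hsqrt]
  have hA : 0 < ‖(c:ℂ)*z+d‖ := norm_pos_iff.mpr hden
  have hargs : ((c:ℂ)*(z:ℂ)^2 + ((d:ℂ)-a)*(z:ℂ) - b)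
      = ((c:ℂ) * (z:ℂ)^2 + ((d - a:ℝ):ℂ) * (z:ℂ) + ((-b:ℝ):ℂ)) := by
    push_cast; ring
  rw [hargs]
  unfold qa
  field_simp

/-- A point of ℍ with given real part and positive imaginary part. -/
noncomputable def pt (x y : ℝ) (hy : 0 < y) : ℍ :=
  mk ((x:ℂ) + (y:ℂ) * Complex.I) (by simp [hy])

@[simp] lemma pt_re (x y : ℝ) (hy : 0 < y) : (pt x y hy).re = x := by
  simp [pt, UpperHalfPlane.re]

@[simp] lemma pt_im (x y : ℝ) (hy : 0 < y) : (pt x y hy).im = y := by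
  simp [pt, UpperHalfPlane.im]

@[simp] lemma pt_coe (x y : ℝ) (hy : 0 < y) : ((pt x y hy : ℍ) : ℂ) = (x:ℂ) + (y:ℂ) * Complex.I :=
  rfl

/-- A vertical unit-speed geodesic. -/
noncomputable def vpt (x s : ℝ) : ℍ := pt x (Real.exp s) (Real.exp_pos s)

lemma vpt_dist (x : ℝ) (s t : ℝ) : dist (vpt x s) (vpt x t) = |s - t| := by
  rw [UpperHalfPlane.dist_of_re_eq (by simp [vpt])]
  simp [vpt, Real.dist_eq]

lemma qa_eq_sqrt (C B A : ℝ) (z : ℍ) :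
    qa C B A z = Real.sqrt ((B^2 - 4*A*C) * z.im^2
      + (C*(z.re^2 + z.im^2) + B*z.re + A)^2) / (2 * z.im) := by
  unfold qa
  congr 1
  rw [← qa_sq_identity]
  exact (Real.sqrt_sq (by positivity)).symm

lemma qa_lower (C B A : ℝ) (hD : 0 ≤ B^2 - 4*A*C) (z : ℍ) :
    Real.sqrt (B^2 - 4*A*C) / 2 ≤ qa C B A z := by
  have hy := z.im_pos
  rw [qa_eq_sqrt, div_le_div_iff₀ (by norm_num) (by positivity)]
  have h1 : Real.sqrt ((B^2-4*A*C) * z.im^2) ≤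
      Real.sqrt ((B^2 - 4*A*C) * z.im^2 + (C*(z.re^2 + z.im^2) + B*z.re + A)^2) :=
    Real.sqrt_le_sqrt (by nlinarith [sq_nonneg (C*(z.re^2 + z.im^2) + B*z.re + A)])
  rw [Real.sqrt_mul hD, Real.sqrt_sq hy.le] at h1
  nlinarith [Real.sqrt_nonneg (B^2-4*A*C)]

lemma core (C B A : ℝ) :
    (∃ z₀ : ℍ, ∀ z : ℍ, qa C B A z₀ ≤ qa C B A z) ∨
    (∃ x₀ ε : ℝ, |ε| = 1 ∧ ∃ K : ℝ, 0 < K ∧ ∀ t : ℝ, qa C B A (vpt x₀ (ε * t)) = K * Real.exp (-t)) := by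
  by_cases hC : C = 0
  · subst hC
    by_cases hB : B = 0
    · subst hB
      by_cases hA : A = 0
      · subst hA
        left
        refine ⟨vpt 0 0, fun z => ?_⟩
        have h0 : qa 0 0 0 (vpt 0 0) = 0 := by unfold qa; simp
        rw [h0]; exact qa_nonneg _ _ _ _
      · right
        refine ⟨0, 1, by norm_num, |A|/2, by positivity, fun t => ?_⟩
        unfold qa
        simp only [Complex.ofReal_zero, zero_mul, zero_add, Complex.norm_real, Real.norm_eq_abs]
        rw [show (vpt 0 (1*t)).im = Real.exp t by simp [vpt], Real.exp_neg]
        field_simp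
    · -- C = 0, B ≠ 0 : minimum at x₀ = -A/B, y = 1
      left
      refine ⟨pt (-A/B) 1 one_pos, fun z => ?_⟩
      have hBc : (B:ℂ) ≠ 0 := by exact_mod_cast hB
      have hval : qa 0 B A (pt (-A/B) 1 one_pos) = |B| / 2 := by
        rw [qa_eq_sqrt, pt_re, pt_im]
        rw [show (0:ℝ)*((-A/B)^2+1^2) + B*(-A/B) + A = 0 by field_simp; ring]
        rw [show (B^2 - 4*A*0) * (1:ℝ)^2 + 0^2 = B^2 by ring, Real.sqrt_sq_eq_abs]
        norm_num
      rw [hval]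
      have hy := z.im_pos
      have hlow : |B| * z.im ≤ ‖((0:ℝ):ℂ) * (z:ℂ)^2 + (B:ℂ) * (z:ℂ) + (A:ℂ)‖ := by
        have h1 := Complex.abs_im_le_norm (((0:ℝ):ℂ) * (z:ℂ)^2 + (B:ℂ) * (z:ℂ) + (A:ℂ))
        have h2 : (((0:ℝ):ℂ) * (z:ℂ)^2 + (B:ℂ) * (z:ℂ) + (A:ℂ)).im = B * z.im := by
          simp [Complex.add_im, Complex.mul_im]
        rw [h2, abs_mul, abs_of_pos hy] at h1
        exact h1
      unfold qa
      rw [div_le_div_iff₀ (by norm_num) (by positivity)]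
      nlinarith
  · -- C ≠ 0
    have hC2 : (2*|C|) ≠ 0 := by positivity
    have hm : C*(-B/(2*C))^2 + B*(-B/(2*C)) + A = (4*A*C - B^2)/(4*C) := by
      field_simp; ring
    rcases lt_trichotomy (B^2 - 4*A*C) 0 with hD | hD | hD
    · -- elliptic
      left
      have hsd : (0:ℝ) < Real.sqrt (-(B^2-4*A*C)) := Real.sqrt_pos.2 (by linarith)
      have hh : (0:ℝ) < Real.sqrt (-(B^2-4*A*C)) / (2*|C|) := by positivity
      refine ⟨pt (-B/(2*C)) _ hh, fun z => ?_⟩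
      have hh2 : (Real.sqrt (-(B^2-4*A*C)) / (2*|C|))^2 = (4*A*C - B^2)/(4*C^2) := by
        rw [div_pow, Real.sq_sqrt (by linarith), mul_pow, sq_abs]
        ring_nf
      have hval : qa C B A (pt (-B/(2*C)) _ hh) = 0 := by
        rw [qa_eq_sqrt, pt_re, pt_im]
        rw [show C*((-B/(2*C))^2 + (Real.sqrt (-(B^2-4*A*C)) / (2*|C|))^2)
              + B*(-B/(2*C)) + A
            = (C*(-B/(2*C))^2 + B*(-B/(2*C)) + A)
              + C * (Real.sqrt (-(B^2-4*A*C)) / (2*|C|))^2 by ring, hm, hh2]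
        rw [show (B^2-4*A*C) * ((4*A*C - B^2)/(4*C^2))
            + ((4*A*C - B^2)/(4*C) + C * ((4*A*C - B^2)/(4*C^2)))^2 = 0 by field_simp; ring]
        simp
      rw [hval]; exact qa_nonneg _ _ _ _
    · -- parabolic, C ≠ 0 : ray downward
      right
      refine ⟨-B/(2*C), -1, by norm_num, |C|/2, by positivity, fun t => ?_⟩
      rw [qa_eq_sqrt]
      have him : (vpt (-B/(2*C)) (-1*t)).im = Real.exp (-t) := by simp [vpt]
      have hre : (vpt (-B/(2*C)) (-1*t)).re = -B/(2*C) := by simp [vpt]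
      rw [him, hre]
      have hm0 : C*(-B/(2*C))^2 + B*(-B/(2*C)) + A = 0 := by
        rw [hm, show (4*A*C - B^2) = 0 by linarith]
        simp
      have hterm : C*((-B/(2*C))^2 + Real.exp (-t)^2) + B*(-B/(2*C)) + A
          = C * Real.exp (-t)^2 := by nlinarith [hm0]
      rw [show (B^2-4*A*C) * Real.exp (-t)^2
          + (C*((-B/(2*C))^2 + Real.exp (-t)^2) + B*(-B/(2*C)) + A)^2
          = (C * Real.exp (-t)^2)^2 by rw [hterm, hD]; ring]
      rw [Real.sqrt_sq_eq_abs, abs_mul, abs_of_nonneg (by positivity : (0:ℝ) ≤ Real.exp (-t)^2)]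
      have := Real.exp_pos (-t)
      field_simp
    · -- hyperbolic
      left
      have hsD : (0:ℝ) < Real.sqrt (B^2-4*A*C) := Real.sqrt_pos.2 hD
      have hh : (0:ℝ) < Real.sqrt (B^2-4*A*C) / (2*|C|) := by positivity
      refine ⟨pt (-B/(2*C)) _ hh, fun z => ?_⟩
      have hh2 : (Real.sqrt (B^2-4*A*C) / (2*|C|))^2 = (B^2 - 4*A*C)/(4*C^2) := by
        rw [div_pow, Real.sq_sqrt hD.le, mul_pow, sq_abs]
        ring_nf
      have hval : qa C B A (pt (-B/(2*C)) _ hh) = Real.sqrt (B^2-4*A*C) / 2 := by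
        rw [qa_eq_sqrt, pt_re, pt_im]
        have hterm : C*((-B/(2*C))^2 + (Real.sqrt (B^2-4*A*C) / (2*|C|))^2)
              + B*(-B/(2*C)) + A = 0 := by
          rw [show C*((-B/(2*C))^2 + (Real.sqrt (B^2-4*A*C) / (2*|C|))^2)
              + B*(-B/(2*C)) + A
              = (C*(-B/(2*C))^2 + B*(-B/(2*C)) + A)
                + C * (Real.sqrt (B^2-4*A*C) / (2*|C|))^2 by ring, hm, hh2]
          field_simp
          ring
        rw [hterm]
        rw [show (B^2-4*A*C) * (Real.sqrt (B^2-4*A*C) / (2*|C|))^2 + 0^2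
            = (Real.sqrt (B^2-4*A*C) * (Real.sqrt (B^2-4*A*C) / (2*|C|)))^2 by
          rw [mul_pow, Real.sq_sqrt hD.le]; ring]
        rw [Real.sqrt_sq (by positivity)]
        rw [mul_div_mul_right _ _ (ne_of_gt hh)]
      rw [hval]
      exact qa_lower C B A hD.le z

lemma centralizer (g₁ g₂ : Matrix.SpecialLinearGroup (Fin 2) ℝ) (hcomm : g₁ * g₂ = g₂ * g₁)
    (hns : ¬((g₁ 1 0 : ℝ) = 0 ∧ (g₁ 0 1 : ℝ) = 0 ∧ (g₁ 1 1 : ℝ) - g₁ 0 0 = 0)) :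
    ∃ α : ℝ, (g₂ 1 0 : ℝ) = α * g₁ 1 0 ∧ (g₂ 1 1 : ℝ) - g₂ 0 0 = α * ((g₁ 1 1 : ℝ) - g₁ 0 0)
      ∧ (g₂ 0 1 : ℝ) = α * g₁ 0 1 := by
  set a : ℝ := g₁ 0 0
  set b : ℝ := g₁ 0 1
  set c : ℝ := g₁ 1 0
  set d : ℝ := g₁ 1 1
  set p : ℝ := g₂ 0 0
  set q : ℝ := g₂ 0 1
  set r : ℝ := g₂ 1 0
  set s : ℝ := g₂ 1 1
  have H : (g₁ * g₂ : Matrix (Fin 2) (Fin 2) ℝ) = (g₂ * g₁ : Matrix (Fin 2) (Fin 2) ℝ) := by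
    exact_mod_cast congr_arg (Subtype.val) hcomm
  have e00 : a * p + b * r = p * a + q * c := by
    have := congr_fun (congr_fun H 0) 0
    simpa [Matrix.mul_apply, Fin.sum_univ_two] using this
  have e01 : a * q + b * s = p * b + q * d := by
    have := congr_fun (congr_fun H 0) 1
    simpa [Matrix.mul_apply, Fin.sum_univ_two] using this
  have e10 : c * p + d * r = r * a + s * c := by
    have := congr_fun (congr_fun H 1) 0
    simpa [Matrix.mul_apply, Fin.sum_univ_two] using this
  by_cases hb : b ≠ 0
  · refine ⟨q / b, ?_, ?_, ?_⟩
    · field_simp; linarith [e00]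
    · field_simp; linarith [e01]
    · field_simp
  by_cases hc : c ≠ 0
  · refine ⟨r / c, ?_, ?_, ?_⟩
    · field_simp
    · field_simp; linarith [e10]
    · field_simp; linarith [e00]
  push_neg at hb hc
  have had : d - a ≠ 0 := by
    intro h; exact hns ⟨hc, hb, h⟩
  refine ⟨(s - p) / (d - a), ?_, ?_, ?_⟩
  · have : r * (d - a) = 0 := by rw [hc] at e10; linear_combination e10
    have hr : r = 0 := by
      rcases mul_eq_zero.1 this with h | h
      · exact h
      · exact absurd h had
    rw [hr, hc]; ring
  · field_simp
  · have : q * (d - a) = 0 := by rw [hb] at e01; linear_combination -e01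
    have hq : q = 0 := by
      rcases mul_eq_zero.1 this with h | h
      · exact h
      · exact absurd h had
    rw [hq, hb]; ring

lemma arsinh_le_self {u : ℝ} (hu : 0 ≤ u) : Real.arsinh u ≤ u := by
  calc Real.arsinh u ≤ Real.arsinh (Real.sinh u) :=
        Real.arsinh_le_arsinh.2 (Real.self_le_sinh_iff.2 hu)
    _ = u := Real.arsinh_sinh u

lemma pair_aux (g₁ g₂ : Matrix.SpecialLinearGroup (Fin 2) ℝ)
    (α : ℝ)
    (h10 : (g₂ 1 0 : ℝ) = α * g₁ 1 0)
    (hda : (g₂ 1 1 : ℝ) - g₂ 0 0 = α * ((g₁ 1 1 : ℝ) - g₁ 0 0))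
    (h01 : (g₂ 0 1 : ℝ) = α * g₁ 0 1) :
    ∃ c : ℝ → ℍ,
      ((∀ s t : ℝ, 0 ≤ s → 0 ≤ t → c s = c t) ∨
        (∀ s t : ℝ, 0 ≤ s → 0 ≤ t → dist (c s) (c t) = |s - t|)) ∧
      ∃ a > (0 : ℝ), ∃ b > (0 : ℝ), ∀ t : ℝ, 0 ≤ t →
        dist (g₁ • c t) (c t) ≤ (⨅ z : ℍ, dist (g₁ • z) z) + b * Real.exp (-a * t) ∧
        dist (g₂ • c t) (c t) ≤ (⨅ z : ℍ, dist (g₂ • z) z) + b * Real.exp (-a * t) := by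
  have hq2 : ∀ z : ℍ, qa (g₂ 1 0) ((g₂ 1 1 : ℝ) - g₂ 0 0) (-(g₂ 0 1)) z
      = |α| * qa (g₁ 1 0) ((g₁ 1 1 : ℝ) - g₁ 0 0) (-(g₁ 0 1)) z := by
    intro z
    rw [h10, hda, show -(g₂ 0 1 : ℝ) = α * (-(g₁ 0 1)) by rw [h01]; ring, qa_smul]
  rcases core (g₁ 1 0) ((g₁ 1 1 : ℝ) - g₁ 0 0) (-(g₁ 0 1)) with
    ⟨z₀, hz₀⟩ | ⟨x₀, ε, hε, K, hK, hQ⟩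
  · -- constant path at the minimizer
    refine ⟨fun _ => z₀, Or.inl fun _ _ _ _ => rfl, 1, one_pos, 1, one_pos, fun t ht => ?_⟩
    have hexp : (0:ℝ) < 1 * Real.exp (-1 * t) := by positivity
    constructor
    · have h1 : dist (g₁ • z₀) z₀ ≤ ⨅ z : ℍ, dist (g₁ • z) z := by
        apply le_ciInf
        intro z
        rw [disp_eq, disp_eq]
        exact mul_le_mul_of_nonneg_left (Real.arsinh_le_arsinh.2 (hz₀ z)) (by norm_num)
      linarith
    · have h1 : dist (g₂ • z₀) z₀ ≤ ⨅ z : ℍ, dist (g₂ • z) z := by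
        apply le_ciInf
        intro z
        rw [disp_eq, disp_eq, hq2, hq2]
        have := mul_le_mul_of_nonneg_left (hz₀ z) (abs_nonneg α)
        exact mul_le_mul_of_nonneg_left (Real.arsinh_le_arsinh.2 this) (by norm_num)
      linarith
  · -- ray
    refine ⟨fun t => vpt x₀ (ε * t), Or.inr fun s t _ _ => ?_, 1, one_pos,
      2*K*(1+|α|)+1, by positivity, fun t ht => ?_⟩
    · rw [vpt_dist, show ε*s - ε*t = ε*(s-t) by ring, abs_mul, hε, one_mul]
    · have hInf1 : (0:ℝ) ≤ ⨅ z : ℍ, dist (g₁ • z) z := Real.iInf_nonneg fun z => dist_nonneg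
      have hInf2 : (0:ℝ) ≤ ⨅ z : ℍ, dist (g₂ • z) z := Real.iInf_nonneg fun z => dist_nonneg
      have hexp : (0:ℝ) < Real.exp (-t) := Real.exp_pos _
      have hexp' : Real.exp (-1 * t) = Real.exp (-t) := by norm_num
      have habs : (0:ℝ) ≤ |α| := abs_nonneg α
      constructor
      · rw [disp_eq, hQ t]
        have h2 : Real.arsinh (K * Real.exp (-t)) ≤ K * Real.exp (-t) :=
          arsinh_le_self (by positivity)
        rw [hexp']
        nlinarith [mul_nonneg (mul_nonneg hK.le habs) hexp.le, mul_pos hK hexp]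
      · rw [disp_eq, hq2, hQ t]
        have h2 : Real.arsinh (|α| * (K * Real.exp (-t))) ≤ |α| * (K * Real.exp (-t)) :=
          arsinh_le_self (by positivity)
        rw [hexp']
        nlinarith [mul_nonneg (mul_nonneg hK.le habs) hexp.le, mul_pos hK hexp]

end Sl2DecayAux

open UpperHalfPlane

/-- **Exponential decay of a commuting pair of isometries of the hyperbolic plane.** For
commuting `g₁, g₂ ∈ SL(2,ℝ)` acting on the upper half-plane `ℍ` by Möbius
transformations, there exist a single path `c : [0,∞) → ℍ`, either constant or a
unit-speed geodesic ray for the hyperbolic metric, and constants `a, b > 0`, such that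
for `m = 1, 2` and all `t ≥ 0`, `dist (g_m • c(t)) (c(t)) ≤ Δ_{g_m} + b e^{-a t}`,
where `Δ_g = ⨅ z, dist (g • z) z` is the translation length. -/
theorem sl2_exponential_decay_commuting_pair
    (g₁ g₂ : Matrix.SpecialLinearGroup (Fin 2) ℝ) (hcomm : g₁ * g₂ = g₂ * g₁) :
    ∃ c : ℝ → ℍ,
      ((∀ s t : ℝ, 0 ≤ s → 0 ≤ t → c s = c t) ∨
        (∀ s t : ℝ, 0 ≤ s → 0 ≤ t → dist (c s) (c t) = |s - t|)) ∧
      ∃ a > (0 : ℝ), ∃ b > (0 : ℝ), ∀ t : ℝ, 0 ≤ t →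
        dist (g₁ • c t) (c t) ≤ (⨅ z : ℍ, dist (g₁ • z) z) + b * Real.exp (-a * t) ∧
        dist (g₂ • c t) (c t) ≤ (⨅ z : ℍ, dist (g₂ • z) z) + b * Real.exp (-a * t) := by
  by_cases hs : (g₁ 1 0 : ℝ) = 0 ∧ (g₁ 0 1 : ℝ) = 0 ∧ (g₁ 1 1 : ℝ) - g₁ 0 0 = 0
  · obtain ⟨c, hc, a, ha, b, hb, H⟩ := Sl2DecayAux.pair_aux g₂ g₁ 0
      (by rw [hs.1]; ring) (by rw [hs.2.2]; ring) (by rw [hs.2.1]; ring)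
    exact ⟨c, hc, a, ha, b, hb, fun t ht => ⟨(H t ht).2, (H t ht).1⟩⟩
  · obtain ⟨α, h1, h2, h3⟩ := Sl2DecayAux.centralizer g₁ g₂ hcomm hs
    exact Sl2DecayAux.pair_aux g₁ g₂ α h1 h2 h3
end

section
/- Let c ≥ 0, C ≥ 0, and let F : (0, 1/4] × (0, 2π) → ℝ be a nonnegative measurable function such that (i) for every r ∈ (0, 1/4], ∫₀^{2π} F(r, θ) dθ ≥ c, and (ii) the function r ↦ (1/r)·∫₀^{2π} (F(r, θ) − c/(2π)) dθ is integrable on (0, 1/4) with ∫₀^{1/4} (1/r)·∫₀^{2π} (F(r, θ) − c/(2π)) dθ dr ≤ C. Then ∫₀^{1/4} (1/(r·(log r²)²))·∫₀^{2π} F(r, θ) dθ dr ≤ c·log 2 + C. -/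
open MeasureTheory Set Filter Topology

noncomputable def pweFun (r : ℝ) : ℝ := 1 / (r * (Real.log (r ^ 2)) ^ 2)

lemma pwe_log_sq (x : ℝ) : Real.log (x ^ 2) = 2 * Real.log x := by
  rw [Real.log_pow]; push_cast; ring

lemma pwe_log_le {x : ℝ} (hx0 : 0 < x) (hx4 : x ≤ 1 / 4) :
    Real.log x ≤ -(2 * Real.log 2) := by
  have h2 : Real.log (1 / 4 : ℝ) = -(2 * Real.log 2) := by
    rw [show (1 / 4 : ℝ) = ((2 : ℝ) ^ 2)⁻¹ by norm_num, Real.log_inv, Real.log_pow]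
    push_cast; ring
  have h1 : Real.log x ≤ Real.log (1 / 4) := Real.log_le_log hx0 hx4
  linarith

lemma pwe_nonneg {x : ℝ} (hx0 : 0 < x) : 0 ≤ pweFun x := by
  unfold pweFun; positivity

lemma pwe_hasDerivAt {x : ℝ} (hx0 : 0 < x) (hx4 : x ≤ 1 / 4) :
    HasDerivAt (fun y : ℝ => -(4 * Real.log y)⁻¹) (pweFun x) x := by
  have hlog2 : (0.6931471803 : ℝ) < Real.log 2 := Real.log_two_gt_d9
  have hlx : Real.log x < 0 := by
    have := pwe_log_le hx0 hx4; linarith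
  have h1 : HasDerivAt (fun y : ℝ => 4 * Real.log y) (4 * x⁻¹) x :=
    (Real.hasDerivAt_log hx0.ne').const_mul 4
  have h2 : HasDerivAt (fun y : ℝ => -(4 * Real.log y)⁻¹) (-(-(4 * x⁻¹) / (4 * Real.log x) ^ 2)) x :=
    (h1.inv (mul_ne_zero (by norm_num) hlx.ne)).neg
  convert h2 using 1
  rw [pweFun, pwe_log_sq]
  field_simp
  ring

lemma pwe_contAt {x : ℝ} (hx0 : 0 < x) (hx4 : x ≤ 1 / 4) : ContinuousAt pweFun x := by
  have hlog2 : (0.6931471803 : ℝ) < Real.log 2 := Real.log_two_gt_d9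
  have hlx : Real.log x < 0 := by have := pwe_log_le hx0 hx4; linarith
  have hlog : Real.log (x ^ 2) ≠ 0 := by rw [pwe_log_sq]; intro h; nlinarith
  have hden : ContinuousAt (fun r : ℝ => r * Real.log (r ^ 2) ^ 2) x := by
    have h1 : ContinuousAt (fun r : ℝ => Real.log (r ^ 2)) x :=
      ContinuousAt.log ((continuous_pow 2).continuousAt) (pow_ne_zero 2 hx0.ne')
    exact continuousAt_id.mul (h1.pow 2)
  exact continuousAt_const.div hden (mul_ne_zero hx0.ne' (pow_ne_zero 2 hlog))

lemma pwe_ftc {a : ℝ} (ha : 0 < a) (ha4 : a ≤ 1 / 4) :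
    IntegrableOn pweFun (Set.Ioc a (1 / 4)) ∧
      ∫ r in Set.Ioc a (1 / 4), pweFun r
        = (8 * Real.log 2)⁻¹ + (4 * Real.log a)⁻¹ := by
  have hlog2 : (0.6931471803 : ℝ) < Real.log 2 := Real.log_two_gt_d9
  have hii : IntervalIntegrable pweFun volume a (1 / 4) := by
    apply ContinuousOn.intervalIntegrable
    rw [Set.uIcc_of_le ha4]
    exact fun x hx => (pwe_contAt (lt_of_lt_of_le ha hx.1) hx.2).continuousWithinAt
  have heq := intervalIntegral.integral_eq_sub_of_hasDerivAt
    (f := fun y : ℝ => -(4 * Real.log y)⁻¹) (f' := pweFun)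
    (fun x hx => by
      rw [Set.uIcc_of_le ha4] at hx
      exact pwe_hasDerivAt (lt_of_lt_of_le ha hx.1) hx.2) hii
  refine ⟨(intervalIntegrable_iff_integrableOn_Ioc_of_le ha4).mp hii, ?_⟩
  rw [← intervalIntegral.integral_of_le ha4, heq]
  have h14 : Real.log (1 / 4 : ℝ) = -(2 * Real.log 2) := by
    rw [show (1 / 4 : ℝ) = ((2 : ℝ) ^ 2)⁻¹ by norm_num, Real.log_inv, Real.log_pow]
    push_cast; ring
  show -(4 * Real.log (1/4 : ℝ))⁻¹ - -(4 * Real.log a)⁻¹ = _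
  rw [h14]
  rw [show (4 : ℝ) * -(2 * Real.log 2) = -(8 * Real.log 2) by ring, inv_neg]
  ring

lemma pwe_main :
    IntegrableOn pweFun (Set.Ioc (0 : ℝ) (1 / 4)) ∧
      ∫ r in Set.Ioc (0 : ℝ) (1 / 4), pweFun r = (8 * Real.log 2)⁻¹ := by
  have hlog2 : (0.6931471803 : ℝ) < Real.log 2 := Real.log_two_gt_d9
  set a : ℕ → ℝ := fun n => ((n : ℝ) + 8)⁻¹ with ha_def
  have hapos : ∀ n, 0 < a n := fun n => by
    have : (0:ℝ) ≤ (n:ℝ) := Nat.cast_nonneg n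
    positivity
  have hale : ∀ n, a n ≤ 1 / 4 := fun n => by
    have h : (0:ℝ) ≤ (n:ℝ) := Nat.cast_nonneg n
    rw [ha_def]
    rw [show (1/4 : ℝ) = ((4:ℝ))⁻¹ by norm_num]
    exact inv_anti₀ (by norm_num) (by linarith)
  have ha0 : Tendsto a atTop (𝓝 0) := by
    have h1 : Tendsto (fun n : ℕ => ((n : ℝ) + 8)) atTop atTop :=
      tendsto_atTop_add_const_right atTop 8 tendsto_natCast_atTop_atTop
    exact h1.inv_tendsto_atTop
  have hloga : ∀ n, Real.log (a n) < 0 := fun n => by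
    have := pwe_log_le (hapos n) (hale n); linarith
  have hint : IntegrableOn pweFun (Set.Ioc (0 : ℝ) (1 / 4)) := by
    apply integrableOn_Ioc_of_intervalIntegral_norm_bounded_left
      (I := (8 * Real.log 2)⁻¹) (fun n => (pwe_ftc (hapos n) (hale n)).1) ha0
    filter_upwards with n
    have heq : ∫ x in Set.Ioc (a n) (1/4), ‖pweFun x‖
        = ∫ x in Set.Ioc (a n) (1/4), pweFun x := by
      apply setIntegral_congr_fun measurableSet_Ioc
      intro x hx
      exact Real.norm_of_nonneg (pwe_nonneg (lt_trans (hapos n) hx.1))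
    rw [heq, (pwe_ftc (hapos n) (hale n)).2]
    have : (4 * Real.log (a n))⁻¹ ≤ 0 := by
      apply inv_nonpos.mpr; nlinarith [hloga n]
    linarith
  refine ⟨hint, ?_⟩
  have hcov : AECover (volume.restrict (Set.Ioc (0:ℝ) (1/4))) atTop
      (fun n => Set.Ioc (a n) (1/4)) := aecover_Ioc_of_Ioc ha0 tendsto_const_nhds
  have htend := hcov.integral_tendsto_of_countably_generated hint
  have htend' : Tendsto (fun n => ∫ x in Set.Ioc (a n) (1/4), pweFun x) atTop
      (𝓝 (∫ r in Set.Ioc (0:ℝ) (1/4), pweFun r)) := by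
    refine htend.congr fun n => ?_
    rw [Measure.restrict_restrict measurableSet_Ioc,
      Set.inter_eq_self_of_subset_left (Set.Ioc_subset_Ioc_left (hapos n).le)]
  have hlim2 : Tendsto (fun n => ∫ x in Set.Ioc (a n) (1/4), pweFun x) atTop
      (𝓝 ((8 * Real.log 2)⁻¹)) := by
    simp only [fun n => (pwe_ftc (hapos n) (hale n)).2]
    have hbot : Tendsto (fun n => Real.log (a n)) atTop atBot := by
      apply Real.tendsto_log_nhdsNE_zero.comp
      apply tendsto_nhdsWithin_of_tendsto_nhds_of_eventually_within _ ha0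
      filter_upwards with n
      exact (hapos n).ne'
    have h4bot : Tendsto (fun n => 4 * Real.log (a n)) atTop atBot := by
      exact (tendsto_const_mul_atBot_of_pos (by norm_num)).mpr hbot
    have hneg : Tendsto (fun n => -(4 * Real.log (a n))) atTop atTop :=
      tendsto_neg_atBot_atTop.comp h4bot
    have hz : Tendsto (fun n => (-(4 * Real.log (a n)))⁻¹) atTop (𝓝 0) :=
      hneg.inv_tendsto_atTop
    have hz' : Tendsto (fun n => (4 * Real.log (a n))⁻¹) atTop (𝓝 0) := by
      have := hz.neg
      simp only [inv_neg, neg_neg, neg_zero] at this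
      exact this
    have := (tendsto_const_nhds (x := (8 * Real.log 2)⁻¹) (f := atTop)).add hz'
    simpa using this
  exact tendsto_nhds_unique htend' hlim2
noncomputable def pweG (F : ℝ → ℝ → ℝ) (r : ℝ) : ℝ := ∫ θ in (0:ℝ)..(2 * Real.pi), F r θ

noncomputable def pweH (F : ℝ → ℝ → ℝ) (c r : ℝ) : ℝ :=
  ∫ θ in (0:ℝ)..(2 * Real.pi), (F r θ - c / (2 * Real.pi))

lemma pwe_key (F : ℝ → ℝ → ℝ) (c : ℝ) (hc : 0 ≤ c) (r : ℝ) (hcG : c ≤ pweG F r) :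
    pweH F c r = pweG F r - c := by
  unfold pweG pweH at *
  by_cases hFi : IntervalIntegrable (F r) volume 0 (2 * Real.pi)
  · rw [intervalIntegral.integral_sub hFi intervalIntegrable_const,
      intervalIntegral.integral_const, smul_eq_mul]
    congr 1
    have hπ : Real.pi ≠ 0 := Real.pi_ne_zero
    field_simp
    ring
  · have h1 : ¬ IntervalIntegrable (fun θ => F r θ - c / (2 * Real.pi)) volume 0 (2 * Real.pi) := by
      intro h
      apply hFi
      have h2 := h.add (intervalIntegrable_const (c := c / (2 * Real.pi)))
      simpa using h2
    have hG0 : (∫ θ in (0:ℝ)..(2 * Real.pi), F r θ) = 0 := intervalIntegral.integral_undef hFi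
    have hc0 : c = 0 := le_antisymm (by rw [hG0] at hcG; exact hcG) hc
    rw [intervalIntegral.integral_undef h1, hG0, hc0]
    ring

lemma pwe_measG (F : ℝ → ℝ → ℝ) (hmeas : Measurable (Function.uncurry F)) :
    Measurable (pweG F) := by
  have h1 : StronglyMeasurable fun r => ∫ θ in Set.Ioc (0:ℝ) (2 * Real.pi), F r θ :=
    hmeas.stronglyMeasurable.integral_prod_right
  have h2 : pweG F = fun r => ∫ θ in Set.Ioc (0:ℝ) (2 * Real.pi), F r θ := by
    funext r
    exact intervalIntegral.integral_of_le (by positivity)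
  rw [h2]; exact h1.measurable

/-- **Energy bound with the Poincaré-type weight.** Let `F ≥ 0` be measurable on
`(0, 1/4] × (0, 2π)` with `∫₀^{2π} F(r,θ) dθ ≥ c` for each `r`, and suppose
`∫₀^{1/4} (1/r) ∫₀^{2π} (F(r,θ) - c/(2π)) dθ dr ≤ C` (the inner function of `r` being
integrable). Then `∫₀^{1/4} (1/(r (log r²)²)) ∫₀^{2π} F(r,θ) dθ dr ≤ c log 2 + C`. -/
theorem poincare_weighted_energy_bound (c C : ℝ) (hc : 0 ≤ c) (hC : 0 ≤ C)
    (F : ℝ → ℝ → ℝ) (hmeas : Measurable (Function.uncurry F))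
    (hnonneg : ∀ r ∈ Set.Ioc (0 : ℝ) (1 / 4), ∀ θ ∈ Set.Ioo (0 : ℝ) (2 * Real.pi),
      0 ≤ F r θ)
    (hlower : ∀ r ∈ Set.Ioc (0 : ℝ) (1 / 4), c ≤ ∫ θ in (0 : ℝ)..(2 * Real.pi), F r θ)
    (hint : IntegrableOn
      (fun r => (1 / r) * ∫ θ in (0 : ℝ)..(2 * Real.pi), (F r θ - c / (2 * Real.pi)))
      (Set.Ioo (0 : ℝ) (1 / 4)))
    (hbound : ∫ r in Set.Ioo (0 : ℝ) (1 / 4),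
        (1 / r) * ∫ θ in (0 : ℝ)..(2 * Real.pi), (F r θ - c / (2 * Real.pi)) ≤ C) :
    ∫ r in Set.Ioo (0 : ℝ) (1 / 4),
        (1 / (r * (Real.log (r ^ 2)) ^ 2)) * ∫ θ in (0 : ℝ)..(2 * Real.pi), F r θ
      ≤ c * Real.log 2 + C := by
  have hlog2 : (0.6931471803 : ℝ) < Real.log 2 := Real.log_two_gt_d9
  have hGmeas := pwe_measG F hmeas
  have hwmeas : Measurable pweFun := by
    unfold pweFun
    exact (measurable_const.div
      (measurable_id.mul ((Real.measurable_log.comp (measurable_id.pow_const 2)).pow_const 2)))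
  have hlower' : ∀ r ∈ Set.Ioc (0:ℝ) (1/4), c ≤ pweG F r := hlower
  have hint' : IntegrableOn (fun r => (1 / r) * pweH F c r) (Set.Ioo (0:ℝ) (1/4)) := hint
  have hbound' : ∫ r in Set.Ioo (0:ℝ) (1/4), (1 / r) * pweH F c r ≤ C := hbound
  have hIw : IntegrableOn pweFun (Set.Ioo (0:ℝ) (1/4)) :=
    pwe_main.1.mono_set Set.Ioo_subset_Ioc_self
  have hg_int : IntegrableOn (fun r => c * pweFun r + (1 / r) * pweH F c r)
      (Set.Ioo (0:ℝ) (1/4)) := (hIw.const_mul c).add hint'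
  have hpt : ∀ r ∈ Set.Ioo (0:ℝ) (1/4),
      pweFun r * pweG F r ≤ c * pweFun r + (1 / r) * pweH F c r := by
    intro r hr
    obtain ⟨hr0, hr4⟩ := hr
    have hGc : c ≤ pweG F r := hlower' r ⟨hr0, hr4.le⟩
    have hH := pwe_key F c hc r hGc
    have hsq : 1 ≤ (Real.log (r ^ 2)) ^ 2 := by
      have h1 := pwe_log_le hr0 hr4.le
      rw [pwe_log_sq]
      nlinarith
    have hwle : pweFun r ≤ 1 / r := by
      unfold pweFun
      apply one_div_le_one_div_of_le hr0
      nlinarith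
    have h2 : pweFun r * (pweG F r - c) ≤ (1 / r) * (pweG F r - c) :=
      mul_le_mul_of_nonneg_right hwle (by linarith)
    have hw0 : 0 ≤ pweFun r := pwe_nonneg hr0
    rw [hH]
    nlinarith [h2, hw0]
  have hpt0 : ∀ r ∈ Set.Ioo (0:ℝ) (1/4), 0 ≤ pweFun r * pweG F r := by
    intro r hr
    exact mul_nonneg (pwe_nonneg hr.1) (le_trans hc (hlower' r ⟨hr.1, hr.2.le⟩))
  have hf_int : IntegrableOn (fun r => pweFun r * pweG F r) (Set.Ioo (0:ℝ) (1/4)) := by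
    apply Integrable.mono' hg_int ((hwmeas.mul hGmeas).aestronglyMeasurable)
    filter_upwards [ae_restrict_mem measurableSet_Ioo] with r hr
    rw [Pi.mul_apply, Real.norm_of_nonneg (hpt0 r hr)]
    exact hpt r hr
  have hwval : ∫ r in Set.Ioo (0:ℝ) (1/4), pweFun r = (8 * Real.log 2)⁻¹ := by
    rw [← integral_Ioc_eq_integral_Ioo]
    exact pwe_main.2
  have hle : (8 * Real.log 2)⁻¹ ≤ Real.log 2 := by
    have hpos : (0:ℝ) < 8 * Real.log 2 := by nlinarith
    rw [inv_eq_one_div, div_le_iff₀ hpos]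
    nlinarith
  show ∫ r in Set.Ioo (0:ℝ) (1/4), pweFun r * pweG F r ≤ c * Real.log 2 + C
  calc ∫ r in Set.Ioo (0:ℝ) (1/4), pweFun r * pweG F r
      ≤ ∫ r in Set.Ioo (0:ℝ) (1/4), (c * pweFun r + (1 / r) * pweH F c r) :=
        setIntegral_mono_on hf_int hg_int measurableSet_Ioo hpt
    _ = c * (∫ r in Set.Ioo (0:ℝ) (1/4), pweFun r)
        + ∫ r in Set.Ioo (0:ℝ) (1/4), (1 / r) * pweH F c r := by
        rw [integral_add (hIw.const_mul c) hint', MeasureTheory.integral_const_mul]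
    _ ≤ c * Real.log 2 + C := by
        rw [hwval]
        have h1 : c * (8 * Real.log 2)⁻¹ ≤ c * Real.log 2 :=
          mul_le_mul_of_nonneg_left hle hc
        linarith
end

section
/- Let h : ℝ² → ℝ be twice continuously differentiable on (0, ∞) × ℝ, nonnegative, 2π-periodic in the second variable (h(t, ψ + 2π) = h(t, ψ)), subharmonic in the sense that (∂²h/∂t²) + (∂²h/∂ψ²) ≥ 0 on (0, ∞) × ℝ, and integrable: ∫_{(0,∞)×(0,2π)} h(t, ψ) dt dψ < ∞. Then for every t₀ ≥ 2 and every ψ₀ ∈ ℝ one has t₀ · h(t₀, ψ₀) ≤ (8/π) · ∫_{((t₀−1)/2, ∞) × (0, 2π)} h(t, ψ) dt dψ. In particular, sup_{ψ ∈ ℝ} t · h(t, ψ) → 0 as t → ∞. -/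
open MeasureTheory

open MeasureTheory Set

lemma lin_apply (L : (ℝ × ℝ) →L[ℝ] ℝ) (a b : ℝ) :
    L (a, b) = a * L (1, 0) + b * L (0, 1) := by
  have h : ((a, b) : ℝ × ℝ) = a • ((1 : ℝ), (0 : ℝ)) + b • ((0 : ℝ), (1 : ℝ)) := by
    simp [Prod.ext_iff]
  rw [h, map_add, _root_.map_smul, _root_.map_smul, smul_eq_mul, smul_eq_mul]

lemma bilin_apply (Q : (ℝ × ℝ) →L[ℝ] (ℝ × ℝ) →L[ℝ] ℝ) (a b x y : ℝ) :
    Q (a, b) (x, y) = a * x * Q (1, 0) (1, 0) + a * y * Q (1, 0) (0, 1)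
      + b * x * Q (0, 1) (1, 0) + b * y * Q (0, 1) (0, 1) := by
  have h : ((a, b) : ℝ × ℝ) = a • ((1 : ℝ), (0 : ℝ)) + b • ((0 : ℝ), (1 : ℝ)) := by
    simp [Prod.ext_iff]
  rw [h, map_add, _root_.map_smul, _root_.map_smul]
  simp only [ContinuousLinearMap.add_apply, ContinuousLinearMap.coe_smul',
    Pi.smul_apply, smul_eq_mul]
  rw [lin_apply (Q (1,0)) x y, lin_apply (Q (0,1)) x y]
  ring

lemma key_identity (Q : (ℝ × ℝ) →L[ℝ] (ℝ × ℝ) →L[ℝ] ℝ) (L : (ℝ × ℝ) →L[ℝ] ℝ) (s θ : ℝ) :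
    s * (L (Real.cos θ, Real.sin θ) + s * Q (Real.cos θ, Real.sin θ) (Real.cos θ, Real.sin θ))
      + (Q (-(s * Real.sin θ), s * Real.cos θ) (-(s * Real.sin θ), s * Real.cos θ)
        + L (-(s * Real.cos θ), -(s * Real.sin θ)))
      = s ^ 2 * (Q (1, 0) (1, 0) + Q (0, 1) (0, 1)) := by
  rw [bilin_apply Q (Real.cos θ) (Real.sin θ) (Real.cos θ) (Real.sin θ),
    bilin_apply Q (-(s * Real.sin θ)) (s * Real.cos θ) (-(s * Real.sin θ)) (s * Real.cos θ),
    lin_apply L (Real.cos θ) (Real.sin θ),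
    lin_apply L (-(s * Real.cos θ)) (-(s * Real.sin θ))]
  have hpy := Real.sin_sq_add_cos_sq θ
  linear_combination (s ^ 2 * (Q (1, 0) (1, 0) + Q (0, 1) (0, 1))) * hpy

namespace SubhAux

variable (h : ℝ → ℝ → ℝ)

noncomputable def H : ℝ × ℝ → ℝ := fun p => h p.1 p.2
def D : Set (ℝ × ℝ) := Set.Ioi (0 : ℝ) ×ˢ (Set.univ : Set ℝ)
noncomputable def f1 : ℝ × ℝ → (ℝ × ℝ) →L[ℝ] ℝ := fderiv ℝ (H h)
noncomputable def f2 : ℝ × ℝ → (ℝ × ℝ) →L[ℝ] ((ℝ × ℝ) →L[ℝ] ℝ) := fderiv ℝ (f1 h)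

lemma isOpen_D : IsOpen (D) := isOpen_Ioi.prod isOpen_univ

lemma mem_D {p : ℝ × ℝ} (hp : 0 < p.1) : p ∈ D := ⟨hp, trivial⟩

/-- the circle point -/
noncomputable def P (c : ℝ × ℝ) (s θ : ℝ) : ℝ × ℝ :=
  (c.1 + s * Real.cos θ, c.2 + s * Real.sin θ)

lemma P_mem {c : ℝ × ℝ} (hc : 1 < c.1) {s : ℝ} (hs : |s| ≤ 1) (θ : ℝ) :
    P c s θ ∈ D := by
  have h1 : |s * Real.cos θ| ≤ 1 := by
    rw [abs_mul]
    exact mul_le_one₀ hs (abs_nonneg _) (Real.abs_cos_le_one θ)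
  have h2 := neg_abs_le (s * Real.cos θ)
  refine ⟨?_, trivial⟩
  simp only [P, Set.mem_Ioi]
  linarith

lemma continuous_P (c : ℝ × ℝ) : Continuous (fun q : ℝ × ℝ => P c q.1 q.2) := by
  unfold P; fun_prop

lemma hasDerivAt_P_s (c : ℝ × ℝ) (s θ : ℝ) :
    HasDerivAt (fun s' => P c s' θ) (Real.cos θ, Real.sin θ) s := by
  apply HasDerivAt.prodMk
  · simpa [mul_comm] using (hasDerivAt_id s).const_mul (Real.cos θ) |>.const_add c.1
  · simpa [mul_comm] using (hasDerivAt_id s).const_mul (Real.sin θ) |>.const_add c.2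

lemma hasDerivAt_P_θ (c : ℝ × ℝ) (s θ : ℝ) :
    HasDerivAt (fun θ' => P c s θ') (-(s * Real.sin θ), s * Real.cos θ) θ := by
  apply HasDerivAt.prodMk
  · simpa [mul_comm] using ((Real.hasDerivAt_cos θ).const_mul s).const_add c.1
  · simpa [mul_comm] using ((Real.hasDerivAt_sin θ).const_mul s).const_add c.2


section Circle

variable {c : ℝ × ℝ}

noncomputable def gg (c : ℝ × ℝ) (s θ : ℝ) : ℝ :=
  f1 h (P c s θ) (Real.cos θ, Real.sin θ)

noncomputable def qq (c : ℝ × ℝ) (s θ : ℝ) : ℝ :=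
  f2 h (P c s θ) (Real.cos θ, Real.sin θ) (Real.cos θ, Real.sin θ)

noncomputable def psi1 (c : ℝ × ℝ) (s θ : ℝ) : ℝ := gg h c s θ + s * qq h c s θ

noncomputable def Phi (c : ℝ × ℝ) (s θ : ℝ) : ℝ :=
  f1 h (P c s θ) (-(s * Real.sin θ), s * Real.cos θ)

noncomputable def psi2 (c : ℝ × ℝ) (s θ : ℝ) : ℝ :=
  f2 h (P c s θ) (-(s * Real.sin θ), s * Real.cos θ) (-(s * Real.sin θ), s * Real.cos θ)
    + f1 h (P c s θ) (-(s * Real.cos θ), -(s * Real.sin θ))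

noncomputable def lap (p : ℝ × ℝ) : ℝ := f2 h p (1, 0) (1, 0) + f2 h p (0, 1) (0, 1)

lemma psi_key (c : ℝ × ℝ) (s θ : ℝ) :
    s * psi1 h c s θ + psi2 h c s θ = s ^ 2 * lap h (P c s θ) := by
  unfold psi1 psi2 gg qq lap
  exact key_identity (f2 h (P c s θ)) (f1 h (P c s θ)) s θ


variable (hsmooth : ContDiffOn ℝ 2 (fun p : ℝ × ℝ => h p.1 p.2)
      (Set.Ioi (0 : ℝ) ×ˢ (Set.univ : Set ℝ)))

include hsmooth

lemma contDiffAt (p : ℝ × ℝ) (hp : p ∈ D) : ContDiffAt ℝ 2 (H h) p :=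
  hsmooth.contDiffAt ((isOpen_D).mem_nhds hp)

lemma hasFDerivAt_H {p : ℝ × ℝ} (hp : p ∈ D) : HasFDerivAt (H h) (f1 h p) p :=
  ((contDiffAt h hsmooth p hp).differentiableAt (by norm_num)).hasFDerivAt

lemma hasFDerivAt_f1 {p : ℝ × ℝ} (hp : p ∈ D) : HasFDerivAt (f1 h) (f2 h p) p := by
  have h1 : ContDiffAt ℝ 1 (f1 h) p :=
    (contDiffAt h hsmooth p hp).fderiv_right (by norm_num)
  exact (h1.differentiableAt (by norm_num)).hasFDerivAt

lemma continuousOn_H : ContinuousOn (H h) D := hsmooth.continuousOn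

lemma continuousOn_f1 : ContinuousOn (f1 h) D := fun p hp =>
  ((hasFDerivAt_f1 h hsmooth hp).differentiableAt.continuousAt).continuousWithinAt

lemma continuousOn_f2 : ContinuousOn (f2 h) D := by
  intro p hp
  have h1 : ContDiffAt ℝ 1 (f1 h) p :=
    (contDiffAt h hsmooth p hp).fderiv_right (by norm_num)
  have h0 : ContDiffAt ℝ 0 (f2 h) p := h1.fderiv_right (by norm_num)
  exact h0.continuousAt.continuousWithinAt

/-- slice derivative in t -/
lemma hasDerivAt_slice1 {t ψ : ℝ} (ht : 0 < t) :
    HasDerivAt (fun t' => h t' ψ) (f1 h (t, ψ) (1, 0)) t := by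
  have hline : HasDerivAt (fun t' : ℝ => (t', ψ)) ((1 : ℝ), (0 : ℝ)) t :=
    (hasDerivAt_id t).prodMk (hasDerivAt_const t ψ)
  exact (hasFDerivAt_H h hsmooth (mem_D ht)).comp_hasDerivAt t hline

lemma hasDerivAt_slice2 {t ψ : ℝ} (ht : 0 < t) :
    HasDerivAt (fun ψ' => h t ψ') (f1 h (t, ψ) (0, 1)) ψ := by
  have hline : HasDerivAt (fun ψ' : ℝ => (t, ψ')) ((0 : ℝ), (1 : ℝ)) ψ :=
    (hasDerivAt_const ψ t).prodMk (hasDerivAt_id ψ)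
  exact (hasFDerivAt_H h hsmooth (mem_D ht)).comp_hasDerivAt ψ hline

lemma hasDerivAt_d1 {t ψ : ℝ} (ht : 0 < t) :
    HasDerivAt (fun t' => f1 h (t', ψ) (1, 0)) (f2 h (t, ψ) (1, 0) (1, 0)) t := by
  have hline : HasDerivAt (fun t' : ℝ => (t', ψ)) ((1 : ℝ), (0 : ℝ)) t :=
    (hasDerivAt_id t).prodMk (hasDerivAt_const t ψ)
  have hc : HasDerivAt (fun t' => f1 h (t', ψ)) (f2 h (t, ψ) (1, 0)) t :=
    (hasFDerivAt_f1 h hsmooth (mem_D ht)).comp_hasDerivAt t hline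
  have := hc.clm_apply (hasDerivAt_const t ((1 : ℝ), (0 : ℝ)))
  simpa using this

lemma hasDerivAt_d2 {t ψ : ℝ} (ht : 0 < t) :
    HasDerivAt (fun ψ' => f1 h (t, ψ') (0, 1)) (f2 h (t, ψ) (0, 1) (0, 1)) ψ := by
  have hline : HasDerivAt (fun ψ' : ℝ => (t, ψ')) ((0 : ℝ), (1 : ℝ)) ψ :=
    (hasDerivAt_const ψ t).prodMk (hasDerivAt_id ψ)
  have hc : HasDerivAt (fun ψ' => f1 h (t, ψ')) (f2 h (t, ψ) (0, 1)) ψ :=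
    (hasFDerivAt_f1 h hsmooth (mem_D ht)).comp_hasDerivAt ψ hline
  have := hc.clm_apply (hasDerivAt_const ψ ((0 : ℝ), (1 : ℝ)))
  simpa using this

lemma iteratedDeriv_slice1 {t ψ : ℝ} (ht : 0 < t) :
    iteratedDeriv 2 (fun t' => h t' ψ) t = f2 h (t, ψ) (1, 0) (1, 0) := by
  rw [show (2 : ℕ) = 1 + 1 from rfl, iteratedDeriv_succ, iteratedDeriv_one]
  have hev : deriv (fun t' => h t' ψ) =ᶠ[nhds t] fun t' => f1 h (t', ψ) (1, 0) := by
    filter_upwards [isOpen_Ioi.mem_nhds ht] with s hs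
    exact (hasDerivAt_slice1 h hsmooth hs).deriv
  rw [hev.deriv_eq]
  exact (hasDerivAt_d1 h hsmooth ht).deriv

lemma iteratedDeriv_slice2 {t ψ : ℝ} (ht : 0 < t) :
    iteratedDeriv 2 (fun ψ' => h t ψ') ψ = f2 h (t, ψ) (0, 1) (0, 1) := by
  rw [show (2 : ℕ) = 1 + 1 from rfl, iteratedDeriv_succ, iteratedDeriv_one]
  have hev : deriv (fun ψ' => h t ψ') =ᶠ[nhds ψ] fun ψ' => f1 h (t, ψ') (0, 1) := by
    filter_upwards [Filter.univ_mem] with s _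
    exact (hasDerivAt_slice2 h hsmooth ht).deriv
  rw [hev.deriv_eq]
  exact (hasDerivAt_d2 h hsmooth ht).deriv


variable (hsmooth : ContDiffOn ℝ 2 (fun p : ℝ × ℝ => h p.1 p.2)
      (Set.Ioi (0 : ℝ) ×ˢ (Set.univ : Set ℝ)))
include hsmooth

lemma hasDerivAt_HP (hc : 1 < c.1) {s : ℝ} (hs : |s| ≤ 1) (θ : ℝ) :
    HasDerivAt (fun s' => H h (P c s' θ)) (gg h c s θ) s := by
  have := (hasFDerivAt_H h hsmooth (P_mem hc hs θ)).comp_hasDerivAt s (hasDerivAt_P_s c s θ)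
  exact this

lemma hasDerivAt_gg (hc : 1 < c.1) {s : ℝ} (hs : |s| ≤ 1) (θ : ℝ) :
    HasDerivAt (fun s' => gg h c s' θ) (qq h c s θ) s := by
  have hc2 : HasDerivAt (fun s' => f1 h (P c s' θ))
      (f2 h (P c s θ) (Real.cos θ, Real.sin θ)) s :=
    (hasFDerivAt_f1 h hsmooth (P_mem hc hs θ)).comp_hasDerivAt s (hasDerivAt_P_s c s θ)
  simpa [gg, qq] using hc2.clm_apply (hasDerivAt_const s ((Real.cos θ), (Real.sin θ)))

lemma hasDerivAt_sgg (hc : 1 < c.1) {s : ℝ} (hs : |s| ≤ 1) (θ : ℝ) :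
    HasDerivAt (fun s' => s' * gg h c s' θ) (psi1 h c s θ) s := by
  exact ((hasDerivAt_id s).mul (hasDerivAt_gg h hsmooth hc hs θ)).congr_deriv (by simp [psi1])

lemma hasDerivAt_Phi (hc : 1 < c.1) {s : ℝ} (hs : |s| ≤ 1) (θ : ℝ) :
    HasDerivAt (fun θ' => Phi h c s θ') (psi2 h c s θ) θ := by
  have hcθ : HasDerivAt (fun θ' => f1 h (P c s θ'))
      (f2 h (P c s θ) (-(s * Real.sin θ), s * Real.cos θ)) θ :=
    (hasFDerivAt_f1 h hsmooth (P_mem hc hs θ)).comp_hasDerivAt θ (hasDerivAt_P_θ c s θ)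
  have hu : HasDerivAt (fun θ' => ((-(s * Real.sin θ')), s * Real.cos θ'))
      (-(s * Real.cos θ), -(s * Real.sin θ)) θ := by
    apply HasDerivAt.prodMk
    · exact (((Real.hasDerivAt_sin θ).const_mul s).neg)
    · simpa [mul_comm] using ((Real.hasDerivAt_cos θ).const_mul s)
  simpa [Phi, psi2] using hcθ.clm_apply hu

-- continuity on the strip
omit hsmooth in
lemma mapsTo_P (hc : 1 < c.1) :
    Set.MapsTo (fun q : ℝ × ℝ => P c q.1 q.2) (Set.Icc (-1 : ℝ) 1 ×ˢ (Set.univ : Set ℝ)) D :=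
  fun q hq => P_mem hc (abs_le.mpr ⟨hq.1.1, hq.1.2⟩) q.2

lemma contOn_HP (hc : 1 < c.1) :
    ContinuousOn (fun q : ℝ × ℝ => H h (P c q.1 q.2))
      (Set.Icc (-1 : ℝ) 1 ×ˢ (Set.univ : Set ℝ)) :=
  (continuousOn_H h hsmooth).comp (continuous_P c).continuousOn (mapsTo_P hc)

lemma contOn_f1P (hc : 1 < c.1) :
    ContinuousOn (fun q : ℝ × ℝ => f1 h (P c q.1 q.2))
      (Set.Icc (-1 : ℝ) 1 ×ˢ (Set.univ : Set ℝ)) :=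
  (continuousOn_f1 h hsmooth).comp (continuous_P c).continuousOn (mapsTo_P hc)

lemma contOn_f2P (hc : 1 < c.1) :
    ContinuousOn (fun q : ℝ × ℝ => f2 h (P c q.1 q.2))
      (Set.Icc (-1 : ℝ) 1 ×ˢ (Set.univ : Set ℝ)) :=
  (continuousOn_f2 h hsmooth).comp (continuous_P c).continuousOn (mapsTo_P hc)

lemma contOn_gg (hc : 1 < c.1) :
    ContinuousOn (fun q : ℝ × ℝ => gg h c q.1 q.2)
      (Set.Icc (-1 : ℝ) 1 ×ˢ (Set.univ : Set ℝ)) :=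
  (contOn_f1P h hsmooth hc).clm_apply (by fun_prop)

lemma contOn_qq (hc : 1 < c.1) :
    ContinuousOn (fun q : ℝ × ℝ => qq h c q.1 q.2)
      (Set.Icc (-1 : ℝ) 1 ×ˢ (Set.univ : Set ℝ)) :=
  ((contOn_f2P h hsmooth hc).clm_apply (by fun_prop)).clm_apply (by fun_prop)

lemma contOn_psi1 (hc : 1 < c.1) :
    ContinuousOn (fun q : ℝ × ℝ => psi1 h c q.1 q.2)
      (Set.Icc (-1 : ℝ) 1 ×ˢ (Set.univ : Set ℝ)) :=
  (contOn_gg h hsmooth hc).add (continuousOn_fst.mul (contOn_qq h hsmooth hc))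

lemma contOn_psi2 (hc : 1 < c.1) :
    ContinuousOn (fun q : ℝ × ℝ => psi2 h c q.1 q.2)
      (Set.Icc (-1 : ℝ) 1 ×ˢ (Set.univ : Set ℝ)) := by
  apply ContinuousOn.add
  · exact ((contOn_f2P h hsmooth hc).clm_apply (by fun_prop)).clm_apply (by fun_prop)
  · exact (contOn_f1P h hsmooth hc).clm_apply (by fun_prop)

-- ### Fubini helpers

omit hsmooth in
lemma intOn_of_contOn_Icc {f : ℝ × ℝ → ℝ} {a b a' b' : ℝ}
    (hf : ContinuousOn f (Set.Icc a b ×ˢ Set.Icc a' b')) :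
    IntegrableOn f (Set.Ioc a b ×ˢ Set.Ioc a' b') :=
  (hf.integrableOn_compact (isCompact_Icc.prod isCompact_Icc)).mono_set
    (Set.prod_mono Set.Ioc_subset_Icc_self Set.Ioc_subset_Icc_self)

omit hsmooth in
lemma swap_II {f : ℝ → ℝ → ℝ} {a b a' b' : ℝ} (hab : a ≤ b) (ha'b' : a' ≤ b')
    (hf : IntegrableOn (fun q : ℝ × ℝ => f q.1 q.2) (Set.Ioc a b ×ˢ Set.Ioc a' b')) :
    ∫ x in a..b, (∫ y in a'..b', f x y) = ∫ y in a'..b', (∫ x in a..b, f x y) := by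
  rw [intervalIntegral.integral_of_le hab, intervalIntegral.integral_of_le ha'b']
  simp_rw [intervalIntegral.integral_of_le hab, intervalIntegral.integral_of_le ha'b']
  have hf' : Integrable (Function.uncurry f)
      ((volume.restrict (Set.Ioc a b)).prod (volume.restrict (Set.Ioc a' b'))) := by
    rw [Measure.prod_restrict, ← MeasureTheory.Measure.volume_eq_prod ℝ ℝ]
    exact hf
  exact MeasureTheory.integral_integral_swap hf'

-- ### FTC lemmas on the circle

lemma ftc_radial (hc : 1 < c.1) (θ : ℝ) {r : ℝ} (hr : r ∈ Set.Icc (0:ℝ) 1) :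
    ∫ s in (0:ℝ)..r, gg h c s θ = H h (P c r θ) - H h c := by
  have h0 : ∀ s ∈ Set.uIcc (0:ℝ) r, HasDerivAt (fun s' => H h (P c s' θ)) (gg h c s θ) s := by
    intro s hs
    rw [Set.uIcc_of_le hr.1] at hs
    exact hasDerivAt_HP h hsmooth hc (abs_le.mpr ⟨by linarith [hs.1], le_trans hs.2 hr.2⟩) θ
  have hint : IntervalIntegrable (fun s => gg h c s θ) volume 0 r := by
    apply ContinuousOn.intervalIntegrable
    apply ((contOn_gg h hsmooth hc).comp (by fun_prop : Continuous fun s : ℝ => (s, θ)).continuousOn ?_)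
    intro s hs
    rw [Set.uIcc_of_le hr.1] at hs
    exact ⟨⟨by linarith [hs.1], le_trans hs.2 hr.2⟩, trivial⟩
  have := intervalIntegral.integral_eq_sub_of_hasDerivAt h0 hint
  rw [this]
  congr 1
  simp [P]

lemma ftc_sgg (hc : 1 < c.1) (θ : ℝ) {s : ℝ} (hs : s ∈ Set.Icc (0:ℝ) 1) :
    ∫ σ in (0:ℝ)..s, psi1 h c σ θ = s * gg h c s θ := by
  have h0 : ∀ σ ∈ Set.uIcc (0:ℝ) s, HasDerivAt (fun s' => s' * gg h c s' θ) (psi1 h c σ θ) σ := by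
    intro σ hσ
    rw [Set.uIcc_of_le hs.1] at hσ
    exact hasDerivAt_sgg h hsmooth hc (abs_le.mpr ⟨by linarith [hσ.1], le_trans hσ.2 hs.2⟩) θ
  have hint : IntervalIntegrable (fun σ => psi1 h c σ θ) volume 0 s := by
    apply ContinuousOn.intervalIntegrable
    apply ((contOn_psi1 h hsmooth hc).comp (by fun_prop : Continuous fun σ : ℝ => (σ, θ)).continuousOn ?_)
    intro σ hσ
    rw [Set.uIcc_of_le hs.1] at hσ
    exact ⟨⟨by linarith [hσ.1], le_trans hσ.2 hs.2⟩, trivial⟩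
  rw [intervalIntegral.integral_eq_sub_of_hasDerivAt h0 hint]
  simp

lemma cont_θ_psi2 (hc : 1 < c.1) {s : ℝ} (hs : |s| ≤ 1) :
    Continuous (fun θ => psi2 h c s θ) := by
  rw [← continuousOn_univ]
  apply ((contOn_psi2 h hsmooth hc).comp (by fun_prop : Continuous fun θ : ℝ => (s, θ)).continuousOn ?_)
  intro θ _
  exact ⟨abs_le.mp hs, trivial⟩

lemma int_psi2 (hc : 1 < c.1) {s : ℝ} (hs : |s| ≤ 1) :
    ∫ θ in (0:ℝ)..(2 * Real.pi), psi2 h c s θ = 0 := by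
  have h0 : ∀ θ ∈ Set.uIcc (0:ℝ) (2 * Real.pi),
      HasDerivAt (fun θ' => Phi h c s θ') (psi2 h c s θ) θ := fun θ _ =>
    hasDerivAt_Phi h hsmooth hc hs θ
  have hint : IntervalIntegrable (fun θ => psi2 h c s θ) volume 0 (2 * Real.pi) :=
    (cont_θ_psi2 h hsmooth hc hs).intervalIntegrable _ _
  rw [intervalIntegral.integral_eq_sub_of_hasDerivAt h0 hint]
  simp [Phi, P, Real.cos_two_pi, Real.sin_two_pi]

variable (hsubh : ∀ t ∈ Set.Ioi (0 : ℝ), ∀ ψ : ℝ,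
      0 ≤ iteratedDeriv 2 (fun t' => h t' ψ) t + iteratedDeriv 2 (fun ψ' => h t ψ') ψ)

include hsubh

lemma lap_nonneg {p : ℝ × ℝ} (hp : p ∈ D) : 0 ≤ lap h p := by
  have h1 := iteratedDeriv_slice1 h hsmooth (t := p.1) (ψ := p.2) hp.1
  have h2 := iteratedDeriv_slice2 h hsmooth (t := p.1) (ψ := p.2) hp.1
  have h3 := hsubh p.1 hp.1 p.2
  rw [h1, h2] at h3
  simpa [lap] using h3

omit hsubh in
lemma cont_θ_gg (hc : 1 < c.1) {s : ℝ} (hs : |s| ≤ 1) :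
    Continuous (fun θ => gg h c s θ) := by
  rw [← continuousOn_univ]
  exact ((contOn_gg h hsmooth hc).comp
    (by fun_prop : Continuous fun θ : ℝ => (s, θ)).continuousOn
    (fun θ _ => ⟨abs_le.mp hs, trivial⟩))

omit hsubh in
lemma cont_θ_psi1 (hc : 1 < c.1) {s : ℝ} (hs : |s| ≤ 1) :
    Continuous (fun θ => psi1 h c s θ) := by
  rw [← continuousOn_univ]
  exact ((contOn_psi1 h hsmooth hc).comp
    (by fun_prop : Continuous fun θ : ℝ => (s, θ)).continuousOn
    (fun θ _ => ⟨abs_le.mp hs, trivial⟩))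

omit hsubh in
lemma cont_θ_HP (hc : 1 < c.1) {s : ℝ} (hs : |s| ≤ 1) :
    Continuous (fun θ => H h (P c s θ)) := by
  rw [← continuousOn_univ]
  exact ((contOn_HP h hsmooth hc).comp
    (by fun_prop : Continuous fun θ : ℝ => (s, θ)).continuousOn
    (fun θ _ => ⟨abs_le.mp hs, trivial⟩))

omit hsubh in
lemma int_gg_zero (hc : 1 < c.1) :
    ∫ θ in (0:ℝ)..(2 * Real.pi), gg h c 0 θ = 0 := by
  have e : ∀ θ, gg h c 0 θ
      = Real.cos θ * f1 h c (1, 0) + Real.sin θ * f1 h c (0, 1) := by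
    intro θ
    have hPc : P c 0 θ = c := by simp [P]
    rw [gg, hPc, lin_apply (f1 h c)]
  rw [intervalIntegral.integral_congr (fun θ _ => e θ),
    intervalIntegral.integral_add (f := fun x => Real.cos x * f1 h c (1, 0))
      (g := fun x => Real.sin x * f1 h c (0, 1))
      ((Real.continuous_cos.mul continuous_const : Continuous fun x => Real.cos x * f1 h c (1, 0)).intervalIntegrable _ _)
      ((Real.continuous_sin.mul continuous_const : Continuous fun x => Real.sin x * f1 h c (0, 1)).intervalIntegrable _ _),
    intervalIntegral.integral_mul_const, intervalIntegral.integral_mul_const,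
    integral_cos, integral_sin]
  simp [Real.sin_two_pi, Real.cos_two_pi]

lemma int_psi1_nonneg (hc : 1 < c.1) {s : ℝ} (hs : s ∈ Set.Icc (0:ℝ) 1) :
    0 ≤ ∫ θ in (0:ℝ)..(2 * Real.pi), psi1 h c s θ := by
  rcases eq_or_lt_of_le hs.1 with heq | hspos
  · rw [← heq]
    have e : ∀ θ, psi1 h c 0 θ = gg h c 0 θ := by intro θ; simp [psi1]
    rw [intervalIntegral.integral_congr (fun θ _ => e θ), int_gg_zero h hsmooth hc]
  · have habs : |s| ≤ 1 := abs_le.mpr ⟨by linarith [hs.1], hs.2⟩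
    have i1 : IntervalIntegrable (fun θ => psi1 h c s θ) volume 0 (2 * Real.pi) :=
      (cont_θ_psi1 h hsmooth hc habs).intervalIntegrable _ _
    have i2 : IntervalIntegrable (fun θ => psi2 h c s θ) volume 0 (2 * Real.pi) :=
      (cont_θ_psi2 h hsmooth hc habs).intervalIntegrable _ _
    have hlapI : 0 ≤ ∫ θ in (0:ℝ)..(2 * Real.pi), (s ^ 2 * lap h (P c s θ)) := by
      apply intervalIntegral.integral_nonneg (by positivity)
      intro u _
      exact mul_nonneg (sq_nonneg s) (lap_nonneg h hsmooth hsubh (P_mem hc habs u))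
    have e : ∀ θ, s ^ 2 * lap h (P c s θ) = s * psi1 h c s θ + psi2 h c s θ :=
      fun θ => (psi_key h c s θ).symm
    rw [intervalIntegral.integral_congr (fun θ _ => e θ),
      intervalIntegral.integral_add (i1.const_mul s) i2,
      intervalIntegral.integral_const_mul, int_psi2 h hsmooth hc habs, add_zero] at hlapI
    exact nonneg_of_mul_nonneg_right hlapI hspos

lemma int_gg_nonneg (hc : 1 < c.1) {s : ℝ} (hs : s ∈ Set.Icc (0:ℝ) 1) :
    0 ≤ ∫ θ in (0:ℝ)..(2 * Real.pi), gg h c s θ := by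
  rcases eq_or_lt_of_le hs.1 with heq | hspos
  · rw [← heq, int_gg_zero h hsmooth hc]
  · have habs : |s| ≤ 1 := abs_le.mpr ⟨by linarith [hs.1], hs.2⟩
    have i1 : IntervalIntegrable (fun θ => gg h c s θ) volume 0 (2 * Real.pi) :=
      (cont_θ_gg h hsmooth hc habs).intervalIntegrable _ _
    have key : s * ∫ θ in (0:ℝ)..(2 * Real.pi), gg h c s θ
        = ∫ σ in (0:ℝ)..s, (∫ θ in (0:ℝ)..(2 * Real.pi), psi1 h c σ θ) := by
      rw [← intervalIntegral.integral_const_mul]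
      have e : ∀ θ, s * gg h c s θ = ∫ σ in (0:ℝ)..s, psi1 h c σ θ :=
        fun θ => (ftc_sgg h hsmooth hc θ hs).symm
      rw [intervalIntegral.integral_congr (fun θ _ => e θ)]
      apply swap_II Real.two_pi_pos.le hs.1
      apply intOn_of_contOn_Icc
      apply ((contOn_psi1 h hsmooth hc).comp
        (by fun_prop : Continuous fun q : ℝ × ℝ => (q.2, q.1)).continuousOn ?_)
      intro q hq
      exact ⟨⟨by linarith [hq.2.1], le_trans hq.2.2 hs.2⟩, trivial⟩
    have hpos : 0 ≤ s * ∫ θ in (0:ℝ)..(2 * Real.pi), gg h c s θ := by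
      rw [key]
      apply intervalIntegral.integral_nonneg hs.1
      intro u hu
      exact int_psi1_nonneg h hsmooth hsubh hc ⟨hu.1, le_trans hu.2 hs.2⟩
    exact nonneg_of_mul_nonneg_right hpos hspos

lemma circle_mean (hc : 1 < c.1) {r : ℝ} (hr : r ∈ Set.Icc (0:ℝ) 1) :
    2 * Real.pi * H h c ≤ ∫ θ in (0:ℝ)..(2 * Real.pi), H h (P c r θ) := by
  have habs : |r| ≤ 1 := abs_le.mpr ⟨by linarith [hr.1], hr.2⟩
  have iH : IntervalIntegrable (fun θ => H h (P c r θ)) volume 0 (2 * Real.pi) :=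
    (cont_θ_HP h hsmooth hc habs).intervalIntegrable _ _
  have key : (∫ θ in (0:ℝ)..(2 * Real.pi), H h (P c r θ)) - 2 * Real.pi * H h c
      = ∫ s in (0:ℝ)..r, (∫ θ in (0:ℝ)..(2 * Real.pi), gg h c s θ) := by
    have e1 : (∫ θ in (0:ℝ)..(2 * Real.pi), H h (P c r θ)) - 2 * Real.pi * H h c
        = ∫ θ in (0:ℝ)..(2 * Real.pi), (H h (P c r θ) - H h c) := by
      rw [intervalIntegral.integral_sub iH (intervalIntegrable_const),
        intervalIntegral.integral_const]
      simp [smul_eq_mul]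
      try ring
    rw [e1]
    have e2 : ∀ θ, H h (P c r θ) - H h c = ∫ s in (0:ℝ)..r, gg h c s θ :=
      fun θ => (ftc_radial h hsmooth hc θ hr).symm
    rw [intervalIntegral.integral_congr (fun θ _ => e2 θ)]
    apply swap_II Real.two_pi_pos.le hr.1
    apply intOn_of_contOn_Icc
    apply ((contOn_gg h hsmooth hc).comp
      (by fun_prop : Continuous fun q : ℝ × ℝ => (q.2, q.1)).continuousOn ?_)
    intro q hq
    exact ⟨⟨by linarith [hq.2.1], le_trans hq.2.2 hr.2⟩, trivial⟩
  have hnn : 0 ≤ ∫ s in (0:ℝ)..r, (∫ θ in (0:ℝ)..(2 * Real.pi), gg h c s θ) := by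
    apply intervalIntegral.integral_nonneg hr.1
    intro u hu
    exact int_gg_nonneg h hsmooth hsubh hc ⟨hu.1, le_trans hu.2 hr.2⟩
  linarith [key, hnn]


omit hsubh in
lemma translate_disk (hc : 1 < c.1) :
    ∫ x in {x : ℝ × ℝ | x.1 ^ 2 + x.2 ^ 2 < 1}, H h (c + x)
      = ∫ x in {x : ℝ × ℝ | (x.1 - c.1) ^ 2 + (x.2 - c.2) ^ 2 < 1}, H h x := by
  have hDb : MeasurableSet {x : ℝ × ℝ | x.1 ^ 2 + x.2 ^ 2 < 1} := by
    apply IsOpen.measurableSet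
    exact isOpen_lt (by fun_prop) continuous_const
  have hDc : MeasurableSet {x : ℝ × ℝ | (x.1 - c.1) ^ 2 + (x.2 - c.2) ^ 2 < 1} := by
    apply IsOpen.measurableSet
    exact isOpen_lt (by fun_prop) continuous_const
  rw [← integral_indicator hDb, ← integral_indicator hDc]
  have key : ∀ x : ℝ × ℝ, Set.indicator {x : ℝ × ℝ | x.1 ^ 2 + x.2 ^ 2 < 1}
        (fun y => H h (c + y)) x
      = Set.indicator {x : ℝ × ℝ | (x.1 - c.1) ^ 2 + (x.2 - c.2) ^ 2 < 1} (H h) (c + x) := by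
    intro x
    rw [Set.indicator_apply, Set.indicator_apply]
    have hmem : (c + x ∈ {x : ℝ × ℝ | (x.1 - c.1) ^ 2 + (x.2 - c.2) ^ 2 < 1})
        ↔ (x ∈ {x : ℝ × ℝ | x.1 ^ 2 + x.2 ^ 2 < 1}) := by
      simp only [Set.mem_setOf_eq, Prod.fst_add, Prod.snd_add]
      ring_nf
    simp only [hmem]
  simp_rw [key]
  exact integral_add_left_eq_self (μ := (volume : Measure (ℝ × ℝ)))
    (Set.indicator {x : ℝ × ℝ | (x.1 - c.1) ^ 2 + (x.2 - c.2) ^ 2 < 1} (H h)) c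

lemma disk_mean (hc : 1 < c.1) :
    Real.pi * H h c ≤ ∫ x in {x : ℝ × ℝ | (x.1 - c.1) ^ 2 + (x.2 - c.2) ^ 2 < 1}, H h x := by
  classical
  set Db : Set (ℝ × ℝ) := {x | x.1 ^ 2 + x.2 ^ 2 < 1} with hDbdef
  have hDbm : MeasurableSet Db := (isOpen_lt (by fun_prop) continuous_const).measurableSet
  set f : ℝ × ℝ → ℝ := Db.indicator (fun x => H h (c + x)) with hfdef
  set S : Set (ℝ × ℝ) := Set.Ioo (0:ℝ) 1 ×ˢ Set.Ioo (-Real.pi) Real.pi with hSdef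
  set k : ℝ × ℝ → ℝ := fun q => q.1 * H h (P c q.1 q.2) with hkdef
  have hpolar : (∫ p in polarCoord.target, p.1 • f (polarCoord.symm p)) = ∫ p, f p :=
    integral_comp_polarCoord_symm f
  have hpt : Set.EqOn (fun p : ℝ × ℝ => p.1 • f (polarCoord.symm p)) (S.indicator k)
      polarCoord.target := by
    intro p hp
    have hp1 : (0:ℝ) < p.1 := hp.1
    have hp2 : p.2 ∈ Set.Ioo (-Real.pi) Real.pi := hp.2
    have hsymm : polarCoord.symm p = (p.1 * Real.cos p.2, p.1 * Real.sin p.2) := rfl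
    have hsq : (p.1 * Real.cos p.2) ^ 2 + (p.1 * Real.sin p.2) ^ 2 = p.1 ^ 2 := by
      have hh := Real.sin_sq_add_cos_sq p.2
      linear_combination p.1 ^ 2 * hh
    by_cases hlt : p.1 < 1
    · have hmem1 : polarCoord.symm p ∈ Db := by
        simp only [hsymm, hDbdef, Set.mem_setOf_eq]
        rw [hsq]
        nlinarith
      have hmem2 : p ∈ S := ⟨⟨hp1, hlt⟩, hp2⟩
      show p.1 • f (polarCoord.symm p) = _
      rw [hfdef, Set.indicator_of_mem hmem1, Set.indicator_of_mem hmem2]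
      have hPc : c + polarCoord.symm p = P c p.1 p.2 := by
        simp [hsymm, P, Prod.ext_iff]
      rw [hPc, smul_eq_mul, hkdef]
    · have hmem1 : polarCoord.symm p ∉ Db := by
        simp only [hsymm, hDbdef, Set.mem_setOf_eq, not_lt]
        rw [hsq]
        nlinarith
      have hmem2 : p ∉ S := fun hmem => hlt hmem.1.2
      show p.1 • f (polarCoord.symm p) = _
      rw [hfdef, Set.indicator_of_notMem hmem1, Set.indicator_of_notMem hmem2, smul_zero]
  rw [setIntegral_congr_fun polarCoord.open_target.measurableSet hpt] at hpolar
  have hSm : MeasurableSet S := measurableSet_Ioo.prod measurableSet_Ioo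
  rw [setIntegral_indicator hSm] at hpolar
  have htest : polarCoord.target ∩ S = S := by
    apply Set.inter_eq_self_of_subset_right
    rw [show polarCoord.target = Set.Ioi (0:ℝ) ×ˢ Set.Ioo (-Real.pi) Real.pi from rfl]
    exact Set.prod_mono Set.Ioo_subset_Ioi_self (subset_refl _)
  rw [htest] at hpolar
  -- integrability of k on S
  have kInt : IntegrableOn k S := by
    have hcont : ContinuousOn k (Set.Icc (0:ℝ) 1 ×ˢ Set.Icc (-Real.pi) Real.pi) := by
      apply ContinuousOn.mul continuousOn_fst
      apply (contOn_HP h hsmooth hc).mono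
      exact Set.prod_mono (Set.Icc_subset_Icc (by norm_num) le_rfl) (Set.subset_univ _)
    exact (hcont.integrableOn_compact (isCompact_Icc.prod isCompact_Icc)).mono_set
      (Set.prod_mono Set.Ioo_subset_Icc_self Set.Ioo_subset_Icc_self)
  have kInt' : Integrable k
      ((volume.restrict (Set.Ioo (0:ℝ) 1)).prod (volume.restrict (Set.Ioo (-Real.pi) Real.pi))) := by
    rw [Measure.prod_restrict, ← MeasureTheory.Measure.volume_eq_prod ℝ ℝ]
    exact kInt
  have hprod : ∫ p in S, k p
      = ∫ r in Set.Ioo (0:ℝ) 1, ∫ y in Set.Ioo (-Real.pi) Real.pi, k (r, y) := by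
    rw [hSdef, show (volume : Measure (ℝ × ℝ)) = (volume : Measure ℝ).prod volume from rfl]
    exact setIntegral_prod k kInt
  have hinner : ∀ r ∈ Set.Ioo (0:ℝ) 1, ∫ y in Set.Ioo (-Real.pi) Real.pi, k (r, y)
      = r * ∫ θ in (0:ℝ)..(2*Real.pi), H h (P c r θ) := by
    intro r hr
    have hple : -Real.pi ≤ Real.pi := by linarith [Real.pi_pos]
    rw [hkdef]
    simp only
    rw [← integral_Ioc_eq_integral_Ioo, ← intervalIntegral.integral_of_le hple,
      intervalIntegral.integral_const_mul]
    congr 1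
    have hper2 : Function.Periodic (fun θ => H h (P c r θ)) (2*Real.pi) := by
      intro θ
      simp [P, Real.cos_add_two_pi, Real.sin_add_two_pi]
    have hpp := hper2.intervalIntegral_add_eq (-Real.pi) 0
    rw [show -Real.pi + 2*Real.pi = Real.pi by ring, zero_add] at hpp
    exact hpp
  have hmargInt : IntegrableOn
      (fun r => ∫ y in Set.Ioo (-Real.pi) Real.pi, k (r, y)) (Set.Ioo (0:ℝ) 1) :=
    kInt'.integral_prod_left
  have hlbInt : IntegrableOn (fun r : ℝ => r * (2*Real.pi*H h c)) (Set.Ioo (0:ℝ) 1) :=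
    ((continuous_id.mul continuous_const).integrableOn_Icc).mono_set Set.Ioo_subset_Icc_self
  have hmono : ∫ r in Set.Ioo (0:ℝ) 1, (r * (2*Real.pi*H h c))
      ≤ ∫ r in Set.Ioo (0:ℝ) 1, ∫ y in Set.Ioo (-Real.pi) Real.pi, k (r, y) := by
    apply setIntegral_mono_on hlbInt hmargInt measurableSet_Ioo
    intro r hr
    rw [hinner r hr]
    have hcm := circle_mean h hsmooth hsubh hc (r := r) ⟨hr.1.le, hr.2.le⟩
    calc r * (2*Real.pi*H h c) = r * (2*Real.pi*H h c) := rfl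
      _ ≤ r * ∫ θ in (0:ℝ)..(2*Real.pi), H h (P c r θ) := by
          apply mul_le_mul_of_nonneg_left _ hr.1.le
          linarith [hcm]
  have hval : ∫ r in Set.Ioo (0:ℝ) 1, (r * (2*Real.pi*H h c)) = Real.pi * H h c := by
    rw [← integral_Ioc_eq_integral_Ioo,
      ← intervalIntegral.integral_of_le (by norm_num : (0:ℝ) ≤ 1),
      intervalIntegral.integral_mul_const, integral_id]
    ring
  have hfin : ∫ p, f p = ∫ x in {x : ℝ × ℝ | (x.1 - c.1) ^ 2 + (x.2 - c.2) ^ 2 < 1}, H h x := by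
    rw [hfdef, integral_indicator hDbm]
    exact translate_disk h hsmooth hc
  calc Real.pi * H h c = ∫ r in Set.Ioo (0:ℝ) 1, (r * (2*Real.pi*H h c)) := hval.symm
    _ ≤ ∫ r in Set.Ioo (0:ℝ) 1, ∫ y in Set.Ioo (-Real.pi) Real.pi, k (r, y) := hmono
    _ = ∫ p in S, k p := hprod.symm
    _ = ∫ p, f p := hpolar
    _ = _ := hfin

end Circle


section Slice

variable (hsmooth : ContDiffOn ℝ 2 (fun p : ℝ × ℝ => h p.1 p.2)
      (Set.Ioi (0 : ℝ) ×ˢ (Set.univ : Set ℝ)))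
include hsmooth

noncomputable def F (h : ℝ → ℝ → ℝ) (t : ℝ) : ℝ := ∫ ψ in (0:ℝ)..(2*Real.pi), h t ψ
noncomputable def W (h : ℝ → ℝ → ℝ) (s : ℝ) : ℝ :=
  ∫ ψ in (0:ℝ)..(2*Real.pi), f1 h (s, ψ) (1, 0)

omit hsmooth in
lemma F_eq (t : ℝ) : F h t = ∫ ψ in Set.Ioo (0:ℝ) (2*Real.pi), h t ψ := by
  rw [F, intervalIntegral.integral_of_le Real.two_pi_pos.le, integral_Ioc_eq_integral_Ioo]

-- continuity helpers on vertical strips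
lemma cont_d1_strip {a : ℝ} (ha : 0 < a) {b : ℝ} :
    ContinuousOn (fun q : ℝ × ℝ => f1 h (q.1, q.2) (1, 0)) (Set.Icc a b ×ˢ Set.univ) := by
  apply ContinuousOn.clm_apply _ continuousOn_const
  apply (continuousOn_f1 h hsmooth).mono
  intro q hq
  exact ⟨lt_of_lt_of_le ha hq.1.1, trivial⟩

lemma cont_d2_strip {a : ℝ} (ha : 0 < a) {b : ℝ} :
    ContinuousOn (fun q : ℝ × ℝ => f1 h (q.1, q.2) (0, 1)) (Set.Icc a b ×ˢ Set.univ) := by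
  apply ContinuousOn.clm_apply _ continuousOn_const
  apply (continuousOn_f1 h hsmooth).mono
  intro q hq
  exact ⟨lt_of_lt_of_le ha hq.1.1, trivial⟩

lemma cont_q11_strip {a : ℝ} (ha : 0 < a) {b : ℝ} :
    ContinuousOn (fun q : ℝ × ℝ => f2 h (q.1, q.2) (1, 0) (1, 0)) (Set.Icc a b ×ˢ Set.univ) := by
  apply ContinuousOn.clm_apply _ continuousOn_const
  apply ContinuousOn.clm_apply _ continuousOn_const
  apply (continuousOn_f2 h hsmooth).mono
  intro q hq
  exact ⟨lt_of_lt_of_le ha hq.1.1, trivial⟩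

lemma cont_q22_strip {a : ℝ} (ha : 0 < a) {b : ℝ} :
    ContinuousOn (fun q : ℝ × ℝ => f2 h (q.1, q.2) (0, 1) (0, 1)) (Set.Icc a b ×ˢ Set.univ) := by
  apply ContinuousOn.clm_apply _ continuousOn_const
  apply ContinuousOn.clm_apply _ continuousOn_const
  apply (continuousOn_f2 h hsmooth).mono
  intro q hq
  exact ⟨lt_of_lt_of_le ha hq.1.1, trivial⟩

lemma cont_slice_t (t : ℝ) (ht : 0 < t) : Continuous (fun ψ => h t ψ) := by
  rw [← continuousOn_univ]
  exact (continuousOn_H h hsmooth).comp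
    (by fun_prop : Continuous fun ψ : ℝ => (t, ψ)).continuousOn
    (fun ψ _ => ⟨ht, trivial⟩)

-- FTC in the t variable, from t₁ to t₂
lemma ftc_t {t₁ t₂ : ℝ} (h1 : 0 < t₁) (h12 : t₁ ≤ t₂) (ψ : ℝ) :
    ∫ s in t₁..t₂, f1 h (s, ψ) (1, 0) = h t₂ ψ - h t₁ ψ := by
  apply intervalIntegral.integral_eq_sub_of_hasDerivAt
  · intro s hs
    rw [Set.uIcc_of_le h12] at hs
    exact hasDerivAt_slice1 h hsmooth (lt_of_lt_of_le h1 hs.1)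
  · apply ContinuousOn.intervalIntegrable
    rw [Set.uIcc_of_le h12]
    exact (cont_d1_strip h hsmooth h1).comp
      (by fun_prop : Continuous fun s : ℝ => (s, ψ)).continuousOn
      (fun s hs => ⟨hs, trivial⟩)

lemma ftc_q11 {s₁ s₂ : ℝ} (h1 : 0 < s₁) (h12 : s₁ ≤ s₂) (ψ : ℝ) :
    ∫ σ in s₁..s₂, f2 h (σ, ψ) (1, 0) (1, 0) = f1 h (s₂, ψ) (1, 0) - f1 h (s₁, ψ) (1, 0) := by
  apply intervalIntegral.integral_eq_sub_of_hasDerivAt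
  · intro σ hσ
    rw [Set.uIcc_of_le h12] at hσ
    exact hasDerivAt_d1 h hsmooth (lt_of_lt_of_le h1 hσ.1)
  · apply ContinuousOn.intervalIntegrable
    rw [Set.uIcc_of_le h12]
    exact (cont_q11_strip h hsmooth h1).comp
      (by fun_prop : Continuous fun s : ℝ => (s, ψ)).continuousOn
      (fun s hs => ⟨hs, trivial⟩)

lemma ftc_q22 {σ : ℝ} (hσ : 0 < σ) :
    ∫ ψ in (0:ℝ)..(2*Real.pi), f2 h (σ, ψ) (0, 1) (0, 1)
      = f1 h (σ, 2*Real.pi) (0, 1) - f1 h (σ, 0) (0, 1) := by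
  apply intervalIntegral.integral_eq_sub_of_hasDerivAt (f := fun ψ => f1 h (σ, ψ) (0, 1))
  · intro ψ _
    exact hasDerivAt_d2 h hsmooth hσ
  · apply ContinuousOn.intervalIntegrable
    exact (cont_q22_strip h hsmooth hσ (b := σ)).comp
      (by fun_prop : Continuous fun ψ : ℝ => (σ, ψ)).continuousOn
      (fun ψ _ => ⟨⟨le_refl σ, le_refl σ⟩, trivial⟩)

lemma d2_periodic (hper : ∀ t ∈ Set.Ioi (0 : ℝ), ∀ ψ : ℝ, h t (ψ + 2 * Real.pi) = h t ψ)
    {σ : ℝ} (hσ : 0 < σ) : f1 h (σ, 2*Real.pi) (0, 1) = f1 h (σ, 0) (0, 1) := by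
  have h1 : HasDerivAt (fun ψ => h σ (ψ + 2*Real.pi)) (f1 h (σ, 2*Real.pi) (0, 1)) 0 := by
    have hinner : HasDerivAt (fun ψ : ℝ => ψ + 2*Real.pi) 1 0 :=
      (hasDerivAt_id 0).add_const (2*Real.pi)
    have houter := hasDerivAt_slice2 h hsmooth (t := σ) (ψ := (0:ℝ) + 2*Real.pi) hσ
    have := houter.comp 0 hinner
    simp only [zero_add, mul_one] at this
    exact this
  have h2 : HasDerivAt (fun ψ => h σ ψ) (f1 h (σ, 0) (0, 1)) 0 :=
    hasDerivAt_slice2 h hsmooth hσ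
  have heq : (fun ψ => h σ (ψ + 2*Real.pi)) = (fun ψ => h σ ψ) :=
    funext fun ψ => hper σ hσ ψ
  rw [heq] at h1
  exact h1.unique h2

lemma int_q22_zero (hper : ∀ t ∈ Set.Ioi (0 : ℝ), ∀ ψ : ℝ, h t (ψ + 2 * Real.pi) = h t ψ)
    {σ : ℝ} (hσ : 0 < σ) :
    ∫ ψ in (0:ℝ)..(2*Real.pi), f2 h (σ, ψ) (0, 1) (0, 1) = 0 := by
  rw [ftc_q22 h hsmooth hσ, d2_periodic h hsmooth hper hσ, sub_self]

lemma cont_ψ_q11 {σ : ℝ} (hσ : 0 < σ) :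
    Continuous (fun ψ => f2 h (σ, ψ) (1, 0) (1, 0)) := by
  rw [← continuousOn_univ]
  exact (cont_q11_strip h hsmooth hσ (b := σ)).comp
    (by fun_prop : Continuous fun ψ : ℝ => (σ, ψ)).continuousOn
    (fun ψ _ => ⟨⟨le_refl σ, le_refl σ⟩, trivial⟩)

lemma cont_ψ_q22 {σ : ℝ} (hσ : 0 < σ) :
    Continuous (fun ψ => f2 h (σ, ψ) (0, 1) (0, 1)) := by
  rw [← continuousOn_univ]
  exact (cont_q22_strip h hsmooth hσ (b := σ)).comp
    (by fun_prop : Continuous fun ψ : ℝ => (σ, ψ)).continuousOn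
    (fun ψ _ => ⟨⟨le_refl σ, le_refl σ⟩, trivial⟩)

lemma int_q11_nonneg
    (hsubh : ∀ t ∈ Set.Ioi (0 : ℝ), ∀ ψ : ℝ,
      0 ≤ iteratedDeriv 2 (fun t' => h t' ψ) t + iteratedDeriv 2 (fun ψ' => h t ψ') ψ)
    (hper : ∀ t ∈ Set.Ioi (0 : ℝ), ∀ ψ : ℝ, h t (ψ + 2 * Real.pi) = h t ψ)
    {σ : ℝ} (hσ : 0 < σ) :
    0 ≤ ∫ ψ in (0:ℝ)..(2*Real.pi), f2 h (σ, ψ) (1, 0) (1, 0) := by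
  have hcomp : ∀ ψ : ℝ, - f2 h (σ, ψ) (0, 1) (0, 1) ≤ f2 h (σ, ψ) (1, 0) (1, 0) := by
    intro ψ
    have := lap_nonneg h hsmooth hsubh (p := (σ, ψ)) ⟨hσ, trivial⟩
    simp only [lap] at this
    linarith
  have hmono : ∫ ψ in (0:ℝ)..(2*Real.pi), (- f2 h (σ, ψ) (0, 1) (0, 1))
      ≤ ∫ ψ in (0:ℝ)..(2*Real.pi), f2 h (σ, ψ) (1, 0) (1, 0) := by
    apply intervalIntegral.integral_mono_on Real.two_pi_pos.le
      ((cont_ψ_q22 h hsmooth hσ).neg.intervalIntegrable _ _)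
      ((cont_ψ_q11 h hsmooth hσ).intervalIntegrable _ _)
    intro ψ _
    exact hcomp ψ
  rw [intervalIntegral.integral_neg, int_q22_zero h hsmooth hper hσ, neg_zero] at hmono
  exact hmono

lemma W_mono
    (hsubh : ∀ t ∈ Set.Ioi (0 : ℝ), ∀ ψ : ℝ,
      0 ≤ iteratedDeriv 2 (fun t' => h t' ψ) t + iteratedDeriv 2 (fun ψ' => h t ψ') ψ)
    (hper : ∀ t ∈ Set.Ioi (0 : ℝ), ∀ ψ : ℝ, h t (ψ + 2 * Real.pi) = h t ψ)
    {s₁ s₂ : ℝ} (h1 : 0 < s₁) (h12 : s₁ ≤ s₂) : W h s₁ ≤ W h s₂ := by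
  have key : W h s₂ - W h s₁
      = ∫ σ in s₁..s₂, (∫ ψ in (0:ℝ)..(2*Real.pi), f2 h (σ, ψ) (1, 0) (1, 0)) := by
    rw [W, W, ← intervalIntegral.integral_sub]
    · have e : ∀ ψ, f1 h (s₂, ψ) (1, 0) - f1 h (s₁, ψ) (1, 0)
          = ∫ σ in s₁..s₂, f2 h (σ, ψ) (1, 0) (1, 0) :=
        fun ψ => (ftc_q11 h hsmooth h1 h12 ψ).symm
      rw [intervalIntegral.integral_congr (fun ψ _ => e ψ)]
      apply swap_II Real.two_pi_pos.le h12
      apply intOn_of_contOn_Icc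
      exact (cont_q11_strip h hsmooth h1 (b := s₂)).comp
        (by fun_prop : Continuous fun q : ℝ × ℝ => (q.2, q.1)).continuousOn
        (fun q hq => ⟨hq.2, trivial⟩)
    · apply ContinuousOn.intervalIntegrable
      exact (cont_d1_strip h hsmooth h1 (b := s₂)).comp
        (by fun_prop : Continuous fun ψ : ℝ => (s₂, ψ)).continuousOn
        (fun ψ _ => ⟨⟨h12, le_refl _⟩, trivial⟩)
    · apply ContinuousOn.intervalIntegrable
      exact (cont_d1_strip h hsmooth h1 (b := s₂)).comp
        (by fun_prop : Continuous fun ψ : ℝ => (s₁, ψ)).continuousOn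
        (fun ψ _ => ⟨⟨le_refl _, h12⟩, trivial⟩)
  have hnn : 0 ≤ ∫ σ in s₁..s₂, (∫ ψ in (0:ℝ)..(2*Real.pi), f2 h (σ, ψ) (1, 0) (1, 0)) := by
    apply intervalIntegral.integral_nonneg h12
    intro σ hσ
    exact int_q11_nonneg h hsmooth hsubh hper (lt_of_lt_of_le h1 hσ.1)
  linarith

lemma F_sub {t₁ t₂ : ℝ} (h1 : 0 < t₁) (h12 : t₁ ≤ t₂) :
    F h t₂ - F h t₁ = ∫ s in t₁..t₂, W h s := by
  rw [F, F, ← intervalIntegral.integral_sub]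
  · have e : ∀ ψ, h t₂ ψ - h t₁ ψ = ∫ s in t₁..t₂, f1 h (s, ψ) (1, 0) :=
      fun ψ => (ftc_t h hsmooth h1 h12 ψ).symm
    rw [intervalIntegral.integral_congr (fun ψ _ => e ψ)]
    apply swap_II Real.two_pi_pos.le h12
    apply intOn_of_contOn_Icc
    exact (cont_d1_strip h hsmooth h1 (b := t₂)).comp
      (by fun_prop : Continuous fun q : ℝ × ℝ => (q.2, q.1)).continuousOn
      (fun q hq => ⟨hq.2, trivial⟩)
  · exact (cont_slice_t h hsmooth t₂ (lt_of_lt_of_le h1 h12)).intervalIntegrable _ _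
  · exact (cont_slice_t h hsmooth t₁ h1).intervalIntegrable _ _

end Slice

section Decay

variable (hsmooth : ContDiffOn ℝ 2 (fun p : ℝ × ℝ => h p.1 p.2)
      (Set.Ioi (0 : ℝ) ×ˢ (Set.univ : Set ℝ)))
    (hnonneg : ∀ t ∈ Set.Ioi (0 : ℝ), ∀ ψ : ℝ, 0 ≤ h t ψ)
    (hper : ∀ t ∈ Set.Ioi (0 : ℝ), ∀ ψ : ℝ, h t (ψ + 2 * Real.pi) = h t ψ)
    (hsubh : ∀ t ∈ Set.Ioi (0 : ℝ), ∀ ψ : ℝ,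
      0 ≤ iteratedDeriv 2 (fun t' => h t' ψ) t + iteratedDeriv 2 (fun ψ' => h t ψ') ψ)
    (hint : IntegrableOn (fun p : ℝ × ℝ => h p.1 p.2)
      (Set.Ioi (0 : ℝ) ×ˢ Set.Ioo (0 : ℝ) (2 * Real.pi)))

omit hsmooth in
include hnonneg in
lemma F_nonneg {t : ℝ} (ht : 0 < t) : 0 ≤ F h t :=
  intervalIntegral.integral_nonneg Real.two_pi_pos.le (fun ψ _ => hnonneg t ht ψ)

omit hsmooth in
include hint in
lemma FInt : IntegrableOn (F h) (Set.Ioi (0 : ℝ)) := by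
  have hint' : Integrable (fun p : ℝ × ℝ => h p.1 p.2)
      ((volume.restrict (Set.Ioi (0:ℝ))).prod (volume.restrict (Set.Ioo (0:ℝ) (2*Real.pi)))) := by
    rw [Measure.prod_restrict, ← MeasureTheory.Measure.volume_eq_prod ℝ ℝ]
    exact hint
  have hmarg := hint'.integral_prod_left
  have heq : (fun x => ∫ y in Set.Ioo (0:ℝ) (2*Real.pi), h x y) = F h :=
    funext fun t => (F_eq h t).symm
  rw [← heq]
  exact hmarg

include hsmooth hnonneg hper hsubh hint in
lemma W_nonpos {s : ℝ} (hs : 0 < s) : W h s ≤ 0 := by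
  by_contra hW'
  push_neg at hW'
  set J := ∫ x in Set.Ioi s, F h x with hJdef
  have hFInt : IntegrableOn (F h) (Set.Ioi (0:ℝ)) := FInt h hint
  have hFInts : IntegrableOn (F h) (Set.Ioi s) := hFInt.mono_set (Set.Ioi_subset_Ioi hs.le)
  have hJ0 : 0 ≤ J :=
    setIntegral_nonneg measurableSet_Ioi (fun t ht => F_nonneg h hnonneg (lt_trans hs ht))
  set L := max 1 ((2*J+2)/(W h s)) with hLdef
  have hL1 : (1:ℝ) ≤ L := le_max_left _ _
  have hLW : 2*J + 2 ≤ L * W h s := by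
    have := le_max_right 1 ((2*J+2)/(W h s))
    calc 2*J+2 = ((2*J+2)/(W h s)) * W h s := by field_simp
    _ ≤ L * W h s := mul_le_mul_of_nonneg_right this hW'.le
  set b := s + L with hbdef
  have hsb : s ≤ b := by rw [hbdef]; linarith
  have hWmono : MonotoneOn (W h) (Set.Icc s b) := fun x hx y hy hxy =>
    W_mono h hsmooth hsubh hper (lt_of_lt_of_le hs hx.1) hxy
  have hFlow : ∀ t ∈ Set.Ioc s b, (t - s) * W h s ≤ F h t := by
    intro t ht
    have h12 : s ≤ t := ht.1.le
    have hFt : F h t - F h s = ∫ σ in s..t, W h σ := F_sub h hsmooth hs h12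
    have hWint : IntervalIntegrable (W h) volume s t := by
      apply MonotoneOn.intervalIntegrable
      rw [Set.uIcc_of_le h12]
      exact hWmono.mono (Set.Icc_subset_Icc le_rfl ht.2)
    have hlow : (t - s) * W h s ≤ ∫ σ in s..t, W h σ := by
      have hm := intervalIntegral.integral_mono_on h12 intervalIntegrable_const hWint
        (fun σ hσ => W_mono h hsmooth hsubh hper hs hσ.1)
      rw [intervalIntegral.integral_const] at hm
      simpa [smul_eq_mul] using hm
    have hFs : 0 ≤ F h s := F_nonneg h hnonneg hs
    linarith
  have hlinInt : IntegrableOn (fun t : ℝ => (t - s) * W h s) (Set.Ioc s b) :=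
    (((continuous_id.sub continuous_const).mul continuous_const).integrableOn_Icc).mono_set
      Set.Ioc_subset_Icc_self
  have hcmp : ∫ t in Set.Ioc s b, ((t - s) * W h s) ≤ ∫ t in Set.Ioc s b, F h t :=
    setIntegral_mono_on hlinInt (hFInts.mono_set Set.Ioc_subset_Ioi_self)
      measurableSet_Ioc hFlow
  have htail : ∫ t in Set.Ioc s b, F h t ≤ J := by
    apply setIntegral_mono_set hFInts
    · exact (ae_restrict_iff' measurableSet_Ioi).mpr
        (Filter.Eventually.of_forall (fun t ht => F_nonneg h hnonneg (lt_trans hs ht)))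
    · exact HasSubset.Subset.eventuallyLE Set.Ioc_subset_Ioi_self
  have hcompute : ∫ t in Set.Ioc s b, ((t - s) * W h s) = (L^2/2) * W h s := by
    rw [← intervalIntegral.integral_of_le hsb, intervalIntegral.integral_mul_const]
    have hid : ∫ t in s..b, (t - s) = L^2/2 := by
      rw [intervalIntegral.integral_sub intervalIntegral.intervalIntegrable_id intervalIntegrable_const,
        integral_id, intervalIntegral.integral_const]
      rw [hbdef]
      simp [smul_eq_mul]
      ring
    rw [hid]
  have e1 : L * W h s ≤ L^2 * W h s := by nlinarith
  have : (L^2/2) * W h s ≤ J := by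
    calc (L^2/2) * W h s = ∫ t in Set.Ioc s b, ((t - s) * W h s) := hcompute.symm
    _ ≤ ∫ t in Set.Ioc s b, F h t := hcmp
    _ ≤ J := htail
  nlinarith

include hsmooth hnonneg hper hsubh hint in
lemma F_antitone {t₁ t₂ : ℝ} (h1 : 0 < t₁) (h12 : t₁ ≤ t₂) : F h t₂ ≤ F h t₁ := by
  have hFt : F h t₂ - F h t₁ = ∫ σ in t₁..t₂, W h σ := F_sub h hsmooth h1 h12
  have hWmono : MonotoneOn (W h) (Set.Icc t₁ t₂) := fun x hx y hy hxy =>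
    W_mono h hsmooth hsubh hper (lt_of_lt_of_le h1 hx.1) hxy
  have hWint : IntervalIntegrable (W h) volume t₁ t₂ := by
    apply MonotoneOn.intervalIntegrable
    rwa [Set.uIcc_of_le h12]
  have : ∫ σ in t₁..t₂, W h σ ≤ ∫ σ in t₁..t₂, (0:ℝ) := by
    apply intervalIntegral.integral_mono_on h12 hWint intervalIntegrable_const
    intro σ hσ
    exact W_nonpos h hsmooth hnonneg hper hsubh hint (lt_of_lt_of_le h1 hσ.1)
  simp only [intervalIntegral.integral_zero] at this
  linarith

omit hsmooth in
include hint in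
lemma prod_eq_tail {b : ℝ} (hb : 0 ≤ b) :
    ∫ p in (Set.Ioi b ×ˢ Set.Ioo (0:ℝ) (2*Real.pi)), h p.1 p.2
      = ∫ t in Set.Ioi b, F h t := by
  have hint2 : IntegrableOn (fun p : ℝ × ℝ => h p.1 p.2)
      (Set.Ioi b ×ˢ Set.Ioo (0:ℝ) (2*Real.pi)) :=
    hint.mono_set (Set.prod_mono (Set.Ioi_subset_Ioi hb) (subset_refl _))
  rw [show (volume : Measure (ℝ × ℝ)) = (volume : Measure ℝ).prod volume from rfl]
  rw [setIntegral_prod _ hint2]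
  exact setIntegral_congr_fun measurableSet_Ioi (fun t _ => (F_eq h t).symm)

end Decay

section Main

variable (hsmooth : ContDiffOn ℝ 2 (fun p : ℝ × ℝ => h p.1 p.2)
      (Set.Ioi (0 : ℝ) ×ˢ (Set.univ : Set ℝ)))
    (hnonneg : ∀ t ∈ Set.Ioi (0 : ℝ), ∀ ψ : ℝ, 0 ≤ h t ψ)
    (hper : ∀ t ∈ Set.Ioi (0 : ℝ), ∀ ψ : ℝ, h t (ψ + 2 * Real.pi) = h t ψ)
    (hsubh : ∀ t ∈ Set.Ioi (0 : ℝ), ∀ ψ : ℝ,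
      0 ≤ iteratedDeriv 2 (fun t' => h t' ψ) t + iteratedDeriv 2 (fun ψ' => h t ψ') ψ)
    (hint : IntegrableOn (fun p : ℝ × ℝ => h p.1 p.2)
      (Set.Ioi (0 : ℝ) ×ˢ Set.Ioo (0 : ℝ) (2 * Real.pi)))

include hsmooth hnonneg hper hsubh hint in
lemma main_bound {t₀ : ℝ} (ht₀ : 2 ≤ t₀) (ψ₀ : ℝ) :
    t₀ * h t₀ ψ₀ ≤ (8 / Real.pi) *
      ∫ p in (Set.Ioi ((t₀ - 1) / 2) ×ˢ Set.Ioo (0 : ℝ) (2 * Real.pi)), h p.1 p.2 := by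
  have hπ := Real.pi_pos
  have hc : (1:ℝ) < ((t₀, ψ₀) : ℝ × ℝ).1 := by simp only; linarith
  have hdisk : Real.pi * h t₀ ψ₀
      ≤ ∫ x in {x : ℝ × ℝ | (x.1 - t₀)^2 + (x.2 - ψ₀)^2 < 1}, H h x :=
    disk_mean h hsmooth hsubh (c := (t₀, ψ₀)) hc
  set R : Set (ℝ × ℝ) := Set.Ioo (t₀-1) (t₀+1) ×ˢ Set.Ioo (ψ₀-Real.pi) (ψ₀+Real.pi) with hRdef
  have hRInt : IntegrableOn (H h) R := by
    have hcont : ContinuousOn (H h)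
        (Set.Icc (t₀-1) (t₀+1) ×ˢ Set.Icc (ψ₀-Real.pi) (ψ₀+Real.pi)) := by
      apply (continuousOn_H h hsmooth).mono
      intro q hq
      exact ⟨by have := hq.1.1; simp only [Set.mem_Ioi]; linarith, trivial⟩
    exact (hcont.integrableOn_compact (isCompact_Icc.prod isCompact_Icc)).mono_set
      (Set.prod_mono Set.Ioo_subset_Icc_self Set.Ioo_subset_Icc_self)
  have hsubset : {x : ℝ × ℝ | (x.1 - t₀)^2 + (x.2 - ψ₀)^2 < 1} ⊆ R := by
    intro x hx
    simp only [Set.mem_setOf_eq] at hx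
    have hpi3 := Real.pi_gt_three
    refine ⟨⟨?_, ?_⟩, ⟨?_, ?_⟩⟩
    · nlinarith [sq_nonneg (x.2 - ψ₀), sq_nonneg (x.1 - t₀ + 1)]
    · nlinarith [sq_nonneg (x.2 - ψ₀), sq_nonneg (x.1 - t₀ - 1)]
    · nlinarith [sq_nonneg (x.1 - t₀), sq_nonneg (x.2 - ψ₀ + 1)]
    · nlinarith [sq_nonneg (x.1 - t₀), sq_nonneg (x.2 - ψ₀ - 1)]
  have h1 : ∫ x in {x : ℝ × ℝ | (x.1 - t₀)^2 + (x.2 - ψ₀)^2 < 1}, H h x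
      ≤ ∫ x in R, H h x := by
    apply setIntegral_mono_set hRInt
    · apply (ae_restrict_iff' (measurableSet_Ioo.prod measurableSet_Ioo)).mpr
      apply Filter.Eventually.of_forall
      intro x hx
      exact hnonneg x.1 (by have := hx.1.1; simp only [Set.mem_Ioi]; linarith) x.2
    · exact HasSubset.Subset.eventuallyLE hsubset
  have h2 : ∫ x in R, H h x = ∫ t in Set.Ioo (t₀-1) (t₀+1), F h t := by
    rw [hRdef, show (volume : Measure (ℝ × ℝ)) = (volume : Measure ℝ).prod volume from rfl,
      setIntegral_prod _ hRInt]
    apply setIntegral_congr_fun measurableSet_Ioo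
    intro t ht
    have htpos : (0:ℝ) < t := by have := ht.1; linarith
    have hle : ψ₀ - Real.pi ≤ ψ₀ + Real.pi := by linarith
    show (∫ ψ in Set.Ioo (ψ₀-Real.pi) (ψ₀+Real.pi), h t ψ) = F h t
    rw [← integral_Ioc_eq_integral_Ioo, ← intervalIntegral.integral_of_le hle]
    have hper3 : Function.Periodic (fun ψ => h t ψ) (2*Real.pi) := fun ψ => hper t htpos ψ
    have hppp := hper3.intervalIntegral_add_eq (ψ₀ - Real.pi) 0
    rw [show ψ₀ - Real.pi + 2*Real.pi = ψ₀ + Real.pi by ring, zero_add] at hppp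
    rw [hppp]
    rfl
  have hF1pos : (0:ℝ) < t₀ - 1 := by linarith
  have h4 : ∫ t in Set.Ioo (t₀-1) (t₀+1), F h t ≤ 2 * F h (t₀-1) := by
    have hFIoo : IntegrableOn (F h) (Set.Ioo (t₀-1) (t₀+1)) :=
      (FInt h hint).mono_set (fun t ht => lt_trans hF1pos ht.1)
    have hconst : IntegrableOn (fun _ : ℝ => F h (t₀-1)) (Set.Ioo (t₀-1) (t₀+1)) :=
      integrableOn_const (by rw [Real.volume_Ioo]; exact ENNReal.ofReal_ne_top)
    have hm := setIntegral_mono_on hFIoo hconst measurableSet_Ioo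
      (fun t ht => F_antitone h hsmooth hnonneg hper hsubh hint hF1pos ht.1.le)
    rw [setIntegral_const, measureReal_def, Real.volume_Ioo,
      show t₀+1 - (t₀-1) = 2 by ring,
      ENNReal.toReal_ofReal (by norm_num : (0:ℝ) ≤ 2)] at hm
    simpa [smul_eq_mul] using hm
  set I := ∫ t in Set.Ioi ((t₀-1)/2), F h t with hIdef
  have ha : (0:ℝ) < (t₀-1)/2 := by linarith
  have hFIoi : IntegrableOn (F h) (Set.Ioi ((t₀-1)/2)) :=
    (FInt h hint).mono_set (Set.Ioi_subset_Ioi ha.le)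
  have h5 : (t₀-1)/2 * F h (t₀-1) ≤ I := by
    have hIoc : ∫ t in Set.Ioc ((t₀-1)/2) (t₀-1), F h t ≤ I := by
      apply setIntegral_mono_set hFIoi
      · exact (ae_restrict_iff' measurableSet_Ioi).mpr
          (Filter.Eventually.of_forall (fun t ht => F_nonneg h hnonneg (lt_trans ha ht)))
      · exact HasSubset.Subset.eventuallyLE Set.Ioc_subset_Ioi_self
    have hlb : (t₀-1)/2 * F h (t₀-1) ≤ ∫ t in Set.Ioc ((t₀-1)/2) (t₀-1), F h t := by
      have hconst : IntegrableOn (fun _ : ℝ => F h (t₀-1)) (Set.Ioc ((t₀-1)/2) (t₀-1)) :=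
        integrableOn_const (by rw [Real.volume_Ioc]; exact ENNReal.ofReal_ne_top)
      have hm := setIntegral_mono_on hconst (hFIoi.mono_set Set.Ioc_subset_Ioi_self)
        measurableSet_Ioc
        (fun t ht => F_antitone h hsmooth hnonneg hper hsubh hint (lt_trans ha ht.1) ht.2)
      rw [setIntegral_const, measureReal_def, Real.volume_Ioc,
        show t₀-1 - (t₀-1)/2 = (t₀-1)/2 by ring,
        ENNReal.toReal_ofReal ha.le] at hm
      simpa [smul_eq_mul] using hm
    linarith
  have h6 : ∫ p in (Set.Ioi ((t₀-1)/2) ×ˢ Set.Ioo (0:ℝ) (2*Real.pi)), h p.1 p.2 = I :=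
    prod_eq_tail h hint ha.le
  have hI0 : 0 ≤ I :=
    setIntegral_nonneg measurableSet_Ioi (fun t ht => F_nonneg h hnonneg (lt_trans ha ht))
  have hh0 : 0 ≤ h t₀ ψ₀ := hnonneg t₀ (by simp only [Set.mem_Ioi]; linarith) ψ₀
  rw [h6]
  have hchain : Real.pi * h t₀ ψ₀ ≤ 2 * F h (t₀-1) := by
    calc Real.pi * h t₀ ψ₀
        ≤ ∫ x in {x : ℝ × ℝ | (x.1 - t₀)^2 + (x.2 - ψ₀)^2 < 1}, H h x := hdisk
      _ ≤ ∫ x in R, H h x := h1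
      _ = ∫ t in Set.Ioo (t₀-1) (t₀+1), F h t := h2
      _ ≤ 2 * F h (t₀-1) := h4
  have harith : t₀ * h t₀ ψ₀ * Real.pi ≤ 8 * I := by
    nlinarith [mul_le_mul_of_nonneg_left hchain (by linarith : (0:ℝ) ≤ t₀ - 1),
      mul_nonneg (by linarith : (0:ℝ) ≤ t₀ - 2) (mul_nonneg hπ.le hh0), h5]
  calc t₀ * h t₀ ψ₀ = (t₀ * h t₀ ψ₀ * Real.pi) / Real.pi := by field_simp
    _ ≤ (8 * I) / Real.pi := (div_le_div_iff_of_pos_right hπ).mpr harith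
    _ = 8 / Real.pi * I := by ring

end Main

end SubhAux

open SubhAux

/-- **Pointwise decay of a subharmonic energy density on a half-cylinder.** Let `h` be a
nonnegative `C²` function on `(0, ∞) × ℝ`, `2π`-periodic in the second variable,
subharmonic (`∂²h/∂t² + ∂²h/∂ψ² ≥ 0`), and integrable over `(0, ∞) × (0, 2π)`. Then for
every `t₀ ≥ 2` and every `ψ₀`,
`t₀ h(t₀, ψ₀) ≤ (8/π) ∫_{((t₀-1)/2, ∞) × (0, 2π)} h`, and in particular
`sup_ψ t h(t, ψ) → 0` as `t → ∞`. -/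
theorem subharmonic_halfCylinder_decay (h : ℝ → ℝ → ℝ)
    (hsmooth : ContDiffOn ℝ 2 (fun p : ℝ × ℝ => h p.1 p.2)
      (Set.Ioi (0 : ℝ) ×ˢ (Set.univ : Set ℝ)))
    (hnonneg : ∀ t ∈ Set.Ioi (0 : ℝ), ∀ ψ : ℝ, 0 ≤ h t ψ)
    (hper : ∀ t ∈ Set.Ioi (0 : ℝ), ∀ ψ : ℝ, h t (ψ + 2 * Real.pi) = h t ψ)
    (hsubh : ∀ t ∈ Set.Ioi (0 : ℝ), ∀ ψ : ℝ,
      0 ≤ iteratedDeriv 2 (fun t' => h t' ψ) t + iteratedDeriv 2 (fun ψ' => h t ψ') ψ)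
    (hint : IntegrableOn (fun p : ℝ × ℝ => h p.1 p.2)
      (Set.Ioi (0 : ℝ) ×ˢ Set.Ioo (0 : ℝ) (2 * Real.pi))) :
    (∀ t₀ : ℝ, 2 ≤ t₀ → ∀ ψ₀ : ℝ,
      t₀ * h t₀ ψ₀ ≤ (8 / Real.pi) *
        ∫ p in (Set.Ioi ((t₀ - 1) / 2) ×ˢ Set.Ioo (0 : ℝ) (2 * Real.pi)), h p.1 p.2) ∧
    Filter.Tendsto (fun t => ⨆ ψ : ℝ, t * h t ψ) Filter.atTop (nhds 0) := by
  have hmb := fun {t₀ : ℝ} (ht₀ : 2 ≤ t₀) (ψ₀ : ℝ) =>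
    main_bound h hsmooth hnonneg hper hsubh hint ht₀ ψ₀
  refine ⟨fun t₀ ht₀ ψ₀ => hmb ht₀ ψ₀, ?_⟩
  set C := ∫ t in Set.Ioi (1/2 : ℝ), F h t with hCdef
  have hFIoi : IntegrableOn (F h) (Set.Ioi (1/2:ℝ)) :=
    (FInt h hint).mono_set (Set.Ioi_subset_Ioi (by norm_num))
  have hmap : Filter.Tendsto (fun t : ℝ => (t-1)/2) Filter.atTop Filter.atTop := by
    apply Filter.Tendsto.atTop_div_const (by norm_num : (0:ℝ) < 2)
    exact Filter.tendsto_atTop_add_const_right _ (-1) Filter.tendsto_id |>.congr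
      (fun x => by simp [id]; ring)
  have hCint : Filter.Tendsto (fun t : ℝ => ∫ x in (1/2:ℝ)..((t-1)/2), F h x)
      Filter.atTop (nhds C) :=
    intervalIntegral_tendsto_integral_Ioi _ hFIoi hmap
  have hGev : ∀ᶠ t : ℝ in Filter.atTop,
      (8/Real.pi) * (C - ∫ x in (1/2:ℝ)..((t-1)/2), F h x)
        = (8/Real.pi) * ∫ p in (Set.Ioi ((t-1)/2) ×ˢ Set.Ioo (0:ℝ) (2*Real.pi)), h p.1 p.2 := by
    filter_upwards [Filter.eventually_ge_atTop 2] with t ht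
    have hb : (1/2:ℝ) ≤ (t-1)/2 := by linarith
    have hsplit : C = (∫ x in Set.Ioc (1/2:ℝ) ((t-1)/2), F h x)
        + ∫ x in Set.Ioi ((t-1)/2), F h x := by
      rw [hCdef, ← setIntegral_union (Set.Ioc_disjoint_Ioi le_rfl) measurableSet_Ioi
        (hFIoi.mono_set Set.Ioc_subset_Ioi_self)
        ((FInt h hint).mono_set (Set.Ioi_subset_Ioi (by linarith)))]
      rw [Set.Ioc_union_Ioi_eq_Ioi hb]
    rw [prod_eq_tail h hint (by linarith), intervalIntegral.integral_of_le hb, hsplit]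
    ring
  have hbound : Filter.Tendsto
      (fun t : ℝ => (8/Real.pi) * ∫ p in (Set.Ioi ((t-1)/2) ×ˢ Set.Ioo (0:ℝ) (2*Real.pi)),
        h p.1 p.2) Filter.atTop (nhds 0) := by
    apply Filter.Tendsto.congr' hGev
    have htt : Filter.Tendsto (fun t : ℝ =>
        (8/Real.pi) * (C - ∫ x in (1/2:ℝ)..((t-1)/2), F h x)) Filter.atTop
        (nhds ((8/Real.pi) * (C - C))) :=
      Filter.Tendsto.const_mul _ (tendsto_const_nhds.sub hCint)
    simpa using htt
  apply tendsto_of_tendsto_of_tendsto_of_le_of_le' tendsto_const_nhds hbound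
  · filter_upwards [Filter.eventually_ge_atTop 2] with t ht
    have hBdd : BddAbove (Set.range (fun ψ : ℝ => t * h t ψ)) := by
      refine ⟨(8/Real.pi) * ∫ p in (Set.Ioi ((t-1)/2) ×ˢ Set.Ioo (0:ℝ) (2*Real.pi)),
        h p.1 p.2, ?_⟩
      rintro _ ⟨ψ, rfl⟩
      exact hmb ht ψ
    have h0 : 0 ≤ t * h t 0 :=
      mul_nonneg (by linarith) (hnonneg t (by simp only [Set.mem_Ioi]; linarith) 0)
    exact le_trans h0 (le_ciSup hBdd 0)
  · filter_upwards [Filter.eventually_ge_atTop 2] with t ht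
    exact ciSup_le (fun ψ => hmb ht ψ)
end
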